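/- arXiv:2301.05678 — 6 statements merged into one kernel-verified Lean document; each statement's English description precedes it below -/
import Mathlib

section
/- Let r ≥ 1, t ≥ 1, and let G be a K_{r+1}-free graph on n vertices (G contains no subgraph isomorphic to the complete graph K_{r+1}). Then the number of subgraphs of G isomorphic to K_t is at most C(r, t) · (n/r)^t, i.e. N(K_t, G) · r^t ≤ C(r, t) · n^t. -/
section Helpers
set_option maxHeartbeats 1000000
open Finset SimpleGraph
variable {ι : Type*} [DecidableEq ι]

lemma esymm_peel (s : Finset ι) (f : ι → ℝ) {j : ι} (hj : j ∈ s) (k : ℕ) :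
    ∑ T ∈ s.powersetCard (k+1), ∏ i ∈ T, f i =
      (∑ T ∈ (s.erase j).powersetCard (k+1), ∏ i ∈ T, f i)
      + f j * ∑ T ∈ (s.erase j).powersetCard k, ∏ i ∈ T, f i := by
  conv_lhs => rw [← Finset.insert_erase hj,
    Finset.powersetCard_succ_insert (Finset.notMem_erase j s)]
  rw [Finset.sum_union, Finset.sum_image, Finset.mul_sum]
  · congr 1
    refine Finset.sum_congr rfl fun T hT => ?_
    rw [Finset.mem_powersetCard] at hT
    rw [Finset.prod_insert (fun hjT => Finset.notMem_erase j s (hT.1 hjT)), mul_comm]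
  · intro a ha b hb hab
    rw [Finset.mem_coe, Finset.mem_powersetCard] at ha hb
    have ha' : j ∉ a := fun h => Finset.notMem_erase j s (ha.1 h)
    have hb' : j ∉ b := fun h => Finset.notMem_erase j s (hb.1 h)
    apply Finset.ext; intro x
    constructor <;> intro hx
    · have : x ∈ insert j b := hab ▸ Finset.mem_insert_of_mem hx
      rcases Finset.mem_insert.1 this with rfl | h
      · exact absurd hx ha'
      · exact h
    · have : x ∈ insert j a := hab.symm ▸ Finset.mem_insert_of_mem hx
      rcases Finset.mem_insert.1 this with rfl | h
      · exact absurd hx hb'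
      · exact h
  · rw [Finset.disjoint_right]
    rintro T hT hT'
    simp only [Finset.mem_image] at hT
    obtain ⟨a, ha, rfl⟩ := hT
    rw [Finset.mem_powersetCard] at hT'
    exact Finset.notMem_erase j s (hT'.1 (Finset.mem_insert_self j a))

lemma esymm_nonneg (s : Finset ι) (f : ι → ℝ) (hf : ∀ x ∈ s, 0 ≤ f x) (t : ℕ) :
    0 ≤ ∑ T ∈ s.powersetCard t, ∏ x ∈ T, f x := by
  refine Finset.sum_nonneg fun T hT => Finset.prod_nonneg fun x hx => ?_
  rw [Finset.mem_powersetCard] at hT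
  exact hf x (hT.1 hx)

lemma esymm_smooth (s : Finset ι) (f g : ι → ℝ) {i j : ι} (hi : i ∈ s) (hj : j ∈ s) (hij : i ≠ j)
    (hoff : ∀ x ∈ s, x ≠ i → x ≠ j → f x = g x)
    (hnn : ∀ x ∈ s, x ≠ i → x ≠ j → 0 ≤ f x)
    (hsum : f i + f j = g i + g j) (hprod : f i * f j ≤ g i * g j) (t : ℕ) :
    ∑ T ∈ s.powersetCard t, ∏ x ∈ T, f x ≤ ∑ T ∈ s.powersetCard t, ∏ x ∈ T, g x := by
  have hi' : i ∈ s.erase j := Finset.mem_erase.2 ⟨hij, hi⟩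
  set s'' := (s.erase j).erase i with hs''
  have hmem : ∀ x ∈ s'', x ∈ s ∧ x ≠ i ∧ x ≠ j := by
    intro x hx
    rw [hs'', Finset.mem_erase, Finset.mem_erase] at hx
    exact ⟨hx.2.2, hx.1, hx.2.1⟩
  have hcong : ∀ (k : ℕ), ∑ T ∈ s''.powersetCard k, ∏ x ∈ T, f x
      = ∑ T ∈ s''.powersetCard k, ∏ x ∈ T, g x := by
    intro k
    refine Finset.sum_congr rfl fun T hT => Finset.prod_congr rfl fun x hx => ?_
    rw [Finset.mem_powersetCard] at hT
    obtain ⟨h1, h2, h3⟩ := hmem x (hT.1 hx)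
    exact hoff x h1 h2 h3
  have hnn'' : ∀ (k : ℕ), 0 ≤ ∑ T ∈ s''.powersetCard k, ∏ x ∈ T, f x := by
    intro k
    exact esymm_nonneg _ _ (fun x hx => hnn x (hmem x hx).1 (hmem x hx).2.1 (hmem x hx).2.2) k
  match t with
  | 0 => simp
  | 1 =>
    have h1 : ∀ (h : ι → ℝ), ∑ T ∈ s.powersetCard 1, ∏ x ∈ T, h x = ∑ x ∈ s, h x := by
      intro h
      rw [Finset.powersetCard_one, Finset.sum_map]
      simp
    rw [h1, h1, ← Finset.sum_erase_add _ _ hj, ← Finset.sum_erase_add _ _ hi',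
      ← Finset.sum_erase_add _ _ hj, ← Finset.sum_erase_add _ _ hi']
    have : ∑ x ∈ s'', f x = ∑ x ∈ s'', g x := by
      refine Finset.sum_congr rfl fun x hx => ?_
      obtain ⟨h1, h2, h3⟩ := hmem x hx
      exact hoff x h1 h2 h3
    rw [this]
    linarith
  | (k+2) =>
    rw [esymm_peel s f hj, esymm_peel s g hj, esymm_peel (s.erase j) f hi',
      esymm_peel (s.erase j) g hi', esymm_peel (s.erase j) f hi', esymm_peel (s.erase j) g hi',
      ← hs'', hcong (k+2), hcong (k+1), hcong k]
    simp only [show k+1+1 = k+2 from rfl]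
    have A := hcong (k+1) ▸ hnn'' (k+1)
    have B := hcong k ▸ hnn'' k
    nlinarith [hsum, hprod]

lemma esymm_mul_pow_le (m : ℕ) : ∀ (s : Finset ι), #s = m → ∀ (f : ι → ℝ),
    (∀ i ∈ s, 0 ≤ f i) → ∀ (t : ℕ),
    (∑ T ∈ s.powersetCard t, ∏ x ∈ T, f x) * (m : ℝ) ^ t
      ≤ (m.choose t : ℝ) * (∑ x ∈ s, f x) ^ t := by
  induction m using Nat.strong_induction_on with
  | _ m ih =>
  intro s hs f hf t
  match m, t with
  | 0, 0 => obtain rfl := Finset.card_eq_zero.1 hs; simp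
  | 0, (t+1) => obtain rfl := Finset.card_eq_zero.1 hs; simp
  | (m+1), 0 => simp
  | 1, 1 =>
    obtain ⟨a, rfl⟩ := Finset.card_eq_one.1 hs
    rw [Finset.powersetCard_one]
    simp
  | 1, (t+2) =>
    obtain ⟨a, rfl⟩ := Finset.card_eq_one.1 hs
    rw [Nat.choose_eq_zero_of_lt (by omega)]
    have : ({a} : Finset ι).powersetCard (t+2) = ∅ := by
      apply Finset.powersetCard_eq_empty.2
      simp
    simp [this]
  | (m+2), (t+1) =>
    have hsne : s.Nonempty := Finset.card_pos.1 (by omega)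
    obtain ⟨S, hS⟩ : ∃ S : ℝ, S = ∑ x ∈ s, f x := ⟨_, rfl⟩
    have hS0 : 0 ≤ S := hS ▸ Finset.sum_nonneg hf
    obtain ⟨c, hc⟩ : ∃ c : ℝ, c = ((m : ℝ) + 2) := ⟨_, rfl⟩
    have hc0 : (0:ℝ) < c := by rw [hc]; positivity
    obtain ⟨a, ha⟩ : ∃ a : ℝ, a = S / c := ⟨_, rfl⟩
    have ha0 : 0 ≤ a := ha ▸ div_nonneg hS0 hc0.le
    have hca : c * a = S := by rw [ha]; exact mul_div_cancel₀ S hc0.ne'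
    obtain ⟨i, hi, hmin⟩ := Finset.exists_min_image s f hsne
    have hia : f i ≤ a := by
      have h1 : (#s : ℝ) * f i ≤ S := by
        rw [hS]
        calc (#s : ℝ) * f i = ∑ _x ∈ s, f i := by rw [Finset.sum_const, nsmul_eq_mul]
        _ ≤ ∑ x ∈ s, f x := Finset.sum_le_sum fun x hx => hmin x hx
      rw [ha, le_div_iff₀ hc0]
      have : (#s : ℝ) = c := by rw [hs, hc]; push_cast; ring
      linarith [this ▸ h1]
    have herne : (s.erase i).Nonempty := by
      rw [← Finset.card_pos, Finset.card_erase_of_mem hi, hs]; omega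
    obtain ⟨j, hj, hmax⟩ := Finset.exists_max_image (s.erase i) f herne
    have hij : i ≠ j := fun h => (Finset.ne_of_mem_erase hj) h.symm
    have hjs : j ∈ s := Finset.mem_of_mem_erase hj
    have hja : a ≤ f j := by
      have hcard : #(s.erase i) = m + 1 := by
        rw [Finset.card_erase_of_mem hi, hs]
        omega
      have h1 : S - f i ≤ ((m:ℝ) + 1) * f j := by
        have : ∑ x ∈ s.erase i, f x ≤ (#(s.erase i)) • f j :=
          Finset.sum_le_card_nsmul _ _ _ fun x hx => hmax x hx
        rw [hcard] at this
        have h2 : ∑ x ∈ s.erase i, f x = S - f i := by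
          rw [hS, ← Finset.sum_erase_add s f hi]; ring
        rw [h2, nsmul_eq_mul] at this; push_cast at this; linarith
      have h3 : ((m:ℝ)+1) * a ≤ S - f i := by
        have : ((m:ℝ)+1) * a = S - a := by
          rw [← hca, hc]; ring
        linarith
      nlinarith
    obtain ⟨g, hg⟩ : ∃ g : ι → ℝ, g = Function.update (Function.update f i (f i + f j - a)) j a :=
      ⟨_, rfl⟩
    have hgi : g i = f i + f j - a := by
      rw [hg, Function.update_of_ne hij, Function.update_self]
    have hgj : g j = a := by rw [hg, Function.update_self]
    have hgx : ∀ x, x ≠ i → x ≠ j → g x = f x := by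
      intro x hxi hxj
      rw [hg, Function.update_of_ne hxj, Function.update_of_ne hxi]
    have hgnn : ∀ x ∈ s, 0 ≤ g x := by
      intro x hx
      rcases eq_or_ne x i with rfl | hxi
      · rw [hgi]; linarith [hf x hx]
      rcases eq_or_ne x j with rfl | hxj
      · rw [hgj]; exact ha0
      · rw [hgx x hxi hxj]; exact hf x hx
    have hiej : i ∈ s.erase j := Finset.mem_erase.2 ⟨hij, hi⟩
    have hsumg : ∑ x ∈ s, g x = S := by
      have hsum'' : ∑ x ∈ (s.erase j).erase i, g x = ∑ x ∈ (s.erase j).erase i, f x := by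
        refine Finset.sum_congr rfl fun x hx => ?_
        have h1 := Finset.mem_erase.1 hx
        have h2 := Finset.mem_erase.1 h1.2
        exact hgx x h1.1 h2.1
      have e1 := Finset.sum_erase_add s g hjs
      have e2 := Finset.sum_erase_add (s.erase j) g hiej
      have e1f := Finset.sum_erase_add s f hjs
      have e2f := Finset.sum_erase_add (s.erase j) f hiej
      rw [hgi] at e2
      rw [hgj] at e1
      rw [hS]
      linarith [hsum'']
    -- smoothing
    have hsmooth : ∑ T ∈ s.powersetCard (t+1), ∏ x ∈ T, f x
        ≤ ∑ T ∈ s.powersetCard (t+1), ∏ x ∈ T, g x := by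
      refine esymm_smooth s f g hi hjs hij (fun x hx hxi hxj => (hgx x hxi hxj).symm)
        (fun x hx _ _ => hf x hx) (by rw [hgi, hgj]; ring) ?_ (t+1)
      rw [hgi, hgj]; nlinarith
    -- peel j
    have hpeel := esymm_peel s g hjs t
    have hcarde : #(s.erase j) = m + 1 := by
      rw [Finset.card_erase_of_mem hjs, hs]
      omega
    have hsge : ∑ x ∈ s.erase j, g x = ((m:ℝ)+1) * a := by
      have := Finset.sum_erase_add s g hjs
      rw [hgj] at this
      have h5 : ((m:ℝ)+1) * a = S - a := by rw [← hca, hc]; ring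
      linarith [hsumg ▸ this]
    have hgnn' : ∀ x ∈ s.erase j, 0 ≤ g x := fun x hx => hgnn x (Finset.mem_of_mem_erase hx)
    have ih1 := ih (m+1) (by omega) (s.erase j) hcarde g hgnn' (t+1)
    have ih2 := ih (m+1) (by omega) (s.erase j) hcarde g hgnn' t
    rw [hsge] at ih1 ih2
    have hm1 : (0:ℝ) < ((m:ℝ)+1) := by positivity
    have hE1 : ∑ T ∈ (s.erase j).powersetCard (t+1), ∏ x ∈ T, g x
        ≤ ((m+1).choose (t+1) : ℝ) * a ^ (t+1) := by
      have hpow : (0:ℝ) < ((m:ℝ)+1) ^ (t+1) := by positivity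
      push_cast at ih1
      refine le_of_mul_le_mul_right ?_ hpow
      calc (∑ T ∈ (s.erase j).powersetCard (t+1), ∏ x ∈ T, g x) * ((m:ℝ)+1)^(t+1)
          ≤ ((m+1).choose (t+1) : ℝ) * (((m:ℝ)+1) * a) ^ (t+1) := by push_cast; exact ih1
        _ = ((m+1).choose (t+1) : ℝ) * a ^ (t+1) * ((m:ℝ)+1)^(t+1) := by
            rw [mul_pow]; ring
    have hE2 : ∑ T ∈ (s.erase j).powersetCard t, ∏ x ∈ T, g x
        ≤ ((m+1).choose t : ℝ) * a ^ t := by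
      have hpow : (0:ℝ) < ((m:ℝ)+1) ^ t := by positivity
      push_cast at ih2
      refine le_of_mul_le_mul_right ?_ hpow
      calc (∑ T ∈ (s.erase j).powersetCard t, ∏ x ∈ T, g x) * ((m:ℝ)+1)^t
          ≤ ((m+1).choose t : ℝ) * (((m:ℝ)+1) * a) ^ t := by push_cast; exact ih2
        _ = ((m+1).choose t : ℝ) * a ^ t * ((m:ℝ)+1)^t := by
            rw [mul_pow]; ring
    -- combine
    have hEg : ∑ T ∈ s.powersetCard (t+1), ∏ x ∈ T, g x
        ≤ ((m+2).choose (t+1) : ℝ) * a ^ (t+1) := by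
      rw [hpeel, hgj]
      have hpascal : (m+2).choose (t+1) = (m+1).choose t + (m+1).choose (t+1) :=
        Nat.choose_succ_succ (m+1) t
      rw [hpascal]
      push_cast
      have h6 : a * ∑ T ∈ (s.erase j).powersetCard t, ∏ x ∈ T, g x
          ≤ a * (((m+1).choose t : ℝ) * a ^ t) := by
        apply mul_le_mul_of_nonneg_left hE2 ha0
      have h7 : a * (((m+1).choose t : ℝ) * a ^ t) = ((m+1).choose t : ℝ) * a ^ (t+1) := by ring
      rw [h7] at h6
      push_cast at hE1 h6 ⊢
      linarith
    calc (∑ T ∈ s.powersetCard (t+1), ∏ x ∈ T, f x) * ((m+2 : ℕ) : ℝ) ^ (t+1)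
        ≤ (((m+2).choose (t+1) : ℝ) * a ^ (t+1)) * ((m+2:ℕ) : ℝ) ^ (t+1) := by
          apply mul_le_mul_of_nonneg_right (le_trans hsmooth hEg) (by positivity)
      _ = ((m+2).choose (t+1) : ℝ) * (c * a) ^ (t+1) := by
          have hcc : ((m+2:ℕ) : ℝ) = c := by rw [hc]; push_cast; ring
          rw [mul_pow, hcc]; ring
      _ = ((m+2).choose (t+1) : ℝ) * (∑ x ∈ s, f x) ^ (t+1) := by rw [hca, hS]
variable {V : Type*} [Fintype V] [DecidableEq V]

lemma clique_not_both {G : SimpleGraph V} {s t : V} (hn : ¬G.Adj s t)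
    (hst : s ≠ t) {k : ℕ} {S : Finset V} (hS : G.IsNClique k S) (hs : s ∈ S) (ht : t ∈ S) :
    False :=
  hn (hS.1 hs ht hst)

lemma cliqueFinset_replaceVertex (G : SimpleGraph V) [DecidableRel G.Adj] {s t : V}
    (hn : ¬G.Adj s t) (hst : s ≠ t) (k : ℕ) :
    (G.replaceVertex s t).cliqueFinset k =
      ((G.cliqueFinset k).filter (fun S => t ∉ S)) ∪
      (((G.cliqueFinset k).filter (fun S => s ∈ S)).image (fun S => insert t (S.erase s))) := by
  ext S
  simp only [mem_cliqueFinset_iff, Finset.mem_union, Finset.mem_filter, Finset.mem_image,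
    mem_cliqueFinset_iff]
  constructor
  · intro hS
    by_cases ht : t ∈ S
    · right
      have hsS : s ∉ S := fun hsS => G.not_adj_replaceVertex_same s t (hS.1 hsS ht hst)
      have hset : s ∉ S.erase t := fun h => hsS (Finset.mem_of_mem_erase h)
      refine ⟨insert s (S.erase t), ⟨⟨?_, ?_⟩, Finset.mem_insert_self s _⟩, ?_⟩
      · intro a ha b hb hab
        simp only [Finset.coe_insert, Set.mem_insert_iff, Finset.mem_coe] at ha hb
        rcases ha with ha | ha <;> rcases hb with hb | hb
        · exact absurd (ha.trans hb.symm) hab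
        · rw [ha]
          have hbS := Finset.mem_of_mem_erase hb
          have hbt : b ≠ t := Finset.ne_of_mem_erase hb
          have := hS.1 ht hbS (fun h => hbt h.symm)
          rwa [G.adj_replaceVertex_iff_of_ne_right s hbt] at this
        · rw [hb]
          have haS := Finset.mem_of_mem_erase ha
          have hat : a ≠ t := Finset.ne_of_mem_erase ha
          have := hS.1 ht haS (fun h => hat h.symm)
          rw [G.adj_replaceVertex_iff_of_ne_right s hat] at this
          exact this.symm
        · have := hS.1 (Finset.mem_of_mem_erase ha) (Finset.mem_of_mem_erase hb) hab
          rwa [G.adj_replaceVertex_iff_of_ne s (Finset.ne_of_mem_erase ha)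
            (Finset.ne_of_mem_erase hb)] at this
      · rw [Finset.card_insert_of_notMem hset, Finset.card_erase_of_mem ht]
        have : 1 ≤ #S := Finset.card_pos.2 ⟨t, ht⟩
        have hk := hS.2
        omega
      · rw [Finset.erase_insert hset, Finset.insert_erase ht]
    · left
      refine ⟨⟨?_, hS.2⟩, ht⟩
      intro a ha b hb hab
      have := hS.1 ha hb hab
      rwa [G.adj_replaceVertex_iff_of_ne s (fun h => ht (by rwa [h] at ha)) (fun h => ht (by rwa [h] at hb))] at this
  · rintro (⟨⟨hcl, hcard⟩, ht⟩ | ⟨S₀, ⟨hS₀, hsS₀⟩, rfl⟩)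
    · refine ⟨?_, hcard⟩
      intro a ha b hb hab
      exact (G.adj_replaceVertex_iff_of_ne s (fun h => ht (by rwa [h] at ha)) (fun h => ht (by rwa [h] at hb))).2
        (hcl ha hb hab)
    · have htS₀ : t ∉ S₀ := fun h => clique_not_both hn hst hS₀ hsS₀ h
      have htse : t ∉ S₀.erase s := fun h => htS₀ (Finset.mem_of_mem_erase h)
      refine ⟨?_, ?_⟩
      · intro a ha b hb hab
        simp only [Finset.coe_insert, Set.mem_insert_iff, Finset.mem_coe] at ha hb
        rcases ha with ha | ha <;> rcases hb with hb | hb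
        · exact absurd (ha.trans hb.symm) hab
        · rw [ha]
          have hbt : b ≠ t := fun h => htse (by rwa [h] at hb)
          have hbs : b ≠ s := Finset.ne_of_mem_erase hb
          refine (G.adj_replaceVertex_iff_of_ne_right s hbt).2 ?_
          exact hS₀.1 hsS₀ (Finset.mem_of_mem_erase hb) (fun h => hbs h.symm)
        · rw [hb]
          have hat : a ≠ t := fun h => htse (by rwa [h] at ha)
          have has : a ≠ s := Finset.ne_of_mem_erase ha
          refine ((G.adj_replaceVertex_iff_of_ne_right s hat).2 ?_).symm
          exact hS₀.1 hsS₀ (Finset.mem_of_mem_erase ha) (fun h => has h.symm)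
        · have hadj := hS₀.1 (Finset.mem_of_mem_erase ha) (Finset.mem_of_mem_erase hb) hab
          have hat : a ≠ t := fun h => htse (by rwa [h] at ha)
          have hbt : b ≠ t := fun h => htse (by rwa [h] at hb)
          exact (G.adj_replaceVertex_iff_of_ne s hat hbt).2 hadj
      · rw [Finset.card_insert_of_notMem htse, Finset.card_erase_of_mem hsS₀]
        have : 1 ≤ #S₀ := Finset.card_pos.2 ⟨s, hsS₀⟩
        have hk := hS₀.2
        omega

lemma card_filter_cliqueFinset_replaceVertex (G : SimpleGraph V) [DecidableRel G.Adj] {s t : V}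
    (hn : ¬G.Adj s t) (hst : s ≠ t) (k : ℕ) (p : Finset V → Prop) [DecidablePred p] :
    #(((G.replaceVertex s t).cliqueFinset k).filter p)
      = #((G.cliqueFinset k).filter (fun S => t ∉ S ∧ p S))
        + #((G.cliqueFinset k).filter (fun S => s ∈ S ∧ p (insert t (S.erase s)))) := by
  have hinj : Set.InjOn (fun S : Finset V => insert t (S.erase s))
      (((G.cliqueFinset k).filter (fun S => s ∈ S)) : Finset (Finset V)) := by
    intro S₁ h₁ S₂ h₂ he
    simp only [Finset.coe_filter, Set.mem_setOf_eq, mem_cliqueFinset_iff] at h₁ h₂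
    have ht₁ : t ∉ S₁.erase s := fun h =>
      clique_not_both hn hst h₁.1 h₁.2 (Finset.mem_of_mem_erase h)
    have ht₂ : t ∉ S₂.erase s := fun h =>
      clique_not_both hn hst h₂.1 h₂.2 (Finset.mem_of_mem_erase h)
    have : S₁.erase s = S₂.erase s := by
      have := congrArg (fun X => Finset.erase X t) he
      simpa [Finset.erase_insert ht₁, Finset.erase_insert ht₂] using this
    calc S₁ = insert s (S₁.erase s) := (Finset.insert_erase h₁.2).symm
      _ = insert s (S₂.erase s) := by rw [this]
      _ = S₂ := Finset.insert_erase h₂.2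
  have hdisj : Disjoint ((G.cliqueFinset k).filter (fun S => t ∉ S))
      (((G.cliqueFinset k).filter (fun S => s ∈ S)).image (fun S => insert t (S.erase s))) := by
    rw [Finset.disjoint_left]
    intro S hS₁ hS₂
    rw [Finset.mem_filter] at hS₁
    rw [Finset.mem_image] at hS₂
    obtain ⟨S₀, _, rfl⟩ := hS₂
    exact hS₁.2 (Finset.mem_insert_self t _)
  rw [cliqueFinset_replaceVertex G hn hst k, Finset.filter_union,
    Finset.card_union_of_disjoint (Finset.disjoint_filter_filter hdisj),
    Finset.filter_filter, Finset.filter_image,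
    Finset.card_image_of_injOn (hinj.mono (Finset.coe_subset.2 (Finset.filter_subset _ _))),
    Finset.filter_filter]

/-- number of k-cliques containing a given vertex -/
def cW (G : SimpleGraph V) [DecidableRel G.Adj] (k : ℕ) (a : V) : ℕ :=
  #((G.cliqueFinset k).filter (fun S => a ∈ S))

/-- number of k-cliques containing two given vertices -/
def cWW (G : SimpleGraph V) [DecidableRel G.Adj] (k : ℕ) (a b : V) : ℕ :=
  #((G.cliqueFinset k).filter (fun S => a ∈ S ∧ b ∈ S))

lemma replace_count (G : SimpleGraph V) [DecidableRel G.Adj] {s t : V}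
    (hn : ¬G.Adj s t) (hst : s ≠ t) (k : ℕ) :
    #((G.replaceVertex s t).cliqueFinset k) + cW G k t = #(G.cliqueFinset k) + cW G k s := by
  have h := card_filter_cliqueFinset_replaceVertex G hn hst k (fun _ => True)
  simp only [Finset.filter_true, and_true] at h
  have h2 : #((G.cliqueFinset k).filter (fun S => t ∉ S))
      + #((G.cliqueFinset k).filter (fun S => ¬ t ∉ S)) = #(G.cliqueFinset k) :=
    Finset.card_filter_add_card_filter_not _
  have h3 : ((G.cliqueFinset k).filter (fun S => ¬ t ∉ S))
      = ((G.cliqueFinset k).filter (fun S => t ∈ S)) :=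
    Finset.filter_congr (fun S _ => not_not)
  rw [h3] at h2
  unfold cW
  omega

lemma replace_count_s (G : SimpleGraph V) [DecidableRel G.Adj] {s t : V}
    (hn : ¬G.Adj s t) (hst : s ≠ t) (k : ℕ) :
    cW (G.replaceVertex s t) k s = cW G k s := by
  have h := card_filter_cliqueFinset_replaceVertex G hn hst k (fun S => s ∈ S)
  unfold cW
  rw [h]
  have h1 : ((G.cliqueFinset k).filter (fun S => s ∈ S ∧ s ∈ insert t (S.erase s))) = ∅ := by
    apply Finset.filter_false_of_mem
    intro S _
    rintro ⟨-, hmem⟩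
    rcases Finset.mem_insert.1 hmem with h | h
    · exact hst h
    · exact Finset.notMem_erase s S h
  have h2 : ((G.cliqueFinset k).filter (fun S => t ∉ S ∧ s ∈ S))
      = ((G.cliqueFinset k).filter (fun S => s ∈ S)) := by
    refine Finset.filter_congr fun S hS => ?_
    constructor
    · exact And.right
    · intro hs
      exact ⟨fun ht => clique_not_both hn hst (SimpleGraph.mem_cliqueFinset_iff.1 hS) hs ht, hs⟩
  rw [h1, h2, Finset.card_empty]
  omega

lemma replace_count_u (G : SimpleGraph V) [DecidableRel G.Adj] {s t u : V}
    (hn : ¬G.Adj s t) (hst : s ≠ t) (hus : u ≠ s) (hut : u ≠ t) (k : ℕ) :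
    cW (G.replaceVertex s t) k u + cWW G k t u = cW G k u + cWW G k s u := by
  have h := card_filter_cliqueFinset_replaceVertex G hn hst k (fun S => u ∈ S)
  have h1 : ((G.cliqueFinset k).filter (fun S => s ∈ S ∧ u ∈ insert t (S.erase s)))
      = ((G.cliqueFinset k).filter (fun S => s ∈ S ∧ u ∈ S)) := by
    refine Finset.filter_congr fun S hS => ?_
    constructor
    · rintro ⟨hs, hmem⟩
      rcases Finset.mem_insert.1 hmem with h | h
      · exact absurd h hut
      · exact ⟨hs, Finset.mem_of_mem_erase h⟩
    · rintro ⟨hs, hu⟩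
      exact ⟨hs, Finset.mem_insert_of_mem (Finset.mem_erase.2 ⟨hus, hu⟩)⟩
  have h2 : #((G.cliqueFinset k).filter (fun S => t ∉ S ∧ u ∈ S))
      + #((G.cliqueFinset k).filter (fun S => t ∈ S ∧ u ∈ S))
      = #((G.cliqueFinset k).filter (fun S => u ∈ S)) := by
    have ha : ∀ (q : Finset V → Prop) [DecidablePred q],
        ((G.cliqueFinset k).filter (fun S => q S ∧ u ∈ S))
        = (((G.cliqueFinset k).filter (fun S => u ∈ S)).filter q) := by
      intro q _
      rw [Finset.filter_filter]
      exact Finset.filter_congr fun S _ => and_comm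
    rw [ha (fun S => t ∉ S), ha (fun S => t ∈ S)]
    have := Finset.card_filter_add_card_filter_not
      (s := (G.cliqueFinset k).filter (fun S => u ∈ S)) (p := fun S => t ∉ S)
    rw [Finset.filter_congr (fun (S : Finset V) _ => not_not (a := t ∈ S))] at this
    exact this
  rw [h1] at h
  unfold cW cWW
  omega

lemma cWW_eq_zero (G : SimpleGraph V) [DecidableRel G.Adj] {a b : V} (hn : ¬G.Adj a b)
    (hab : a ≠ b) (k : ℕ) : cWW G k a b = 0 := by
  unfold cWW
  rw [Finset.card_eq_zero]
  apply Finset.filter_false_of_mem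
  rintro S hS ⟨ha, hb⟩
  exact clique_not_both hn hab (mem_cliqueFinset_iff.1 hS) ha hb

lemma cWW2_pos (G : SimpleGraph V) [DecidableRel G.Adj] {a b : V} (h : G.Adj a b) :
    1 ≤ cWW G 2 a b := by
  unfold cWW
  rw [Nat.one_le_iff_ne_zero, ← Nat.pos_iff_ne_zero, Finset.card_pos]
  refine ⟨{a, b}, ?_⟩
  rw [Finset.mem_filter, mem_cliqueFinset_iff]
  refine ⟨⟨?_, Finset.card_pair h.ne⟩, by simp, by simp⟩
  rw [Finset.coe_insert, Finset.coe_singleton]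
  exact (isClique_pair).2 fun _ => h

lemma key_ineq (M k r : ℕ) (G : SimpleGraph V) [DecidableRel G.Adj]
    (hfree : G.CliqueFree (r+1))
    (hmax : ∀ (H : SimpleGraph V) (_i : DecidableRel H.Adj), H.CliqueFree (r+1) →
      M * #(H.cliqueFinset k) + #(H.cliqueFinset 2)
        ≤ M * #(G.cliqueFinset k) + #(G.cliqueFinset 2))
    {x y : V} (hn : ¬G.Adj x y) (hxy : x ≠ y) :
    M * cW G k x + cW G 2 x ≤ M * cW G k y + cW G 2 y := by
  have hfree' : (G.replaceVertex x y).CliqueFree (r+1) := hfree.replaceVertex x y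
  have h1 := replace_count G hn hxy k
  have h2 := replace_count G hn hxy 2
  have h3 := hmax (G.replaceVertex x y) inferInstance hfree'
  have h1M : M * #((G.replaceVertex x y).cliqueFinset k) + M * cW G k y
      = M * #(G.cliqueFinset k) + M * cW G k x := by
    rw [← Nat.mul_add, ← Nat.mul_add, h1]
  linarith

lemma max_not_adj_trans (M k r : ℕ) (G : SimpleGraph V) [DecidableRel G.Adj]
    (hfree : G.CliqueFree (r+1))
    (hmax : ∀ (H : SimpleGraph V) (_i : DecidableRel H.Adj), H.CliqueFree (r+1) →
      M * #(H.cliqueFinset k) + #(H.cliqueFinset 2)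
        ≤ M * #(G.cliqueFinset k) + #(G.cliqueFinset 2))
    {a b c : V} (hab : ¬G.Adj a b) (hac : ¬G.Adj a c) : ¬G.Adj b c := by
  rcases eq_or_ne a b with rfl | hab'
  · exact hac
  rcases eq_or_ne a c with rfl | hac'
  · exact fun h => hab h.symm
  rcases eq_or_ne b c with rfl | hbc'
  · exact G.loopless.irrefl b
  intro hadj
  have hcb : c ≠ b := fun h => hbc' h.symm
  have hE1 : M * cW G k a + cW G 2 a = M * cW G k b + cW G 2 b :=
    le_antisymm (key_ineq M k r G hfree hmax hab hab')
      (key_ineq M k r G hfree hmax (fun h => hab h.symm) hab'.symm)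
  have hE2 : M * cW G k a + cW G 2 a = M * cW G k c + cW G 2 c :=
    le_antisymm (key_ineq M k r G hfree hmax hac hac')
      (key_ineq M k r G hfree hmax (fun h => hac h.symm) hac'.symm)
  have hnac' : ¬(G.replaceVertex a b).Adj a c := by
    rw [G.adj_replaceVertex_iff_of_ne a hab' hcb]
    exact hac
  have hfree₂ : ((G.replaceVertex a b).replaceVertex a c).CliqueFree (r+1) :=
    (hfree.replaceVertex a b).replaceVertex a c
  have eqm : ∀ m : ℕ, #(((G.replaceVertex a b).replaceVertex a c).cliqueFinset m)
      + cW G m c + cW G m b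
      = #(G.cliqueFinset m) + (cW G m a + cW G m a) + cWW G m b c := by
    intro m
    have e1 := replace_count (G.replaceVertex a b) hnac' hac' m
    have e2 := replace_count_s G hab hab' m
    have e3 := replace_count_u G hab hab' hac'.symm hcb m
    have e4 := replace_count G hab hab' m
    have e5 := cWW_eq_zero G hac hac' m
    omega
  have eqk := eqm k
  have eq2 := eqm 2
  have hm := hmax ((G.replaceVertex a b).replaceVertex a c) inferInstance hfree₂
  have h2bc := cWW2_pos G hadj
  have eqkM : M * #(((G.replaceVertex a b).replaceVertex a c).cliqueFinset k)
      + M * cW G k c + M * cW G k b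
      = M * #(G.cliqueFinset k) + (M * cW G k a + M * cW G k a) + M * cWW G k b c := by
    rw [← Nat.mul_add, ← Nat.mul_add, ← Nat.mul_add, ← Nat.mul_add, ← Nat.mul_add, eqk]
  have hz : 0 ≤ M * cWW G k b c := Nat.zero_le _
  linarith

lemma choose_mul_pow_le {p r t : ℕ} (h : p ≤ r) : p.choose t * r ^ t ≤ r.choose t * p ^ t := by
  have h1 : (p.descFactorial t) * r ^ t ≤ (r.descFactorial t) * p ^ t := by
    have hr : r ^ t = ∏ _i ∈ Finset.range t, r := by
      rw [Finset.prod_const, Finset.card_range]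
    have hp : p ^ t = ∏ _i ∈ Finset.range t, p := by
      rw [Finset.prod_const, Finset.card_range]
    rw [Nat.descFactorial_eq_prod_range, Nat.descFactorial_eq_prod_range, hr, hp,
      ← Finset.prod_mul_distrib, ← Finset.prod_mul_distrib]
    refine Finset.prod_le_prod (fun i _ => Nat.zero_le _) (fun i _ => ?_)
    calc (p - i) * r = p * r - i * r := by rw [Nat.sub_mul]
      _ ≤ p * r - i * p := Nat.sub_le_sub_left (Nat.mul_le_mul_left i h) (p * r)
      _ = (r - i) * p := by rw [Nat.sub_mul, Nat.mul_comm p r]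
  have h2 : t.factorial * (p.choose t * r ^ t) ≤ t.factorial * (r.choose t * p ^ t) := by
    rw [← mul_assoc, ← mul_assoc, ← Nat.descFactorial_eq_factorial_mul_choose,
      ← Nat.descFactorial_eq_factorial_mul_choose]
    exact h1
  exact Nat.le_of_mul_le_mul_left h2 t.factorial_pos

lemma parts_le_of_cliqueFree (G : SimpleGraph V) (P : Finpartition (univ : Finset V))
    (hpart : ∀ x y : V, ¬G.Adj x y ↔ P.part x = P.part y) {r : ℕ}
    (hfree : G.CliqueFree (r+1)) : #P.parts ≤ r := by
  by_contra! l
  obtain ⟨z, -, hz⟩ := P.exists_subset_part_bijOn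
  have ncf : ¬G.CliqueFree #z := by
    refine IsNClique.not_cliqueFree (s := z) ⟨fun v hv w hw hn => ?_, rfl⟩
    contrapose! hn
    exact hz.injOn hv hw ((hpart v w).1 hn)
  rw [Finset.card_eq_of_equiv hz.equiv] at ncf
  exact absurd (hfree.mono (Nat.succ_le_of_lt l)) ncf

lemma clique_count_le_esymm (G : SimpleGraph V) [DecidableRel G.Adj]
    (P : Finpartition (univ : Finset V))
    (hpart : ∀ x y : V, ¬G.Adj x y ↔ P.part x = P.part y) (k : ℕ) :
    #(G.cliqueFinset k) ≤ ∑ Q ∈ P.parts.powersetCard k, ∏ p ∈ Q, #p := by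
  letI : LinearOrder V := LinearOrder.lift' (Fintype.equivFin V) (Fintype.equivFin V).injective
  have hinjS : ∀ S ∈ G.cliqueFinset k, ∀ x ∈ S, ∀ y ∈ S, P.part x = P.part y → x = y := by
    intro S hS x hx y hy hxy
    by_contra hne
    exact ((hpart x y).2 hxy) ((mem_cliqueFinset_iff.1 hS).1 hx hy hne)
  have hmaps : ∀ S ∈ G.cliqueFinset k, S.image P.part ∈ P.parts.powersetCard k := by
    intro S hS
    rw [Finset.mem_powersetCard]
    constructor
    · intro q hq
      obtain ⟨x, -, rfl⟩ := Finset.mem_image.1 hq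
      exact P.part_mem.2 (mem_univ x)
    · rw [Finset.card_image_of_injOn (fun x hx y hy => hinjS S hS x hx y hy)]
      exact (mem_cliqueFinset_iff.1 hS).2
  rw [Finset.card_eq_sum_card_fiberwise hmaps]
  refine Finset.sum_le_sum fun Q hQ => ?_
  have hQparts := (Finset.mem_powersetCard.1 hQ).1
  -- chooser function
  set f : Finset V → (p : Finset V) → p ∈ Q → V := fun S p hp =>
    if h : (S.filter (fun x => P.part x = p)).Nonempty
    then (S.filter (fun x => P.part x = p)).min' h
    else (P.nonempty_of_mem_parts (hQparts hp)).choose with hf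
  have hfmem : ∀ S p (hp : p ∈ Q), f S p hp ∈ p := by
    intro S p hp
    rw [hf]
    dsimp only
    split_ifs with h
    · have hm := Finset.min'_mem _ h
      rw [Finset.mem_filter] at hm
      have := P.mem_part (mem_univ ((S.filter (fun x => P.part x = p)).min' h))
      rwa [hm.2] at this
    · exact (P.nonempty_of_mem_parts (hQparts hp)).choose_spec
  have hval : ∀ S, S ∈ (G.cliqueFinset k).filter (fun S => S.image P.part = Q) →
      ∀ x ∈ S, ∀ (hp : P.part x ∈ Q), f S (P.part x) hp = x := by
    intro S hS x hx hp
    rw [Finset.mem_filter] at hS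
    have hne : (S.filter (fun y => P.part y = P.part x)).Nonempty := ⟨x, by simp [hx]⟩
    rw [hf]
    dsimp only
    rw [dif_pos hne]
    have hm := Finset.min'_mem _ hne
    rw [Finset.mem_filter] at hm
    exact hinjS S hS.1 _ hm.1 x hx hm.2
  calc #((G.cliqueFinset k).filter (fun S => S.image P.part = Q))
      ≤ #(Q.pi (fun p => p)) := by
        refine Finset.card_le_card_of_injOn (fun S => fun p hp => f S p hp) ?_ ?_
        · intro S hS
          rw [Finset.mem_coe, Finset.mem_pi]
          intro p hp
          exact hfmem S p hp
        · intro S₁ hS₁ S₂ hS₂ he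
          simp only [Finset.mem_coe] at hS₁ hS₂
          have hsub : ∀ S S' , S ∈ (G.cliqueFinset k).filter (fun S => S.image P.part = Q) →
              S' ∈ (G.cliqueFinset k).filter (fun S => S.image P.part = Q) →
              (∀ p (hp : p ∈ Q), f S p hp = f S' p hp) → S ⊆ S' := by
            intro S S' hS hS' hee x hx
            have hpQ : P.part x ∈ Q := by
              rw [← (Finset.mem_filter.1 hS).2]
              exact Finset.mem_image_of_mem _ hx
            have h1 : f S (P.part x) hpQ = x := hval S hS x hx hpQ
            -- f S' (P.part x) is in S'
            have hne' : (S'.filter (fun y => P.part y = P.part x)).Nonempty := by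
              have : P.part x ∈ S'.image P.part := by
                rw [(Finset.mem_filter.1 hS').2]; exact hpQ
              obtain ⟨y, hy, hyx⟩ := Finset.mem_image.1 this
              exact ⟨y, by simp [hy, hyx]⟩
            have h2 : f S' (P.part x) hpQ ∈ S' := by
              rw [hf]
              dsimp only
              rw [dif_pos hne']
              exact Finset.mem_of_mem_filter _ (Finset.min'_mem _ hne')
            rw [← h1, hee _ hpQ]
            exact h2
          have he' : ∀ p (hp : p ∈ Q), f S₁ p hp = f S₂ p hp := fun p hp => congrFun (congrFun he p) hp
          exact Finset.Subset.antisymm (hsub S₁ S₂ hS₁ hS₂ he')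
            (hsub S₂ S₁ hS₂ hS₁ (fun p hp => (he' p hp).symm))
    _ = ∏ p ∈ Q, #p := by rw [Finset.card_pi]

lemma cliqueFinset_congr' {V : Type*} [Fintype V] [DecidableEq V] (G : SimpleGraph V)
    (i₁ i₂ : DecidableRel G.Adj) (k : ℕ) :
    #(@SimpleGraph.cliqueFinset V G _ _ i₁ k) = #(@SimpleGraph.cliqueFinset V G _ _ i₂ k) := by
  congr 1
  congr!

end Helpers

theorem stmt_4 {V : Type*} [Fintype V] [DecidableEq V]
    (G : SimpleGraph V) [DecidableRel G.Adj]
    (r t n : ℕ) (hr : 1 ≤ r) (ht : 1 ≤ t) (hn : Fintype.card V = n)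
    (hfree : G.CliqueFree (r + 1)) :
    (G.cliqueFinset t).card * r ^ t ≤ r.choose t * n ^ t := by
  classical
  open Finset SimpleGraph in
  rcases Nat.eq_zero_or_pos n with hzero | hpos
  · obtain ⟨t', rfl⟩ : ∃ t', t = t' + 1 := ⟨t - 1, by omega⟩
    have h0 : #(G.cliqueFinset (t'+1)) ≤ (Fintype.card V).choose (t'+1) :=
      G.card_cliqueFinset_le
    rw [hn, hzero, Nat.choose_zero_succ] at h0
    rw [Nat.le_zero.1 h0, hzero]
    simp
  obtain ⟨Gm, hGmem, hGmax⟩ := Finset.exists_max_image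
    ({H : SimpleGraph V | H.CliqueFree (r+1)}.toFinset)
    (fun H => (n^2+1) * #(H.cliqueFinset t) + #(H.cliqueFinset 2))
    ⟨⊥, by rw [Set.mem_toFinset]; exact SimpleGraph.cliqueFree_bot (by omega)⟩
  have hGm_free : Gm.CliqueFree (r+1) := Set.mem_toFinset.1 hGmem
  have hmax : ∀ (H : SimpleGraph V) (_i : DecidableRel H.Adj), H.CliqueFree (r+1) →
      (n^2+1) * #(H.cliqueFinset t) + #(H.cliqueFinset 2)
        ≤ (n^2+1) * #(Gm.cliqueFinset t) + #(Gm.cliqueFinset 2) := by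
    intro H iH hHfree
    have hmem : H ∈ ({H : SimpleGraph V | H.CliqueFree (r+1)}.toFinset) := by
      rw [Set.mem_toFinset]; exact hHfree
    have h := hGmax H hmem
    calc (n^2+1) * #(H.cliqueFinset t) + #(H.cliqueFinset 2)
        = (n^2+1) * #(@SimpleGraph.cliqueFinset V H _ _ (Classical.decRel _) t)
          + #(@SimpleGraph.cliqueFinset V H _ _ (Classical.decRel _) 2) := by
          rw [cliqueFinset_congr' H iH (Classical.decRel _) t,
            cliqueFinset_congr' H iH (Classical.decRel _) 2]
      _ ≤ (n^2+1) * #(Gm.cliqueFinset t) + #(Gm.cliqueFinset 2) := by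
          convert h using 4 <;> congr!
  have hequiv : Equivalence (fun x y : V => ¬Gm.Adj x y) := by
    refine ⟨fun x => Gm.loopless.irrefl x, fun h a => h a.symm, ?_⟩
    intro x y z hxy hyz
    exact max_not_adj_trans (n^2+1) t r Gm hGm_free hmax (fun h => hxy h.symm) hyz
  let st : Setoid V := ⟨fun x y => ¬Gm.Adj x y, hequiv⟩
  haveI : DecidableRel st.r := fun x y => Classical.propDecidable _
  let P : Finpartition (univ : Finset V) := Finpartition.ofSetoid st
  have hpart : ∀ x y : V, ¬Gm.Adj x y ↔ P.part x = P.part y := by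
    intro x y
    have h1 : (¬Gm.Adj x y) ↔ st.r x y := Iff.rfl
    rw [h1, ← Finpartition.mem_part_ofSetoid_iff_rel]
    have h2 : y ∈ P.part x ↔ P.part y = P.part x :=
      P.mem_part_iff_part_eq_part (mem_univ y) (mem_univ x)
    exact h2.trans eq_comm
  have hparts_le : #P.parts ≤ r := parts_le_of_cliqueFree Gm P hpart hGm_free
  have hcount := clique_count_le_esymm Gm P hpart t
  have hsumparts : ∑ p ∈ P.parts, #p = n := by
    rw [P.sum_card_parts, Finset.card_univ, hn]
  have hreal := esymm_mul_pow_le (#P.parts) P.parts rfl (fun p => ((#p : ℕ) : ℝ))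
    (fun p _ => Nat.cast_nonneg _) t
  have hEn : (∑ Q ∈ P.parts.powersetCard t, ∏ p ∈ Q, #p) * (#P.parts)^t
      ≤ (#P.parts).choose t * n^t := by
    have h1 : (∑ Q ∈ P.parts.powersetCard t, ∏ p ∈ Q, ((#p : ℕ) : ℝ))
        = ((∑ Q ∈ P.parts.powersetCard t, ∏ p ∈ Q, #p : ℕ) : ℝ) := by push_cast; rfl
    have h2 : (∑ p ∈ P.parts, ((#p : ℕ) : ℝ)) = (n : ℝ) := by
      rw [← hsumparts]; push_cast; rfl
    rw [h1, h2] at hreal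
    exact_mod_cast hreal
  have hppos : 0 < #P.parts := by
    rw [Finset.card_pos]
    apply P.parts_nonempty
    have huniv : (univ : Finset V).Nonempty := by
      rw [← Finset.card_pos, Finset.card_univ, hn]; omega
    exact Finset.nonempty_iff_ne_empty.1 huniv
  have hstep : (∑ Q ∈ P.parts.powersetCard t, ∏ p ∈ Q, #p) * r^t ≤ r.choose t * n^t := by
    refine Nat.le_of_mul_le_mul_right ?_ (pow_pos hppos t)
    calc (∑ Q ∈ P.parts.powersetCard t, ∏ p ∈ Q, #p) * r^t * (#P.parts)^t
        = (∑ Q ∈ P.parts.powersetCard t, ∏ p ∈ Q, #p) * (#P.parts)^t * r^t := by ring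
      _ ≤ (#P.parts).choose t * n^t * r^t := Nat.mul_le_mul_right _ hEn
      _ = (#P.parts).choose t * r^t * n^t := by ring
      _ ≤ r.choose t * (#P.parts)^t * n^t :=
          Nat.mul_le_mul_right _ (choose_mul_pow_le hparts_le)
      _ = r.choose t * n^t * (#P.parts)^t := by ring
  have hk2 : #(Gm.cliqueFinset 2) ≤ n^2 := by
    calc #(Gm.cliqueFinset 2) ≤ (Fintype.card V).choose 2 := Gm.card_cliqueFinset_le
      _ ≤ (Fintype.card V)^2 := Nat.choose_le_pow _ 2
      _ = n^2 := by rw [hn]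
  have hGle : #(G.cliqueFinset t) ≤ #(Gm.cliqueFinset t) := by
    have h := hmax G inferInstance hfree
    by_contra hlt
    push_neg at hlt
    have h2 : (n^2+1) * (#(Gm.cliqueFinset t) + 1) ≤ (n^2+1) * #(G.cliqueFinset t) :=
      Nat.mul_le_mul_left _ hlt
    have hexp : (n^2+1) * (#(Gm.cliqueFinset t) + 1)
        = (n^2+1) * #(Gm.cliqueFinset t) + (n^2+1) := by ring
    linarith
  calc #(G.cliqueFinset t) * r^t
      ≤ #(Gm.cliqueFinset t) * r^t := Nat.mul_le_mul_right _ hGle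
    _ ≤ (∑ Q ∈ P.parts.powersetCard t, ∏ p ∈ Q, #p) * r^t := Nat.mul_le_mul_right _ hcount
    _ ≤ r.choose t * n^t := hstep
end

section
/- Let t and r be integers with 2 ≤ t ≤ r, and let G be a P_{r+1}-free graph on n vertices (G contains no subgraph isomorphic to the path on r+1 vertices). Then the number of subgraphs of G isomorphic to K_t is at most (n/r) · C(r, t), i.e. r · N(K_t, G) ≤ n · C(r, t); moreover equality holds if and only if r divides n and G is a disjoint union of n/r copies of K_r. -/
namespace Stmt6Aux
open Finset List
open scoped Classical
set_option linter.unusedSectionVars false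
set_option linter.unusedVariables false
set_option maxHeartbeats 1000000

variable {V : Type*} [Fintype V] [DecidableEq V] (G : SimpleGraph V) [DecidableRel G.Adj]

/-- adjacency step within `s` -/
def Rel (s : Finset V) (a b : V) : Prop := G.Adj a b ∧ a ∈ s ∧ b ∈ s

/-- reachability within `s` -/
def Rs (s : Finset V) (v w : V) : Prop :=
  v ∈ s ∧ w ∈ s ∧ Relation.ReflTransGen (Rel G s) v w

noncomputable def comp (s : Finset V) (v : V) : Finset V :=
  s.filter (fun w => Rs G s v w)

def ds (s : Finset V) (v : V) : ℕ := (s.filter (fun w => G.Adj v w)).card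

def Frees (s : Finset V) (m : ℕ) : Prop :=
  ∀ l : List V, l.Nodup → l.Chain' G.Adj → (∀ x ∈ l, x ∈ s) → l.length ≤ m

def cliFin (s : Finset V) (k : ℕ) : Finset (Finset V) :=
  (s.powersetCard k).filter (fun q => ∀ a ∈ q, ∀ b ∈ q, a ≠ b → G.Adj a b)

def ExtS (s : Finset V) (r : ℕ) : Prop :=
  (∀ v ∈ s, ∀ w ∈ s, Rs G s v w → v ≠ w → G.Adj v w) ∧ ∀ v ∈ s, (comp G s v).card = r

variable {G}

lemma Rs.refl {s : Finset V} {v : V} (hv : v ∈ s) : Rs G s v v :=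
  ⟨hv, hv, Relation.ReflTransGen.refl⟩

lemma rel_symm {s : Finset V} : Symmetric (Rel G s) := fun _ _ h => ⟨h.1.symm, h.2.2, h.2.1⟩

lemma Rs.symm {s : Finset V} {v w : V} (h : Rs G s v w) : Rs G s w v :=
  ⟨h.2.1, h.1, (haveI : Std.Symm (Rel G s) := ⟨rel_symm⟩; Std.Symm.symm _ _ h.2.2)⟩

lemma Rs.trans {s : Finset V} {u v w : V} (h : Rs G s u v) (h' : Rs G s v w) : Rs G s u w :=
  ⟨h.1, h'.2.1, h.2.2.trans h'.2.2⟩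

lemma Rs.step {s : Finset V} {u x y : V} (h : Rs G s u x) (hxy : G.Adj x y) (hy : y ∈ s) :
    Rs G s u y :=
  ⟨h.1, hy, h.2.2.tail ⟨hxy, h.2.1, hy⟩⟩

lemma Rs.mono {s s' : Finset V} (hss : s ⊆ s') {v w : V} (h : Rs G s v w) : Rs G s' v w :=
  ⟨hss h.1, hss h.2.1, Relation.ReflTransGen.mono (fun _ _ hr => ⟨hr.1, hss hr.2.1, hss hr.2.2⟩) _ _ h.2.2⟩

/-- `c` is a union of components of `s` -/
def Closed (s c : Finset V) : Prop := c ⊆ s ∧ ∀ a ∈ c, ∀ b ∈ s, G.Adj a b → b ∈ c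

lemma Closed.trap {s c : Finset V} (hc : Closed (G := G) s c) {v w : V} (hv : v ∈ c)
    (h : Rs G s v w) : w ∈ c ∧ Rs G c v w := by
  obtain ⟨-, -, h⟩ := h
  induction h with
  | refl => exact ⟨hv, Rs.refl hv⟩
  | tail _ h2 ih =>
    refine ⟨hc.2 _ ih.1 _ h2.2.2 h2.1, ih.2.step h2.1 (hc.2 _ ih.1 _ h2.2.2 h2.1)⟩

lemma comp_closed {s : Finset V} {v : V} (hv : v ∈ s) : Closed (G := G) s (comp G s v) := by
  refine ⟨Finset.filter_subset _ _, fun a ha b hb hab => ?_⟩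
  rw [comp, Finset.mem_filter] at ha ⊢
  exact ⟨hb, ha.2.step hab hb⟩

lemma mem_comp_self {s : Finset V} {v : V} (hv : v ∈ s) : v ∈ comp G s v := by
  rw [comp, Finset.mem_filter]; exact ⟨hv, Rs.refl hv⟩

lemma mem_comp {s : Finset V} {v w : V} : w ∈ comp G s v ↔ w ∈ s ∧ Rs G s v w := by
  rw [comp, Finset.mem_filter]

lemma sdiff_closed {s c : Finset V} (hc : Closed (G := G) s c) : Closed (G := G) s (s \ c) := by
  refine ⟨Finset.sdiff_subset, fun a ha b hb hab => ?_⟩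
  rw [Finset.mem_sdiff] at ha ⊢
  refine ⟨hb, fun hbc => ha.2 (hc.2 _ hbc _ ha.1 hab.symm)⟩

/-- boundary edge -/
lemma exists_boundary {s : Finset V} {u z : V} (h : Rs G s u z) (p : V → Prop)
    (hu : p u) (hz : ¬ p z) : ∃ a b, p a ∧ ¬ p b ∧ G.Adj a b ∧ a ∈ s ∧ b ∈ s := by
  obtain ⟨-, -, h⟩ := h
  induction h with
  | refl => exact absurd hu hz
  | @tail b c h1 h2 ih =>
    by_cases hb : p b
    · exact ⟨b, c, hb, hz, h2.1, h2.2.1, h2.2.2⟩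
    · obtain ⟨a', b', h⟩ := ih hb
      exact ⟨a', b', h⟩

lemma exists_edge {s : Finset V} {v w : V} (h : Rs G s v w) (hvw : v ≠ w) :
    ∃ a b, G.Adj a b ∧ a ∈ s ∧ b ∈ s := by
  rcases h.2.2.cases_head with h' | ⟨c, hc, -⟩
  · exact absurd h' hvw
  · exact ⟨v, c, hc.1, hc.2.1, hc.2.2⟩

lemma Frees.mono {s s' : Finset V} {m : ℕ} (hss : s' ⊆ s) (h : Frees G s m) : Frees G s' m :=
  fun l h1 h2 h3 => h l h1 h2 fun x hx => hss (h3 x hx)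

lemma ds_le_card_pred {s : Finset V} {v : V} (hv : v ∈ s) : ds G s v ≤ s.card - 1 := by
  have : s.filter (fun w => G.Adj v w) ⊆ s.erase v := by
    intro w hw
    rw [Finset.mem_filter] at hw
    exact Finset.mem_erase.2 ⟨fun h => G.irrefl (h ▸ hw.2), hw.1⟩
  calc ds G s v ≤ (s.erase v).card := Finset.card_le_card this
  _ = s.card - 1 := Finset.card_erase_of_mem hv

lemma ds_closed_eq {s c : Finset V} (hc : Closed (G := G) s c) {v : V} (hv : v ∈ c) :
    ds G c v = ds G s v := by
  unfold ds
  congr 1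
  apply Finset.Subset.antisymm
  · exact Finset.monotone_filter_left _ hc.1
  · intro w hw
    rw [Finset.mem_filter] at hw ⊢
    exact ⟨hc.2 _ hv _ hw.1 hw.2, hw.2⟩


lemma cycle_extend {c : List V} (hne : c ≠ []) (hch : c.Chain' G.Adj)
    (hnd : c.Nodup)
    (hcyc : G.Adj (c.getLast hne) (c.head hne))
    {x y : V} (hx : x ∉ c) (hy : y ∈ c) (hxy : G.Adj x y) :
    ∃ m : List V, m.Nodup ∧ m.Chain' G.Adj ∧ m.length = c.length + 1 ∧
      ∀ z ∈ m, z ∈ c ∨ z = x := by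
  obtain ⟨j, hj, rfl⟩ := List.mem_iff_getElem.1 hy
  have hrot : c.rotate j = c.drop j ++ c.take j := List.rotate_eq_drop_append_take hj.le
  have hperm : (c.rotate j).Perm c := List.rotate_perm c j
  have hclen : 0 < c.length := List.length_pos_iff.2 hne
  have hdne : c.drop j ≠ [] := by
    apply List.ne_nil_of_length_pos; rw [List.length_drop]; omega
  have hsplit := List.isChain_append.1 (by rw [List.take_append_drop]; exact hch :
    List.Chain' G.Adj (c.take j ++ c.drop j))
  have hchrot : (c.rotate j).Chain' G.Adj := by
    rw [hrot, List.Chain', List.isChain_append]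
    refine ⟨hsplit.2.1, hsplit.1, ?_⟩
    intro a ha b hb
    rw [List.getLast?_drop, if_neg (by omega)] at ha
    rw [List.getLast?_eq_getLast hne] at ha
    have htne : c.take j ≠ [] := by
      rcases Nat.eq_zero_or_pos j with hj0 | hj0
      · exfalso; rw [hj0] at hb; simp at hb
      · apply List.ne_nil_of_length_pos; rw [List.length_take]; omega
    rw [List.head?_eq_head htne, List.head_eq_getElem] at hb
    simp only [Option.mem_def, Option.some_inj] at ha hb
    subst ha; subst hb
    rw [List.getElem_take, ← List.head_eq_getElem hne]
    exact hcyc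
  have hrotne : c.rotate j ≠ [] := by
    apply List.ne_nil_of_length_pos; rw [List.length_rotate]; omega
  have hheadrot : (c.rotate j).head? = some (c.get ⟨j, hj⟩) := by
    rw [hrot, List.head?_append, List.head?_drop, List.getElem?_eq_getElem hj]
    rfl
  refine ⟨x :: c.rotate j, ?_, ?_, ?_, ?_⟩
  · exact List.nodup_cons.2 ⟨fun h => hx (hperm.mem_iff.1 h), hperm.nodup_iff.2 hnd⟩
  · rw [List.Chain', List.isChain_cons]
    refine ⟨?_, hchrot⟩
    intro z hz
    rw [hheadrot] at hz
    simp only [Option.mem_def, Option.some_inj] at hz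
    subst hz; exact hxy
  · simp [List.length_rotate]
  · intro z hz
    rcases List.mem_cons.1 hz with rfl | hz
    · exact Or.inr rfl
    · exact Or.inl (hperm.mem_iff.1 hz)

lemma maximal_nbr {s : Finset V} {l : List V} (hne : l ≠ []) (hnd : l.Nodup)
    (hch : l.Chain' G.Adj) (hmem : ∀ x ∈ l, x ∈ s)
    (hmax : ∀ l' : List V, l'.Nodup → l'.Chain' G.Adj → (∀ x ∈ l', x ∈ s) →
      l'.length ≤ l.length)
    {x : V} (hx : x ∈ s) (hadj : G.Adj x (l.head hne)) : x ∈ l := by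
  by_contra hxl
  have h1 : (x :: l).Nodup := List.nodup_cons.2 ⟨hxl, hnd⟩
  have h2 : (x :: l).Chain' G.Adj := by
    rw [List.Chain', List.isChain_cons]
    refine ⟨?_, hch⟩
    intro z hz
    rw [List.head?_eq_head hne] at hz
    simp only [Option.mem_def, Option.some_inj] at hz
    subst hz; exact hadj
  have h3 : ∀ z ∈ x :: l, z ∈ s := by
    intro z hz
    rcases List.mem_cons.1 hz with rfl | hz
    · exact hx
    · exact hmem z hz
  have := hmax _ h1 h2 h3
  simp at this

theorem EG (r : ℕ) (hr : 2 ≤ r) : ∀ (N : ℕ) (s : Finset V), s.card ≤ N → Frees G s r →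
    (∑ v ∈ s, ds G s v) ≤ s.card * (r - 1) ∧
    ((∑ v ∈ s, ds G s v) = s.card * (r - 1) → ExtS G s r) := by
  intro N
  induction N with
  | zero =>
    intro s hs _
    have hse : s = ∅ := Finset.card_eq_zero.1 (Nat.le_zero.1 hs)
    subst hse
    exact ⟨by simp, fun _ => ⟨fun v hv => absurd hv (by simp), fun v hv => absurd hv (by simp)⟩⟩
  | succ N ih =>
    intro s hsN hfree
    by_cases hconn : ∀ v ∈ s, ∀ w ∈ s, Rs G s v w
    case neg =>
      push_neg at hconn
      obtain ⟨v₀, hv₀, w₀, hw₀, hnr⟩ := hconn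
      set c := comp G s v₀ with hcdef
      set d := s \ c with hddef
      have hcs : c ⊆ s := Finset.filter_subset _ _
      have hcc : Closed (G := G) s c := comp_closed hv₀
      have hdc : Closed (G := G) s d := sdiff_closed hcc
      have hv₀c : v₀ ∈ c := mem_comp_self hv₀
      have hw₀d : w₀ ∈ d := Finset.mem_sdiff.2 ⟨hw₀, fun h => hnr (mem_comp.1 h).2⟩
      have hccard : c.card < s.card :=
        Finset.card_lt_card ⟨hcs, fun hsc => (Finset.mem_sdiff.1 hw₀d).2 (hsc hw₀)⟩
      have hdcard : d.card < s.card :=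
        Finset.card_lt_card ⟨Finset.sdiff_subset, fun hsd => (Finset.mem_sdiff.1 (hsd hv₀)).2 hv₀c⟩
      have hcd : d.card + c.card = s.card := Finset.card_sdiff_add_card_eq_card hcs
      have hsum : ∑ v ∈ s, ds G s v = (∑ v ∈ d, ds G d v) + (∑ v ∈ c, ds G c v) := by
        rw [← Finset.sum_sdiff hcs]
        congr 1
        · exact Finset.sum_congr rfl (fun v hv => (ds_closed_eq hdc hv).symm)
        · exact Finset.sum_congr rfl (fun v hv => (ds_closed_eq hcc hv).symm)
      have IHc := ih c (by omega) (hfree.mono hcs)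
      have IHd := ih d (by omega) (hfree.mono Finset.sdiff_subset)
      have e1 : s.card * (r-1) = d.card * (r-1) + c.card * (r-1) := by
        rw [← Nat.add_mul, hcd]
      constructor
      · rw [hsum, e1]
        exact Nat.add_le_add IHd.1 IHc.1
      · intro heq
        rw [hsum] at heq
        have key : ∀ (a b A B : ℕ), a ≤ A → b ≤ B → a + b = A + B → a = A ∧ b = B := by
          intros; omega
        obtain ⟨hd1, hc1⟩ := key _ _ _ _ IHd.1 IHc.1 (by rw [heq, e1])
        have Ed := IHd.2 hd1
        have Ec := IHc.2 hc1
        constructor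
        · intro v hv w hw hrs hvw
          by_cases hvc : v ∈ c
          · obtain ⟨hwc, hrc⟩ := hcc.trap hvc hrs
            exact Ec.1 v hvc w hwc hrc hvw
          · have hvd : v ∈ d := Finset.mem_sdiff.2 ⟨hv, hvc⟩
            obtain ⟨hwd, hrd⟩ := hdc.trap hvd hrs
            exact Ed.1 v hvd w hwd hrd hvw
        · intro v hv
          by_cases hvc : v ∈ c
          · have hcomp : comp G s v = comp G c v := by
              ext w
              simp only [mem_comp]
              constructor
              · rintro ⟨hws, hrs⟩
                obtain ⟨hwc, hrc⟩ := hcc.trap hvc hrs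
                exact ⟨hwc, hrc⟩
              · rintro ⟨hwc, hrc⟩
                exact ⟨hcs hwc, hrc.mono hcs⟩
            rw [hcomp]
            exact Ec.2 v hvc
          · have hvd : v ∈ d := Finset.mem_sdiff.2 ⟨hv, hvc⟩
            have hcomp : comp G s v = comp G d v := by
              ext w
              simp only [mem_comp]
              constructor
              · rintro ⟨hws, hrs⟩
                obtain ⟨hwd, hrd⟩ := hdc.trap hvd hrs
                exact ⟨hwd, hrd⟩
              · rintro ⟨hwd, hrd⟩
                exact ⟨Finset.sdiff_subset hwd, hrd.mono Finset.sdiff_subset⟩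
            rw [hcomp]
            exact Ed.2 v hvd
    case pos =>
      rcases Finset.eq_empty_or_nonempty s with rfl | hsne
      · exact ⟨by simp, fun _ => ⟨fun v hv => absurd hv (by simp), fun v hv => absurd hv (by simp)⟩⟩
      have hpos : 0 < s.card := Finset.card_pos.2 hsne
      by_cases hcard : s.card ≤ r
      · -- small connected component
        have hds : ∀ v ∈ s, ds G s v ≤ s.card - 1 := fun v hv => ds_le_card_pred hv
        have hb : ∑ v ∈ s, ds G s v ≤ s.card * (s.card - 1) := by
          have := Finset.sum_le_card_nsmul s (fun v => ds G s v) (s.card - 1) hds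
          simpa [smul_eq_mul] using this
        constructor
        · exact hb.trans (Nat.mul_le_mul_left _ (Nat.sub_le_sub_right hcard 1))
        · intro heq
          have hrs : r ≤ s.card := by
            have h1 : s.card * (r-1) ≤ s.card * (s.card - 1) := heq ▸ hb
            have h2 : r - 1 ≤ s.card - 1 := Nat.le_of_mul_le_mul_left h1 hpos
            omega
          have hseq : s.card = r := le_antisymm hcard hrs
          have hallds : ∀ v ∈ s, ds G s v = s.card - 1 := by
            by_contra hex
            push_neg at hex
            obtain ⟨v₀, hv₀, hne0⟩ := hex
            have hlt : ∑ v ∈ s, ds G s v < ∑ v ∈ s, (s.card - 1) :=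
              Finset.sum_lt_sum hds ⟨v₀, hv₀, lt_of_le_of_ne (hds v₀ hv₀) hne0⟩
            rw [Finset.sum_const, smul_eq_mul] at hlt
            rw [heq, hseq] at hlt
            exact lt_irrefl _ hlt
          have hadjall : ∀ v ∈ s, ∀ w ∈ s, w ≠ v → G.Adj v w := by
            intro v hv w hw hwv
            have hfil : s.filter (fun w => G.Adj v w) = s.erase v := by
              apply Finset.eq_of_subset_of_card_le
              · intro z hz
                rw [Finset.mem_filter] at hz
                exact Finset.mem_erase.2 ⟨fun h => G.irrefl (h ▸ hz.2), hz.1⟩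
              · rw [Finset.card_erase_of_mem hv]
                exact le_of_eq (hallds v hv).symm
            have hwf : w ∈ s.filter (fun w => G.Adj v w) := by
              rw [hfil]; exact Finset.mem_erase.2 ⟨hwv, hw⟩
            exact (Finset.mem_filter.1 hwf).2
          refine ⟨fun v hv w hw _ hvw => hadjall v hv w hw (Ne.symm hvw), fun v hv => ?_⟩
          have hcomp : comp G s v = s := by
            apply Finset.Subset.antisymm (Finset.filter_subset _ _)
            intro w hw
            exact mem_comp.2 ⟨hw, hconn v hv w hw⟩
          rw [hcomp, hseq]
      · -- big connected: longest path argument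
        have hrs : r < s.card := not_le.1 hcard
        classical
        set P : ℕ → Prop := fun k => ∃ l : List V, l.Nodup ∧ l.Chain' G.Adj ∧
          (∀ x ∈ l, x ∈ s) ∧ l.length = k with hPdef
        obtain ⟨v₁, hv₁⟩ := hsne
        have hP1 : P 1 := ⟨[v₁], by simp, List.isChain_singleton _, by simpa using hv₁, rfl⟩
        set L := Nat.findGreatest P r with hLdef
        have hL1 : 1 ≤ L := Nat.le_findGreatest (by omega) hP1
        have hPL : P L := Nat.findGreatest_spec (m := 1) (by omega) hP1
        have hLr : L ≤ r := Nat.findGreatest_le r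
        have hmaxlen : ∀ l' : List V, l'.Nodup → l'.Chain' G.Adj → (∀ x ∈ l', x ∈ s) →
            l'.length ≤ L := by
          intro l' h1 h2 h3
          by_contra hgt
          push_neg at hgt
          have hler : l'.length ≤ r := hfree l' h1 h2 h3
          exact Nat.findGreatest_is_greatest hgt hler ⟨l', h1, h2, h3, rfl⟩
        obtain ⟨l, hnd, hch, hmem, hlen⟩ := hPL
        have hL2 : 2 ≤ L := by
          obtain ⟨a, ha, b, hb, hab⟩ := Finset.one_lt_card.1 (by omega : 1 < s.card)
          obtain ⟨a', b', hadj, ha', hb'⟩ := exists_edge (hconn a ha b hb) hab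
          have hP2 : P 2 := ⟨[a', b'], by simp [hadj.ne], List.isChain_pair.2 hadj,
            by intro x hx; rcases List.mem_cons.1 hx with rfl | hx
               · exact ha'
               · simp at hx; subst hx; exact hb', rfl⟩
          exact Nat.le_findGreatest (by omega) hP2
        have hlne : l ≠ [] := List.ne_nil_of_length_pos (by omega)
        set u := l.head hlne with hu
        set w := l.getLast hlne with hw
        have hus : u ∈ s := hmem _ (List.head_mem hlne)
        have hws : w ∈ s := hmem _ (List.getLast_mem hlne)
        have hmaxlen' : ∀ l' : List V, l'.Nodup → l'.Chain' G.Adj → (∀ x ∈ l', x ∈ s) →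
            l'.length ≤ l.length := by
          intro l' a b cc; rw [hlen]; exact hmaxlen l' a b cc
        have hnbru : ∀ x ∈ s, G.Adj x u → x ∈ l := fun x hx hadj =>
          maximal_nbr hlne hnd hch hmem hmaxlen' hx hadj
        have hlrne : l.reverse ≠ [] := by simp [hlne]
        have hnbrw : ∀ x ∈ s, G.Adj x w → x ∈ l := by
          intro x hx hadj
          have hndr : l.reverse.Nodup := List.nodup_reverse.2 hnd
          have hchr : l.reverse.Chain' G.Adj := by
            rw [List.Chain', List.isChain_reverse]
            exact hch.imp (fun _ _ hab => hab.symm)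
          have hmemr : ∀ z ∈ l.reverse, z ∈ s := fun z hz => hmem z (List.mem_reverse.1 hz)
          have hmaxr : ∀ l' : List V, l'.Nodup → l'.Chain' G.Adj → (∀ z ∈ l', z ∈ s) →
              l'.length ≤ l.reverse.length := by
            intro l' a b cc; rw [List.length_reverse, hlen]; exact hmaxlen l' a b cc
          have hhr : l.reverse.head hlrne = w := List.head_reverse _
          have := maximal_nbr hlrne hndr hchr hmemr hmaxr hx (by rw [hhr]; exact hadj)
          exact List.mem_reverse.1 this
        -- the crossing argument
        have hcross : ∀ i : ℕ, i + 1 < L →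
            ¬(G.Adj u (l.getD (i+1) u) ∧ G.Adj w (l.getD i u)) := by
          rintro i hiL ⟨hu1, hw1⟩
          have hilen : i + 1 < l.length := by omega
          have hi0 : i < l.length := by omega
          rw [List.getD_eq_getElem l u hilen] at hu1
          rw [List.getD_eq_getElem l u hi0] at hw1
          set cl : List V := l.take (i+1) ++ (l.drop (i+1)).reverse with hcldef
          have hclperm : cl.Perm l := by
            have h1 : cl.Perm (l.take (i+1) ++ l.drop (i+1)) :=
              List.Perm.append_left _ (List.reverse_perm _)
            rwa [List.take_append_drop] at h1
          have hclnd : cl.Nodup := hclperm.nodup_iff.2 hnd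
          have hcllen : cl.length = l.length := hclperm.length_eq
          have htne : l.take (i+1) ≠ [] :=
            List.ne_nil_of_length_pos (by rw [List.length_take]; omega)
          have hdne2 : l.drop (i+1) ≠ [] :=
            List.ne_nil_of_length_pos (by rw [List.length_drop]; omega)
          have hdrne : (l.drop (i+1)).reverse ≠ [] := by simp [hdne2]
          have hclne : cl ≠ [] := List.ne_nil_of_length_pos (by rw [hcllen]; omega)
          have hsplit := List.isChain_append.1
            (by rw [List.take_append_drop]; exact hch :
              List.Chain' G.Adj (l.take (i+1) ++ l.drop (i+1)))
          have hchcl : cl.Chain' G.Adj := by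
            rw [hcldef, List.Chain', List.isChain_append]
            refine ⟨hsplit.1, by rw [List.isChain_reverse]; exact hsplit.2.1.imp (fun _ _ hab => hab.symm), ?_⟩
            intro a ha b hb
            rw [List.getLast?_eq_getLast htne] at ha
            rw [List.head?_reverse, List.getLast?_drop, if_neg (by omega)] at hb
            rw [List.getLast?_eq_getLast hlne] at hb
            simp only [Option.mem_def, Option.some_inj] at ha hb
            subst ha; subst hb
            have hgl : (l.take (i+1)).getLast htne = l[i]'hi0 := by
              rw [List.getLast_eq_getElem]
              have hlt : (l.take (i+1)).length - 1 < (l.take (i+1)).length := by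
                rw [List.length_take]; omega
              rw [List.getElem_take]
              congr 1
              rw [List.length_take]; omega
            rw [hgl]
            exact hw1.symm
          have hheadcl : cl.head hclne = u := by
            have e : cl.head hclne = (l.take (i+1)).head htne := by
              show (l.take (i+1) ++ (l.drop (i+1)).reverse).head hclne = _
              rw [List.head_append]
              exact dif_neg (by simpa using htne)
            have e2 : (l.take (i+1)).head htne = l.head hlne := by
              rw [List.head_eq_getElem, List.head_eq_getElem, List.getElem_take]
            rw [e, e2]
          have hlastcl : cl.getLast hclne = l[i+1]'hilen := by
            have e : cl.getLast hclne = ((l.drop (i+1)).reverse).getLast hdrne := by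
              show (l.take (i+1) ++ (l.drop (i+1)).reverse).getLast hclne = _
              rw [List.getLast_append]
              exact dif_neg (by simpa using hdrne)
            have e2 : ((l.drop (i+1)).reverse).getLast hdrne = (l.drop (i+1)).head hdne2 :=
              List.getLast_reverse _
            rw [e, e2, List.head_eq_getElem, List.getElem_drop]
          have hcyc : G.Adj (cl.getLast hclne) (cl.head hclne) := by
            rw [hlastcl, hheadcl]
            exact hu1.symm
          have hltoF : l.toFinset ⊆ s := fun z hz => hmem z (List.mem_toFinset.1 hz)
          have hcardlt : l.toFinset.card < s.card := by
            rw [List.toFinset_card_of_nodup hnd, hlen]; omega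
          have hssub : l.toFinset ⊂ s :=
            hltoF.ssubset_of_ne (fun h => by rw [h] at hcardlt; omega)
          obtain ⟨z, hzs, hzl⟩ := Finset.exists_of_ssubset hssub
          have hznl : z ∉ l := fun h => hzl (List.mem_toFinset.2 h)
          obtain ⟨a, b, hal, hbl, hab, has, hbs⟩ :=
            exists_boundary (hconn u hus z hzs) (· ∈ l) (List.head_mem hlne) hznl
          have hacl : a ∈ cl := hclperm.mem_iff.2 hal
          have hbcl : b ∉ cl := fun h => hbl (hclperm.mem_iff.1 h)
          obtain ⟨m, hm1, hm2, hm3, hm4⟩ := cycle_extend hclne hchcl hclnd hcyc hbcl hacl hab.symm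
          have hms : ∀ zz ∈ m, zz ∈ s := by
            intro zz hzz
            rcases hm4 zz hzz with h | rfl
            · exact hmem _ (hclperm.mem_iff.1 h)
            · exact hbs
          have hcon := hmaxlen m hm1 hm2 hms
          rw [hm3, hcllen, hlen] at hcon
          omega
        -- counting
        set Au := (Finset.range (L-1)).filter (fun i => G.Adj u (l.getD (i+1) u)) with hAudef
        set Bw := (Finset.range (L-1)).filter (fun i => G.Adj w (l.getD i u)) with hBwdef
        have hAucard : Au.card = ds G s u := by
          apply Finset.card_bij (fun i _ => l.getD (i+1) u)
          · intro i hi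
            rw [hAudef, Finset.mem_filter, Finset.mem_range] at hi
            have hii : i + 1 < l.length := by omega
            rw [Finset.mem_filter, List.getD_eq_getElem l u hii]
            refine ⟨hmem _ (List.getElem_mem hii), ?_⟩
            rw [← List.getD_eq_getElem l u hii]
            exact hi.2
          · intro i1 hi1 i2 hi2 hgg
            rw [hAudef, Finset.mem_filter, Finset.mem_range] at hi1 hi2
            have h1 : i1 + 1 < l.length := by omega
            have h2 : i2 + 1 < l.length := by omega
            rw [List.getD_eq_getElem l u h1, List.getD_eq_getElem l u h2] at hgg
            have := (hnd.getElem_inj_iff).1 hgg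
            omega
          · intro y hy
            rw [Finset.mem_filter] at hy
            have hyl : y ∈ l := hnbru y hy.1 hy.2.symm
            obtain ⟨k, hk, rfl⟩ := List.mem_iff_getElem.1 hyl
            have hk0 : k ≠ 0 := by
              intro h
              subst h
              have he : l[0] = u := (List.head_eq_getElem hlne).symm
              rw [he] at hy
              exact G.irrefl hy.2
            have hk1 : k - 1 + 1 = k := by omega
            refine ⟨k-1, ?_, ?_⟩
            · rw [hAudef, Finset.mem_filter, Finset.mem_range]
              constructor
              · omega
              · rw [hk1, List.getD_eq_getElem l u hk]
                exact hy.2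
            · rw [hk1, List.getD_eq_getElem l u hk]
        have hBwcard : Bw.card = ds G s w := by
          apply Finset.card_bij (fun i _ => l.getD i u)
          · intro i hi
            rw [hBwdef, Finset.mem_filter, Finset.mem_range] at hi
            have hii : i < l.length := by omega
            rw [Finset.mem_filter, List.getD_eq_getElem l u hii]
            refine ⟨hmem _ (List.getElem_mem hii), ?_⟩
            rw [← List.getD_eq_getElem l u hii]
            exact hi.2
          · intro i1 hi1 i2 hi2 hgg
            rw [hBwdef, Finset.mem_filter, Finset.mem_range] at hi1 hi2
            have h1 : i1 < l.length := by omega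
            have h2 : i2 < l.length := by omega
            rw [List.getD_eq_getElem l u h1, List.getD_eq_getElem l u h2] at hgg
            exact (hnd.getElem_inj_iff).1 hgg
          · intro y hy
            rw [Finset.mem_filter] at hy
            have hyl : y ∈ l := hnbrw y hy.1 hy.2.symm
            obtain ⟨k, hk, rfl⟩ := List.mem_iff_getElem.1 hyl
            have hkL : k ≠ l.length - 1 := by
              intro h
              subst h
              have he : l[l.length - 1] = w := (List.getLast_eq_getElem hlne).symm
              rw [he] at hy
              exact G.irrefl hy.2
            refine ⟨k, ?_, ?_⟩
            · rw [hBwdef, Finset.mem_filter, Finset.mem_range]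
              refine ⟨by omega, ?_⟩
              rw [List.getD_eq_getElem l u hk]
              exact hy.2
            · rw [List.getD_eq_getElem l u hk]
        have hdisj : Disjoint Au Bw := by
          rw [Finset.disjoint_left]
          intro i hiA hiB
          rw [hAudef, Finset.mem_filter, Finset.mem_range] at hiA
          rw [hBwdef, Finset.mem_filter] at hiB
          exact hcross i (by omega) ⟨hiA.2, hiB.2⟩
        have hsum2 : ds G s u + ds G s w ≤ r - 1 := by
          have h1 : Au.card + Bw.card ≤ L - 1 := by
            rw [← Finset.card_union_of_disjoint hdisj]
            calc (Au ∪ Bw).card ≤ (Finset.range (L-1)).card :=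
                  Finset.card_le_card (Finset.union_subset (Finset.filter_subset _ _)
                    (Finset.filter_subset _ _))
            _ = L - 1 := Finset.card_range _
          rw [← hAucard, ← hBwcard]
          omega
        obtain ⟨v, hvs, hv2⟩ : ∃ v, v ∈ s ∧ 2 * ds G s v ≤ r - 1 := by
          rcases le_total (ds G s u) (ds G s w) with h | h
          · exact ⟨u, hus, by omega⟩
          · exact ⟨w, hws, by omega⟩
        set s' := s.erase v with hs'def
        have hvss : s' ⊆ s := Finset.erase_subset _ _
        have hs'card : s'.card = s.card - 1 := Finset.card_erase_of_mem hvs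
        have IH' := ih s' (by omega) (hfree.mono hvss)
        have hds_split : ∀ x ∈ s', ds G s x = ds G s' x + (if G.Adj x v then 1 else 0) := by
          intro x hx
          show (s.filter (fun w => G.Adj x w)).card = _
          conv_lhs => rw [← Finset.insert_erase hvs]
          rw [Finset.filter_insert]
          by_cases hadj : G.Adj x v
          · rw [if_pos hadj, if_pos hadj,
              Finset.card_insert_of_notMem (fun hmem' =>
                Finset.notMem_erase v s (Finset.mem_of_mem_filter _ hmem'))]
            rfl
          · rw [if_neg hadj, if_neg hadj, Nat.add_zero]
            rfl
        have hsum3 : ∑ x ∈ s, ds G s x = (∑ x ∈ s', ds G s' x) + 2 * ds G s v := by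
          have e0 : (∑ x ∈ s', ds G s x) + ds G s v = ∑ x ∈ s, ds G s x :=
            Finset.sum_erase_add s _ hvs
          have e1 : ∑ x ∈ s', ds G s x
              = ∑ x ∈ s', (ds G s' x + if G.Adj x v then 1 else 0) :=
            Finset.sum_congr rfl hds_split
          have e2 : ∑ x ∈ s', (ds G s' x + if G.Adj x v then 1 else 0)
              = (∑ x ∈ s', ds G s' x) + ∑ x ∈ s', (if G.Adj x v then 1 else 0) :=
            Finset.sum_add_distrib
          have e3 : (∑ x ∈ s', (if G.Adj x v then 1 else 0)) 
              = (s'.filter (fun x => G.Adj x v)).card := (Finset.card_filter _ _).symm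
          have e4 : s'.filter (fun x => G.Adj x v) = s.filter (fun y => G.Adj v y) := by
            ext y
            simp only [hs'def, Finset.mem_filter, Finset.mem_erase]
            constructor
            · rintro ⟨⟨hyv, hys⟩, hadj⟩
              exact ⟨hys, hadj.symm⟩
            · rintro ⟨hys, hadj⟩
              exact ⟨⟨fun h => G.irrefl (h ▸ hadj), hys⟩, hadj.symm⟩
          have e5 : (s.filter (fun y => G.Adj v y)).card = ds G s v := rfl
          rw [e4] at e3
          omega
        have hprod : s.card * (r-1) = (s.card - 1) * (r-1) + (r-1) := by
          have hc1 : s.card - 1 + 1 = s.card := by omega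
          calc s.card * (r-1) = (s.card - 1 + 1) * (r-1) := by rw [hc1]
          _ = (s.card - 1) * (r-1) + 1 * (r-1) := by rw [Nat.add_mul]
          _ = (s.card - 1) * (r-1) + (r-1) := by rw [Nat.one_mul]
        have hIH1 : ∑ x ∈ s', ds G s' x ≤ (s.card - 1) * (r - 1) := by
          have := IH'.1
          rwa [hs'card] at this
        constructor
        · rw [hsum3]
          omega
        · intro heq
          rw [hsum3] at heq
          have heq1 : ∑ x ∈ s', ds G s' x = s'.card * (r-1) := by
            rw [hs'card]; omega
          have hEx' := IH'.2 heq1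
          have hdv : 2 * ds G s v = r - 1 := by omega
          have hdvpos : 0 < ds G s v := by omega
          have hfpos : 0 < (s.filter (fun w => G.Adj v w)).card := hdvpos
          obtain ⟨y, hy⟩ := Finset.card_pos.1 hfpos
          rw [Finset.mem_filter] at hy
          have hyv : y ≠ v := fun h => G.irrefl (h ▸ hy.2)
          have hys' : y ∈ s' := Finset.mem_erase.2 ⟨hyv, hy.1⟩
          set cy := comp G s' y with hcydef
          have hcycard : cy.card = r := hEx'.2 y hys'
          have hcys' : cy ⊆ s' := Finset.filter_subset _ _
          have hadjcy : ∀ x₁ ∈ cy, ∀ x₂ ∈ cy, x₁ ≠ x₂ → G.Adj x₁ x₂ := by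
            intro x₁ h₁ x₂ h₂ hne12
            have r1 := (mem_comp.1 h₁).2
            have r2 := (mem_comp.1 h₂).2
            exact hEx'.1 x₁ (hcys' h₁) x₂ (hcys' h₂) (r1.symm.trans r2) hne12
          have hycy : y ∈ cy := mem_comp_self hys'
          set l₀ : List V := y :: (cy.erase y).toList with hl₀def
          have hl₀mem : ∀ x ∈ l₀, x ∈ cy := by
            intro x hx
            rcases List.mem_cons.1 hx with rfl | hx
            · exact hycy
            · exact Finset.mem_of_mem_erase (Finset.mem_toList.1 hx)
          have hl₀nd : l₀.Nodup := List.nodup_cons.2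
            ⟨fun h => (Finset.mem_erase.1 (Finset.mem_toList.1 h)).1 rfl, Finset.nodup_toList _⟩
          have hl₀ch : l₀.Chain' G.Adj := by
            apply List.Pairwise.isChain
            exact List.Pairwise.imp_of_mem
              (fun ha hb hne => hadjcy _ (hl₀mem _ ha) _ (hl₀mem _ hb) hne) hl₀nd
          have hmnd : (v :: l₀).Nodup := List.nodup_cons.2
            ⟨fun h => Finset.notMem_erase v s (hcys' (hl₀mem _ h)), hl₀nd⟩
          have hmch : (v :: l₀).Chain' G.Adj := by
            rw [hl₀def, List.Chain', List.isChain_cons_cons]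
            exact ⟨hy.2, hl₀ch⟩
          have hmmem : ∀ x ∈ v :: l₀, x ∈ s := by
            intro x hx
            rcases List.mem_cons.1 hx with rfl | hx
            · exact hvs
            · exact hvss (hcys' (hl₀mem _ hx))
          have hmlen : (v :: l₀).length = r + 1 := by
            have : (cy.erase y).card = r - 1 := by
              rw [Finset.card_erase_of_mem hycy, hcycard]
            simp only [hl₀def, List.length_cons, Finset.length_toList, this]
            omega
          have := hfree _ hmnd hmch hmmem
          rw [hmlen] at this
          omega

lemma cliFin_mem {s : Finset V} {k : ℕ} {q : Finset V} :
    q ∈ cliFin G s k ↔ q ⊆ s ∧ q.card = k ∧ ∀ a ∈ q, ∀ b ∈ q, a ≠ b → G.Adj a b := by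
  unfold cliFin
  rw [Finset.mem_filter, Finset.mem_powersetCard]
  tauto

lemma sum_cliq (s : Finset V) (k : ℕ) :
    ∑ v ∈ s, ((cliFin G s k).filter (fun q => v ∈ q)).card = k * (cliFin G s k).card := by
  have e1 : ∀ v, ((cliFin G s k).filter (fun q => v ∈ q)).card
      = ∑ q ∈ cliFin G s k, if v ∈ q then 1 else 0 := fun v => Finset.card_filter _ _
  calc ∑ v ∈ s, ((cliFin G s k).filter (fun q => v ∈ q)).card
      = ∑ v ∈ s, ∑ q ∈ cliFin G s k, if v ∈ q then 1 else 0 := Finset.sum_congr rfl (fun v _ => e1 v)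
    _ = ∑ q ∈ cliFin G s k, ∑ v ∈ s, if v ∈ q then 1 else 0 := Finset.sum_comm
    _ = ∑ q ∈ cliFin G s k, (s.filter (fun v => v ∈ q)).card :=
        Finset.sum_congr rfl (fun q _ => (Finset.card_filter _ _).symm)
    _ = ∑ q ∈ cliFin G s k, k := by
        apply Finset.sum_congr rfl
        intro q hq
        obtain ⟨hqs, hqc, -⟩ := cliFin_mem.1 hq
        have : s.filter (fun v => v ∈ q) = q := by
          rw [Finset.filter_mem_eq_inter]
          exact Finset.inter_eq_right.2 hqs
        rw [this, hqc]
    _ = k * (cliFin G s k).card := by rw [Finset.sum_const, smul_eq_mul, Nat.mul_comm]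

lemma cliq_erase {s : Finset V} {k : ℕ} (hk : 1 ≤ k) {v : V} (hv : v ∈ s) :
    ((cliFin G s k).filter (fun q => v ∈ q)).card
      = (cliFin G (s.filter (fun w => G.Adj v w)) (k-1)).card := by
  apply Finset.card_bij (fun q _ => q.erase v)
  · intro q hq
    rw [Finset.mem_filter] at hq
    obtain ⟨hqs, hqc, hqa⟩ := cliFin_mem.1 hq.1
    rw [cliFin_mem]
    refine ⟨?_, ?_, ?_⟩
    · intro x hx
      rw [Finset.mem_erase] at hx
      rw [Finset.mem_filter]
      exact ⟨hqs hx.2, hqa v hq.2 x hx.2 (Ne.symm hx.1)⟩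
    · rw [Finset.card_erase_of_mem hq.2, hqc]
    · intro a ha b hb hab
      exact hqa a (Finset.mem_of_mem_erase ha) b (Finset.mem_of_mem_erase hb) hab
  · intro q1 hq1 q2 hq2 hee
    rw [Finset.mem_filter] at hq1 hq2
    rw [← Finset.insert_erase hq1.2, hee, Finset.insert_erase hq2.2]
  · intro q' hq'
    obtain ⟨hq's, hq'c, hq'a⟩ := cliFin_mem.1 hq'
    have hvq' : v ∉ q' := fun h => G.irrefl (Finset.mem_filter.1 (hq's h)).2
    refine ⟨insert v q', ?_, ?_⟩
    · rw [Finset.mem_filter]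
      refine ⟨cliFin_mem.2 ⟨?_, ?_, ?_⟩, Finset.mem_insert_self _ _⟩
      · intro x hx
        rcases Finset.mem_insert.1 hx with rfl | hx
        · exact hv
        · exact Finset.mem_of_mem_filter _ (hq's hx)
      · rw [Finset.card_insert_of_notMem hvq', hq'c]
        omega
      · intro a ha b hb hab
        rcases Finset.mem_insert.1 ha with ha' | ha'
        · rcases Finset.mem_insert.1 hb with hb' | hb'
          · exact absurd (ha'.trans hb'.symm) hab
          · rw [ha']
            exact (Finset.mem_filter.1 (hq's hb')).2
        · rcases Finset.mem_insert.1 hb with hb' | hb'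
          · rw [hb']
            exact (Finset.mem_filter.1 (hq's ha')).2.symm
          · exact hq'a a ha' b hb' hab
    · exact Finset.erase_insert hvq'

lemma cliFin_one (s : Finset V) : (cliFin G s 1).card = s.card := by
  have : cliFin G s 1 = s.powersetCard 1 := by
    unfold cliFin
    apply Finset.filter_true_of_mem
    intro q hq
    rw [Finset.mem_powersetCard] at hq
    intro a ha b hb hab
    obtain ⟨x, hx⟩ := Finset.card_eq_one.1 hq.2
    subst hx
    rw [Finset.mem_singleton] at ha hb
    exact absurd (ha.trans hb.symm) hab
  rw [this, Finset.card_powersetCard, Nat.choose_one_right]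

lemma frees_nbhd {s : Finset V} {m : ℕ} (h : Frees G s m) {v : V} (hv : v ∈ s) :
    Frees G (s.filter (fun w => G.Adj v w)) (m - 1) := by
  intro l hnd hch hmem
  have hvl : v ∉ l := fun hin => G.irrefl (Finset.mem_filter.1 (hmem v hin)).2
  have h1 : (v :: l).Nodup := List.nodup_cons.2 ⟨hvl, hnd⟩
  have h2 : (v :: l).Chain' G.Adj := by
    rw [List.Chain', List.isChain_cons]
    refine ⟨?_, hch⟩
    intro y hy
    rcases l with - | ⟨a, l'⟩
    · simp at hy
    · simp only [List.head?_cons, Option.mem_def, Option.some_inj] at hy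
      subst hy
      exact (Finset.mem_filter.1 (hmem a List.mem_cons_self)).2
  have h3 : ∀ x ∈ v :: l, x ∈ s := by
    intro x hx
    rcases List.mem_cons.1 hx with rfl | hx
    · exact hv
    · exact Finset.mem_of_mem_filter _ (hmem x hx)
  have := h _ h1 h2 h3
  simp only [List.length_cons] at this
  omega

lemma choose_id {r t : ℕ} (h1 : 1 ≤ t) (h2 : t ≤ r) :
    t * r.choose t = r * (r-1).choose (t-1) := by
  have := Nat.add_one_mul_choose_eq (r-1) (t-1)
  have hr1 : r - 1 + 1 = r := by omega
  have ht1 : t - 1 + 1 = t := by omega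
  rw [hr1, ht1] at this
  rw [Nat.mul_comm t (r.choose t)]
  exact this.symm

theorem cliq_main : ∀ (k : ℕ) (t r : ℕ), t = k + 2 → t ≤ r → ∀ s : Finset V, Frees G s r →
    r * (cliFin G s t).card ≤ s.card * r.choose t ∧
    (r * (cliFin G s t).card = s.card * r.choose t →
      (∑ v ∈ s, ds G s v) = s.card * (r - 1)) := by
  intro k
  induction k with
  | zero =>
    intro t r ht htr s hfree
    subst ht
    have hr : 2 ≤ r := htr
    have hEG := (EG r hr s.card s le_rfl hfree).1
    have hsum : ∑ v ∈ s, ((cliFin G s 2).filter (fun q => v ∈ q)).card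
        = 2 * (cliFin G s 2).card := sum_cliq s 2
    have hterm : ∀ v ∈ s, ((cliFin G s 2).filter (fun q => v ∈ q)).card = ds G s v := by
      intro v hv
      rw [cliq_erase (by norm_num) hv]
      exact cliFin_one _
    have h2N : 2 * (cliFin G s 2).card = ∑ v ∈ s, ds G s v := by
      rw [← hsum]
      exact Finset.sum_congr rfl hterm
    have hid : 2 * r.choose 2 = r * (r-1) := by
      rw [choose_id (by norm_num) htr, Nat.choose_one_right]
    constructor
    · have hchain : 2 * (r * (cliFin G s 2).card) ≤ 2 * (s.card * r.choose 2) := by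
        calc 2 * (r * (cliFin G s 2).card) = r * (2 * (cliFin G s 2).card) := by ring
        _ = r * (∑ v ∈ s, ds G s v) := by rw [h2N]
        _ ≤ r * (s.card * (r-1)) := Nat.mul_le_mul_left r hEG
        _ = s.card * (r * (r-1)) := by ring
        _ = s.card * (2 * r.choose 2) := by rw [hid]
        _ = 2 * (s.card * r.choose 2) := by ring
      exact Nat.le_of_mul_le_mul_left hchain (by norm_num)
    · intro heq
      have hr0 : 0 < r := by omega
      have h1 : r * (2 * (cliFin G s 2).card) = r * (s.card * (r - 1)) := by
        calc r * (2 * (cliFin G s 2).card) = 2 * (r * (cliFin G s 2).card) := by ring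
        _ = 2 * (s.card * r.choose 2) := by rw [heq]
        _ = s.card * (2 * r.choose 2) := by ring
        _ = s.card * (r * (r-1)) := by rw [hid]
        _ = r * (s.card * (r-1)) := by ring
      have := Nat.eq_of_mul_eq_mul_left hr0 h1
      rw [← h2N]
      exact this
  | succ k ihk =>
    intro t r ht htr s hfree
    have ht3 : 3 ≤ t := by omega
    have hr3 : 3 ≤ r := le_trans ht3 htr
    have hr : 2 ≤ r := by omega
    have hEG := (EG r hr s.card s le_rfl hfree).1
    set N := (cliFin G s t).card with hN
    set C' := (r-1).choose (t-1) with hC'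
    have hsum : ∑ v ∈ s, ((cliFin G s t).filter (fun q => v ∈ q)).card = t * N := sum_cliq s t
    have hterm : ∀ v ∈ s, (r-1) * ((cliFin G s t).filter (fun q => v ∈ q)).card
        ≤ ds G s v * C' := by
      intro v hv
      rw [cliq_erase (by omega) hv]
      have hfree' : Frees G (s.filter (fun w => G.Adj v w)) (r-1) := frees_nbhd hfree hv
      have := (ihk (t-1) (r-1) (by omega) (by omega) _ hfree').1
      exact this
    have hstep : (r-1) * (t * N) ≤ s.card * (r-1) * C' := by
      calc (r-1) * (t * N) = (r-1) * ∑ v ∈ s, ((cliFin G s t).filter (fun q => v ∈ q)).card := by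
            rw [hsum]
        _ = ∑ v ∈ s, (r-1) * ((cliFin G s t).filter (fun q => v ∈ q)).card := by
            rw [Finset.mul_sum]
        _ ≤ ∑ v ∈ s, ds G s v * C' := Finset.sum_le_sum hterm
        _ = (∑ v ∈ s, ds G s v) * C' := by rw [Finset.sum_mul]
        _ ≤ s.card * (r-1) * C' := Nat.mul_le_mul_right C' hEG
    have hr1pos : 0 < r - 1 := by omega
    have htN : t * N ≤ s.card * C' := by
      apply Nat.le_of_mul_le_mul_left _ hr1pos
      calc (r-1) * (t * N) ≤ s.card * (r-1) * C' := hstep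
      _ = (r-1) * (s.card * C') := by ring
    have hid : t * r.choose t = r * C' := choose_id (by omega) htr
    constructor
    · have hchain : t * (r * N) ≤ t * (s.card * r.choose t) := by
        calc t * (r * N) = r * (t * N) := by ring
        _ ≤ r * (s.card * C') := Nat.mul_le_mul_left r htN
        _ = s.card * (r * C') := by ring
        _ = s.card * (t * r.choose t) := by rw [hid]
        _ = t * (s.card * r.choose t) := by ring
      exact Nat.le_of_mul_le_mul_left hchain (by omega)
    · intro heq
      have hr0 : 0 < r := by omega
      have htNeq : t * N = s.card * C' := by
        apply Nat.eq_of_mul_eq_mul_left hr0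
        calc r * (t * N) = t * (r * N) := by ring
        _ = t * (s.card * r.choose t) := by rw [heq]
        _ = s.card * (t * r.choose t) := by ring
        _ = s.card * (r * C') := by rw [hid]
        _ = r * (s.card * C') := by ring
      have hC'pos : 0 < C' := Nat.choose_pos (by omega)
      -- sandwich: (r-1)*(t*N) ≤ (∑ ds)*C' ≤ s.card*(r-1)*C' = (r-1)*(t*N)
      have hup : (∑ v ∈ s, ds G s v) * C' ≤ s.card * (r-1) * C' := Nat.mul_le_mul_right C' hEG
      have hlow : (r-1) * (t * N) ≤ (∑ v ∈ s, ds G s v) * C' := by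
        calc (r-1) * (t * N) = ∑ v ∈ s, (r-1) * ((cliFin G s t).filter (fun q => v ∈ q)).card := by
              rw [← Finset.mul_sum, hsum]
        _ ≤ ∑ v ∈ s, ds G s v * C' := Finset.sum_le_sum hterm
        _ = (∑ v ∈ s, ds G s v) * C' := by rw [Finset.sum_mul]
      have hendeq : (r-1) * (t * N) = s.card * (r-1) * C' := by
        rw [htNeq]; ring
      have hmid : (∑ v ∈ s, ds G s v) * C' = (s.card * (r-1)) * C' := by
        have h1 : (∑ v ∈ s, ds G s v) * C' ≤ s.card * (r-1) * C' := hup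
        have h2 : s.card * (r-1) * C' ≤ (∑ v ∈ s, ds G s v) * C' := by
          rw [← hendeq]; exact hlow
        omega
      exact Nat.eq_of_mul_eq_mul_right hC'pos hmid

def listSubgraph (G : SimpleGraph V) (l : List V) (hch : l.Chain' G.Adj) : G.Subgraph where
  verts := {x | x ∈ l}
  Adj x y := ∃ i : ℕ, ∃ h : i + 1 < l.length,
    ((x = l[i] ∧ y = l[i+1]) ∨ (y = l[i] ∧ x = l[i+1]))
  adj_sub := by
    rintro x y ⟨i, h, hc⟩
    have hadj : G.Adj (l[i]'(by omega)) (l[i+1]'h) := by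
      have := List.isChain_iff_getElem.1 hch i (by omega)
      simpa using this
    rcases hc with ⟨rfl, rfl⟩ | ⟨rfl, rfl⟩
    · exact hadj
    · exact hadj.symm
  edge_vert := by
    rintro x y ⟨i, h, hc⟩
    rcases hc with ⟨rfl, -⟩ | ⟨-, rfl⟩
    · exact List.getElem_mem _
    · exact List.getElem_mem _
  symm := by
    constructor
    rintro x y ⟨i, h, hc⟩
    exact ⟨i, h, hc.symm⟩

lemma exists_path_subgraph {l : List V} (hnd : l.Nodup) (hch : l.Chain' G.Adj) {n : ℕ}
    (hlen : l.length = n) :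
    ∃ S : G.Subgraph, Nonempty (S.coe ≃g SimpleGraph.pathGraph n) := by
  refine ⟨listSubgraph G l hch, ⟨?_⟩⟩
  have hl : ∀ i : Fin n, (i : ℕ) < l.length := fun i => by rw [hlen]; exact i.isLt
  let f : Fin n → ↥(listSubgraph G l hch).verts :=
    fun i => ⟨l[(i : ℕ)]'(hl i), List.getElem_mem _⟩
  have hbij : Function.Bijective f := by
    constructor
    · intro i j hij
      have h1 : l[(i:ℕ)]'(hl i) = l[(j:ℕ)]'(hl j) := congrArg Subtype.val hij
      exact Fin.ext ((hnd.getElem_inj_iff).1 h1)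
    · rintro ⟨x, hx⟩
      obtain ⟨k, hk, rfl⟩ := List.mem_iff_getElem.1 hx
      exact ⟨⟨k, by omega⟩, rfl⟩
  let e := Equiv.ofBijective f hbij
  have key : ∀ a b : Fin n,
      (listSubgraph G l hch).coe.Adj (e a) (e b) ↔ (SimpleGraph.pathGraph n).Adj a b := by
    intro a b
    show (listSubgraph G l hch).coe.Adj (f a) (f b) ↔ (SimpleGraph.pathGraph n).Adj a b
    rw [SimpleGraph.Subgraph.coe_adj]
    show (listSubgraph G l hch).Adj (l[(a:ℕ)]'(hl a)) (l[(b:ℕ)]'(hl b)) ↔ _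
    rw [SimpleGraph.pathGraph_adj]
    constructor
    · rintro ⟨i, h, ⟨h1, h2⟩ | ⟨h1, h2⟩⟩
      · have e1 : (a:ℕ) = i := (hnd.getElem_inj_iff).1 h1
        have e2 : (b:ℕ) = i+1 := (hnd.getElem_inj_iff).1 h2
        left; omega
      · have e1 : (b:ℕ) = i := (hnd.getElem_inj_iff).1 h1
        have e2 : (a:ℕ) = i+1 := (hnd.getElem_inj_iff).1 h2
        right; omega
    · intro hab
      rcases hab with h | h
      · have hb1 : (b:ℕ) < l.length := hl b
        refine ⟨(a:ℕ), by omega, Or.inl ⟨rfl, ?_⟩⟩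
        exact (hnd.getElem_inj_iff).2 (by omega)
      · have ha1 : (a:ℕ) < l.length := hl a
        refine ⟨(b:ℕ), by omega, Or.inr ⟨rfl, ?_⟩⟩
        exact (hnd.getElem_inj_iff).2 (by omega)
  have iso : SimpleGraph.pathGraph n ≃g (listSubgraph G l hch).coe :=
    { toEquiv := e, map_rel_iff' := fun {a b} => key a b }
  exact iso.symm

lemma frees_univ {r : ℕ}
    (hfree : ∀ S : G.Subgraph, IsEmpty (S.coe ≃g SimpleGraph.pathGraph (r + 1))) :
    Frees G (Finset.univ : Finset V) r := by
  intro l hnd hch _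
  by_contra hlong
  push_neg at hlong
  have h1 : (l.take (r+1)).Nodup := List.Nodup.sublist (List.take_sublist _ _) hnd
  have h2 : (l.take (r+1)).Chain' G.Adj :=
    (List.isChain_append.1 (by rw [List.take_append_drop]; exact hch :
      List.Chain' G.Adj (l.take (r+1) ++ l.drop (r+1)))).1
  have h3 : (l.take (r+1)).length = r + 1 := by rw [List.length_take]; omega
  obtain ⟨S, ⟨iso⟩⟩ := exists_path_subgraph (G := G) h1 h2 h3
  exact (hfree S).false iso

lemma cliq_univ (k : ℕ) : cliFin G Finset.univ k = G.cliqueFinset k := by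
  ext q
  rw [cliFin_mem, SimpleGraph.mem_cliqueFinset_iff, SimpleGraph.isNClique_iff]
  constructor
  · rintro ⟨-, hc, ha⟩
    exact ⟨fun a haq b hbq hab => ha a haq b hbq hab, hc⟩
  · rintro ⟨hcl, hc⟩
    exact ⟨Finset.subset_univ _, hc, fun a haq b hbq hab => hcl haq hbq hab⟩

lemma rs_univ_iff {v w : V} : Rs G Finset.univ v w ↔ G.Reachable v w := by
  rw [SimpleGraph.reachable_iff_reflTransGen]
  constructor
  · rintro ⟨-, -, h⟩
    exact Relation.ReflTransGen.mono (fun a b hab => hab.1) _ _ h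
  · intro h
    exact ⟨Finset.mem_univ _, Finset.mem_univ _,
      Relation.ReflTransGen.mono (fun a b hab => ⟨hab, Finset.mem_univ _, Finset.mem_univ _⟩) _ _ h⟩

lemma comp_univ_eq (v : V) :
    comp G Finset.univ v = Finset.univ.filter (fun w => G.Reachable v w) := by
  ext w
  rw [mem_comp, Finset.mem_filter]
  exact ⟨fun h => ⟨h.1, rs_univ_iff.1 h.2⟩, fun h => ⟨h.1, rs_univ_iff.2 h.2⟩⟩

lemma card_reach (v : V) :
    Nat.card {w : V | G.Reachable v w} = (comp G Finset.univ v).card := by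
  have hset : {w : V | G.Reachable v w}
      = ↑(Finset.univ.filter (fun w => G.Reachable v w)) := by
    ext w; simp
  rw [hset, comp_univ_eq]
  exact Nat.card_eq_finsetCard _

lemma dvd_of_ext {r : ℕ} (hExt : ExtS G Finset.univ r) : r ∣ Fintype.card V := by
  have hmaps : ∀ x ∈ (Finset.univ : Finset V),
      comp G Finset.univ x ∈ Finset.univ.image (fun v => comp G Finset.univ v) :=
    fun x hx => Finset.mem_image_of_mem _ hx
  have hcard := Finset.card_eq_sum_card_fiberwise hmaps
  have hfib : ∀ c ∈ Finset.univ.image (fun v => comp G Finset.univ v),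
      (Finset.univ.filter (fun a => comp G Finset.univ a = c)).card = r := by
    intro c hc
    obtain ⟨v₀, -, rfl⟩ := Finset.mem_image.1 hc
    have hfil : Finset.univ.filter (fun a => comp G Finset.univ a = comp G Finset.univ v₀)
        = comp G Finset.univ v₀ := by
      ext a
      rw [Finset.mem_filter, mem_comp]
      constructor
      · rintro ⟨-, ha⟩
        have h1 : a ∈ comp G Finset.univ a := mem_comp_self (Finset.mem_univ a)
        rw [ha] at h1
        exact ⟨Finset.mem_univ a, (mem_comp.1 h1).2⟩
      · rintro ⟨-, ha⟩
        refine ⟨Finset.mem_univ a, ?_⟩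
        ext w
        rw [mem_comp, mem_comp]
        constructor
        · rintro ⟨hw, hr2⟩
          exact ⟨hw, ha.trans hr2⟩
        · rintro ⟨hw, hr2⟩
          exact ⟨hw, ha.symm.trans hr2⟩
    rw [hfil]
    exact hExt.2 v₀ (Finset.mem_univ _)
  rw [Finset.card_univ] at hcard
  refine ⟨(Finset.univ.image (fun v => comp G Finset.univ v)).card, ?_⟩
  rw [hcard, Finset.sum_congr rfl hfib, Finset.sum_const, smul_eq_mul, Nat.mul_comm]

lemma eq_of_cond {t r : ℕ} (ht : 2 ≤ t) (htr : t ≤ r)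
    (hadj : ∀ v w : V, G.Reachable v w → v ≠ w → G.Adj v w)
    (hcard : ∀ v : V, Nat.card {w : V | G.Reachable v w} = r) :
    r * (cliFin G Finset.univ t).card = Fintype.card V * r.choose t := by
  have hcomp : ∀ v : V, (comp G Finset.univ v).card = r := by
    intro v; rw [← card_reach]; exact hcard v
  have hnb : ∀ v : V, Finset.univ.filter (fun w => G.Adj v w)
      = (comp G Finset.univ v).erase v := by
    intro v
    ext w
    rw [Finset.mem_filter, Finset.mem_erase]
    constructor
    · rintro ⟨-, haw⟩
      refine ⟨haw.ne', mem_comp.2 ⟨Finset.mem_univ _, ?_⟩⟩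
      exact (Rs.refl (Finset.mem_univ v)).step haw (Finset.mem_univ _)
    · rintro ⟨hwv, hwc⟩
      exact ⟨Finset.mem_univ _,
        hadj v w (rs_univ_iff.1 (mem_comp.1 hwc).2) (Ne.symm hwv)⟩
  have hds : ∀ v : V, (Finset.univ.filter (fun w => G.Adj v w)).card = r - 1 := by
    intro v
    rw [hnb v, Finset.card_erase_of_mem (mem_comp_self (Finset.mem_univ v)), hcomp v]
  have hcv : ∀ v : V, ((cliFin G Finset.univ t).filter (fun q => v ∈ q)).card
      = (r-1).choose (t-1) := by
    intro v
    rw [cliq_erase (by omega) (Finset.mem_univ v)]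
    have hpows : cliFin G (Finset.univ.filter (fun w => G.Adj v w)) (t-1)
        = (Finset.univ.filter (fun w => G.Adj v w)).powersetCard (t-1) := by
      unfold cliFin
      apply Finset.filter_true_of_mem
      intro q hq
      rw [Finset.mem_powersetCard] at hq
      intro a ha b hb hab
      have ha' := Finset.mem_filter.1 (hq.1 ha)
      have hb' := Finset.mem_filter.1 (hq.1 hb)
      exact hadj a b ((ha'.2.symm.reachable).trans hb'.2.reachable) hab
    rw [hpows, Finset.card_powersetCard, hds v]
  have hsum := sum_cliq (G := G) Finset.univ t
  have htN : t * (cliFin G Finset.univ t).card = Fintype.card V * (r-1).choose (t-1) := by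
    rw [← hsum, Finset.sum_congr rfl (fun v _ => hcv v), Finset.sum_const, smul_eq_mul,
      Finset.card_univ]
  have hid : t * r.choose t = r * (r-1).choose (t-1) := choose_id (by omega) htr
  have hfinal : t * (r * (cliFin G Finset.univ t).card)
      = t * (Fintype.card V * r.choose t) := by
    calc t * (r * (cliFin G Finset.univ t).card)
        = r * (t * (cliFin G Finset.univ t).card) := by ring
    _ = r * (Fintype.card V * (r-1).choose (t-1)) := by rw [htN]
    _ = Fintype.card V * (r * (r-1).choose (t-1)) := by ring
    _ = Fintype.card V * (t * r.choose t) := by rw [hid]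
    _ = t * (Fintype.card V * r.choose t) := by ring
  exact Nat.eq_of_mul_eq_mul_left (by omega) hfinal

end Stmt6Aux

theorem stmt_6 {V : Type*} [Fintype V] [DecidableEq V]
    (G : SimpleGraph V) [DecidableRel G.Adj]
    (t r n : ℕ) (ht : 2 ≤ t) (htr : t ≤ r) (hn : Fintype.card V = n)
    (hfree : ∀ S : G.Subgraph, IsEmpty (S.coe ≃g SimpleGraph.pathGraph (r + 1))) :
    r * (G.cliqueFinset t).card ≤ n * r.choose t ∧
    (r * (G.cliqueFinset t).card = n * r.choose t ↔
      r ∣ n ∧ (∀ v w : V, G.Reachable v w → v ≠ w → G.Adj v w) ∧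
        ∀ v : V, Nat.card {w : V | G.Reachable v w} = r) := by
  classical
  subst hn
  have hr : 2 ≤ r := ht.trans htr
  have hfree' : Stmt6Aux.Frees G Finset.univ r := Stmt6Aux.frees_univ hfree
  obtain ⟨k, hk⟩ : ∃ k, t = k + 2 := ⟨t - 2, by omega⟩
  have hA := Stmt6Aux.cliq_main (G := G) k t r hk htr Finset.univ hfree'
  have hcli : G.cliqueFinset t = Stmt6Aux.cliFin G Finset.univ t :=
    (Stmt6Aux.cliq_univ (G := G) t).symm
  have hcu : (Finset.univ : Finset V).card = Fintype.card V := Finset.card_univ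
  constructor
  · rw [hcli, ← hcu]
    exact hA.1
  constructor
  · intro heq
    have heq' : r * (Stmt6Aux.cliFin G Finset.univ t).card
        = (Finset.univ : Finset V).card * r.choose t := by
      rw [← hcli, hcu]
      exact heq
    have hsumds := hA.2 heq'
    have hExt := (Stmt6Aux.EG (G := G) r hr (Finset.univ : Finset V).card Finset.univ
      le_rfl hfree').2 hsumds
    refine ⟨Stmt6Aux.dvd_of_ext hExt, ?_, ?_⟩
    · intro v w hreach hne
      exact hExt.1 v (Finset.mem_univ _) w (Finset.mem_univ _)
        (Stmt6Aux.rs_univ_iff.2 hreach) hne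
    · intro v
      rw [Stmt6Aux.card_reach]
      exact hExt.2 v (Finset.mem_univ _)
  · rintro ⟨-, hadj, hcard⟩
    rw [hcli, ← hcu]
    rw [hcu]
    exact Stmt6Aux.eq_of_cond ht htr hadj hcard
end

section
/- Let H be a graph on t vertices with dom(H) ≥ 1, let 1 ≤ u ≤ dom(H), and let G be any graph. For each subgraph T of G isomorphic to H, define θ_G(T) = max{ d_G(v) : v is a dominating vertex of T }, and define s^u_G(T) = 1 / C(θ_G(T) - u + 1, t - u). Then θ_G(T) ≥ t-1 for every such T (so s^u_G(T) is well-defined), and the sum of s^u_G(T) over all subgraphs T of G isomorphic to H is at most ( N(H↓u, K_{t-u}) / C(dom(H), u) ) · N(K_u, G). -/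
/-- `N(H, G)`: the number of subgraphs of `G` isomorphic to `H`. -/
noncomputable def copyCount {α β : Type*} (H : SimpleGraph α) (G : SimpleGraph β) : ℕ :=
  Nat.card {T : G.Subgraph // Nonempty (T.coe ≃g H)}

/-- A dominating vertex of a graph: one adjacent to every other vertex. -/
def IsDomVert {α : Type*} (H : SimpleGraph α) (v : α) : Prop :=
  ∀ w : α, w ≠ v → H.Adj v w

lemma domvert_adj' {α} {H : SimpleGraph α} {v w : α} (h : IsDomVert H v) :
    H.Adj v w ↔ w ≠ v := ⟨fun ha => ha.ne', fun hne => h w hne⟩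

lemma finite_subgraph' {V : Type*} [Finite V] (G : SimpleGraph V) : Finite G.Subgraph :=
  Finite.of_injective (fun T => (T.verts, T.Adj)) (by
    intro a b h
    obtain ⟨h1, h2⟩ := Prod.mk.injEq .. ▸ h
    exact SimpleGraph.Subgraph.ext h1 h2)

lemma iso_induce_compl' {α} [Fintype α] [DecidableEq α] (H : SimpleGraph α)
    (S U : Finset α) (hcard : S.card = U.card)
    (hS : ∀ v ∈ S, IsDomVert H v) (hUd : ∀ v ∈ U, IsDomVert H v) :
    Nonempty (H.induce ((↑S : Set α)ᶜ) ≃g H.induce ((↑U : Set α)ᶜ)) := by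
  classical
  set X := ((↑S : Set α)ᶜ : Set α) with hX
  set Y := ((↑U : Set α)ᶜ : Set α) with hY
  have hmX : ∀ a : α, a ∈ X ↔ a ∉ S := by intro a; simp [hX]
  have hmY : ∀ a : α, a ∈ Y ↔ a ∉ U := by intro a; simp [hY]
  let P : X → Prop := fun a => (a : α) ∈ U
  let Q : Y → Prop := fun b => (b : α) ∈ S
  let eX : {a : X // P a} ≃ ↥(U \ S) :=
    { toFun := fun a => ⟨(a.1 : α), Finset.mem_sdiff.mpr ⟨a.2, (hmX _).mp a.1.2⟩⟩
      invFun := fun b =>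
        ⟨⟨(b : α), (hmX _).mpr (Finset.mem_sdiff.mp b.2).2⟩, (Finset.mem_sdiff.mp b.2).1⟩
      left_inv := fun a => by ext; rfl
      right_inv := fun b => by ext; rfl }
  let eY : {b : Y // Q b} ≃ ↥(S \ U) :=
    { toFun := fun a => ⟨(a.1 : α), Finset.mem_sdiff.mpr ⟨a.2, (hmY _).mp a.1.2⟩⟩
      invFun := fun b =>
        ⟨⟨(b : α), (hmY _).mpr (Finset.mem_sdiff.mp b.2).2⟩, (Finset.mem_sdiff.mp b.2).1⟩
      left_inv := fun a => by ext; rfl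
      right_inv := fun b => by ext; rfl }
  have hsd : (U \ S).card = (S \ U).card := Finset.card_sdiff_comm hcard.symm
  have ecard : Fintype.card ↥(U \ S) = Fintype.card ↥(S \ U) := by
    simp only [Fintype.card_coe, hsd]
  let e₁ : {a : X // P a} ≃ {b : Y // Q b} :=
    eX.trans ((Fintype.equivOfCardEq ecard).trans eY.symm)
  let e₂ : {a : X // ¬ P a} ≃ {b : Y // ¬ Q b} :=
    { toFun := fun a => ⟨⟨(a.1 : α), (hmY _).mpr a.2⟩, (hmX _).mp a.1.2⟩
      invFun := fun b => ⟨⟨(b.1 : α), (hmX _).mpr b.2⟩, (hmY _).mp b.1.2⟩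
      left_inv := fun a => by ext; rfl
      right_inv := fun b => by ext; rfl }
  let e : X ≃ Y := (Equiv.sumCompl P).symm.trans ((e₁.sumCongr e₂).trans (Equiv.sumCompl Q))
  have he_neg : ∀ (a : X), ¬ P a → ((e a : Y) : α) = (a : α) := by
    intro a h
    show ((Equiv.sumCompl Q) ((e₁.sumCongr e₂) ((Equiv.sumCompl P).symm a)) : α) = _
    rw [Equiv.sumCompl_symm_apply_of_neg (p := P) (a := a) h]
    simp only [Equiv.sumCongr_apply, Sum.map_inr, Equiv.sumCompl_apply_inr]
    rfl
  have he_pos : ∀ (a : X), P a → ((e a : Y) : α) ∈ S := by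
    intro a h
    show (((Equiv.sumCompl Q) ((e₁.sumCongr e₂) ((Equiv.sumCompl P).symm a)) : Y) : α) ∈ S
    rw [Equiv.sumCompl_symm_apply_of_pos (p := P) (a := a) h]
    simp only [Equiv.sumCongr_apply, Sum.map_inl, Equiv.sumCompl_apply_inl]
    exact (e₁ ⟨a, h⟩).2
  refine ⟨RelIso.mk e ?_⟩
  intro a b
  simp only [SimpleGraph.comap_adj, Function.Embedding.coe_subtype]
  have key : ∀ x y : X, (P x) → (H.Adj ((e x : Y) : α) ((e y : Y) : α) ↔ H.Adj (x : α) (y : α)) := by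
    intro x y hx
    have d1 : IsDomVert H (x : α) := hUd _ hx
    have d2 : IsDomVert H ((e x : Y) : α) := hS _ (he_pos x hx)
    rw [domvert_adj' d1, domvert_adj' d2, ne_eq, ne_eq, Subtype.coe_inj, Subtype.coe_inj,
      Equiv.apply_eq_iff_eq]
  by_cases ha : P a
  · exact key a b ha
  · by_cases hb : P b
    · rw [H.adj_comm, key b a hb, H.adj_comm]
    · rw [he_neg a ha, he_neg b hb]

lemma pushforward_dom' {α V : Type*} {H : SimpleGraph α} {G : SimpleGraph V} {T : G.Subgraph}
    (φ : T.coe ≃g H) {v : V} (hv : v ∈ T.verts)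
    (hdom : ∀ w ∈ T.verts, w ≠ v → T.Adj v w) : IsDomVert H (φ ⟨v, hv⟩) := by
  intro b hb
  have hb' : φ.symm b ≠ ⟨v, hv⟩ := fun h => hb (by
    have h2 := congrArg φ h
    rwa [RelIso.apply_symm_apply] at h2)
  have hadj : T.coe.Adj ⟨v, hv⟩ (φ.symm b) :=
    hdom ↑(φ.symm b) (φ.symm b).2 (fun h => hb' (Subtype.ext h))
  have h3 := φ.map_adj_iff.mpr hadj
  rwa [RelIso.apply_symm_apply] at h3

lemma pullback_dom' {α V : Type*} {H : SimpleGraph α} {G : SimpleGraph V} {T : G.Subgraph}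
    (φ : T.coe ≃g H) {x : α} (hx : IsDomVert H x) :
    ↑(φ.symm x) ∈ T.verts ∧ ∀ w ∈ T.verts, w ≠ ↑(φ.symm x) → T.Adj ↑(φ.symm x) w := by
  refine ⟨(φ.symm x).2, fun w hw hne => ?_⟩
  have hne' : φ ⟨w, hw⟩ ≠ x := by
    intro h
    apply hne
    have h2 := congrArg (φ.symm) h
    rw [RelIso.symm_apply_apply] at h2
    exact congrArg Subtype.val h2
  have hadj : H.Adj x (φ ⟨w, hw⟩) := hx _ hne'
  have h2 : H.Adj (φ (φ.symm x)) (φ ⟨w, hw⟩) := by rwa [RelIso.apply_symm_apply]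
  exact φ.map_adj_iff.mp h2

lemma restrict_iso' {α V β : Type*} [Fintype α] [DecidableEq α] [DecidableEq V]
    (H : SimpleGraph α) (G : SimpleGraph V) (T : G.Subgraph) (φ : T.coe ≃g H)
    (K W : Finset V)
    (hK : ∀ v ∈ K, v ∈ T.verts ∧ ∀ w ∈ T.verts, w ≠ v → T.Adj v w)
    (hW : (↑W : Set V) = T.verts \ ↑K)
    (e : β ≃ ↥W) (B : SimpleGraph β)
    (hB : ∀ i j, B.Adj i j ↔ T.Adj ↑(e i) ↑(e j))
    (U : Finset α) (hU : U.card = K.card) (hUdom : ∀ v ∈ U, IsDomVert H v) :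
    Nonempty (B ≃g H.induce ((↑U : Set α)ᶜ)) := by
  classical
  let S : Finset α := Finset.univ.filter (fun a => ↑(φ.symm a) ∈ K)
  have hmS : ∀ a : α, a ∈ S ↔ ↑(φ.symm a) ∈ K := by
    intro a; simp [S]
  have hScard : S.card = K.card := by
    refine Finset.card_bij' (fun a ha => ↑(φ.symm a)) (fun v hv => φ ⟨v, (hK v hv).1⟩)
      (fun a ha => (hmS a).mp ha) (fun v hv => ?_) (fun a ha => ?_) (fun v hv => ?_)
    · rw [hmS, RelIso.symm_apply_apply]
      exact hv
    · show φ ⟨↑(φ.symm a), _⟩ = a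
      have h0 : (⟨↑(φ.symm a), (hK _ ((hmS a).mp ha)).1⟩ : T.verts) = φ.symm a :=
        Subtype.ext rfl
      rw [h0, RelIso.apply_symm_apply]
    · show ↑(φ.symm (φ ⟨v, (hK v hv).1⟩)) = v
      rw [RelIso.symm_apply_apply]
  have hSdom : ∀ a ∈ S, IsDomVert H a := by
    intro a ha b hb
    have hb' : φ.symm b ≠ φ.symm a := fun h => hb (by
      have h2 := congrArg φ h
      rwa [RelIso.apply_symm_apply, RelIso.apply_symm_apply] at h2)
    have hadj : T.coe.Adj (φ.symm a) (φ.symm b) :=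
      (hK _ ((hmS a).mp ha)).2 ↑(φ.symm b) (φ.symm b).2
        (fun h => hb' (Subtype.ext h))
    exact φ.symm.map_adj_iff.mp hadj
  have hWmem : ∀ i : β, (↑(e i) : V) ∈ T.verts ∧ (↑(e i) : V) ∉ K := by
    intro i
    have h : (↑(e i) : V) ∈ (↑W : Set V) := (e i).2
    rw [hW] at h
    exact h
  let g : β → ↥((↑S : Set α)ᶜ) := fun i =>
    ⟨φ ⟨↑(e i), (hWmem i).1⟩, by
      intro hmem
      have h : ↑(φ.symm (φ ⟨↑(e i), (hWmem i).1⟩)) ∈ K := (hmS _).mp hmem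
      rw [RelIso.symm_apply_apply] at h
      exact (hWmem i).2 h⟩
  have hg : Function.Bijective g := by
    constructor
    · intro i j hij
      have h1 : φ ⟨↑(e i), (hWmem i).1⟩ = φ ⟨↑(e j), (hWmem j).1⟩ := congrArg Subtype.val hij
      have h2 := φ.injective h1
      have h3 : (↑(e i) : V) = ↑(e j) := congrArg (Subtype.val : T.verts → V) h2
      exact e.injective (Subtype.ext h3)
    · rintro ⟨a, haS⟩
      have h1 : ↑(φ.symm a) ∉ K := fun h => haS ((hmS a).mpr h)
      have h2 : (↑(φ.symm a) : V) ∈ (↑W : Set V) := by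
        rw [hW]; exact ⟨(φ.symm a).2, h1⟩
      refine ⟨e.symm ⟨↑(φ.symm a), h2⟩, ?_⟩
      apply Subtype.ext
      have h3 : (⟨↑(e (e.symm ⟨↑(φ.symm a), h2⟩)), (hWmem _).1⟩ : T.verts) = φ.symm a := by
        apply Subtype.ext
        show (↑(e (e.symm ⟨↑(φ.symm a), h2⟩)) : V) = ↑(φ.symm a)
        rw [Equiv.apply_symm_apply]
      show φ ⟨↑(e (e.symm ⟨↑(φ.symm a), h2⟩)), (hWmem _).1⟩ = a
      rw [h3, RelIso.apply_symm_apply]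
  obtain ⟨ψ⟩ := iso_induce_compl' H S U (hScard.trans hU.symm) hSdom hUdom
  refine ⟨(RelIso.mk (Equiv.ofBijective g hg) ?_ : B ≃g H.induce ((↑S : Set α)ᶜ)).trans ψ⟩
  intro i j
  show (H.induce _).Adj (g i) (g j) ↔ B.Adj i j
  have h4 : (H.induce ((↑S : Set α)ᶜ)).Adj (g i) (g j) ↔
      H.Adj (φ ⟨↑(e i), (hWmem i).1⟩) (φ ⟨↑(e j), (hWmem j).1⟩) := Iff.rfl
  rw [h4, φ.map_adj_iff, hB]
  exact Iff.rfl

theorem stmt_9 {α V : Type*} [Fintype α] [DecidableEq α] [Fintype V] [DecidableEq V]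
    (H : SimpleGraph α) (G : SimpleGraph V) [DecidableRel G.Adj]
    (t u : ℕ) (hcard : Fintype.card α = t)
    (hdom : 1 ≤ Nat.card {v : α // IsDomVert H v})
    (hu1 : 1 ≤ u) (hu2 : u ≤ Nat.card {v : α // IsDomVert H v})
    (U : Finset α) (hU : U.card = u) (hUdom : ∀ v ∈ U, IsDomVert H v)
    (θ : G.Subgraph → ℕ)
    (hθ : ∀ T : G.Subgraph,
      θ T = sSup {d : ℕ | ∃ v ∈ T.verts,
        (∀ w ∈ T.verts, w ≠ v → T.Adj v w) ∧ d = G.degree v}) :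
    (∀ T : G.Subgraph, Nonempty (T.coe ≃g H) → t - 1 ≤ θ T) ∧
    ∑ᶠ T ∈ {T : G.Subgraph | Nonempty (T.coe ≃g H)},
        (1 : ℝ) / ((θ T - u + 1).choose (t - u) : ℝ) ≤
      (copyCount (H.induce ((↑U : Set α)ᶜ)) (⊤ : SimpleGraph (Fin (t - u))) : ℝ) /
          ((Nat.card {v : α // IsDomVert H v}).choose u : ℝ) *
        ((G.cliqueFinset u).card : ℝ) := by
  classical
  haveI : Finite G.Subgraph := finite_subgraph' G
  haveI : Fintype G.Subgraph := Fintype.ofFinite _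
  set D : ℕ := Nat.card {v : α // IsDomVert H v} with hD
  set NN : ℕ := copyCount (H.induce ((↑U : Set α)ᶜ)) (⊤ : SimpleGraph (Fin (t - u))) with hNN
  -- dominating-vertex finset of a subgraph
  set DT : G.Subgraph → Finset V := fun T =>
    Finset.univ.filter (fun v => v ∈ T.verts ∧ ∀ w ∈ T.verts, w ≠ v → T.Adj v w) with hDT
  have hmDT : ∀ (T : G.Subgraph) (v : V),
      v ∈ DT T ↔ v ∈ T.verts ∧ ∀ w ∈ T.verts, w ≠ v → T.Adj v w := by
    intro T v; simp [hDT]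
  -- vertex finset of a subgraph
  set Vf : G.Subgraph → Finset V := fun T => Finset.univ.filter (· ∈ T.verts) with hVf
  have hmVf : ∀ (T : G.Subgraph) (v : V), v ∈ Vf T ↔ v ∈ T.verts := by
    intro T v; simp [hVf]
  -- the dominating finset of H
  set Hd : Finset α := Finset.univ.filter (IsDomVert H) with hHd
  have hmHd : ∀ a : α, a ∈ Hd ↔ IsDomVert H a := by intro a; simp [hHd]
  have hHdcard : Hd.card = D := by
    rw [hD, Nat.card_eq_fintype_card, Fintype.card_subtype]
  -- cardinality of vertex set of a copy
  have hVfcard : ∀ (T : G.Subgraph), (T.coe ≃g H) → (Vf T).card = t := by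
    intro T φ
    have h1 : (Vf T).card = (Finset.univ : Finset α).card := by
      refine Finset.card_bij' (fun v hv => φ ⟨v, (hmVf T v).mp hv⟩)
        (fun a _ => ↑(φ.symm a)) (fun v hv => Finset.mem_univ _)
        (fun a _ => (hmVf T _).mpr (φ.symm a).2) (fun v hv => ?_) (fun a _ => ?_)
      · show ↑(φ.symm (φ ⟨v, _⟩)) = v
        rw [RelIso.symm_apply_apply]
      · show φ ⟨↑(φ.symm a), _⟩ = a
        have h0 : (⟨↑(φ.symm a), (hmVf T _).mp ((hmVf T _).mpr (φ.symm a).2)⟩ : T.verts)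
            = φ.symm a := Subtype.ext rfl
        rw [h0, RelIso.apply_symm_apply]
    rw [h1, Finset.card_univ, hcard]
  -- cardinality of the dominating finset of a copy
  have hDTcard : ∀ (T : G.Subgraph), (T.coe ≃g H) → (DT T).card = D := by
    intro T φ
    rw [← hHdcard]
    refine Finset.card_bij' (fun v hv => φ ⟨v, ((hmDT T v).mp hv).1⟩)
      (fun a ha => ↑(φ.symm a)) (fun v hv => ?_) (fun a ha => ?_)
      (fun v hv => ?_) (fun a ha => ?_)
    · exact (hmHd _).mpr (pushforward_dom' φ ((hmDT T v).mp hv).1 ((hmDT T v).mp hv).2)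
    · exact (hmDT T _).mpr (pullback_dom' φ ((hmHd a).mp ha))
    · show ↑(φ.symm (φ ⟨v, _⟩)) = v
      rw [RelIso.symm_apply_apply]
    · show φ ⟨↑(φ.symm a), _⟩ = a
      have h0 : (⟨↑(φ.symm a), _⟩ : T.verts) = φ.symm a := Subtype.ext rfl
      rw [h0, RelIso.apply_symm_apply]
  -- θ bounds
  have hbdd : ∀ T : G.Subgraph, BddAbove {d : ℕ | ∃ v ∈ T.verts,
      (∀ w ∈ T.verts, w ≠ v → T.Adj v w) ∧ d = G.degree v} := by
    intro T
    refine ⟨Fintype.card V, fun d hd => ?_⟩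
    obtain ⟨v, -, -, rfl⟩ := hd
    exact (G.neighborFinset v).card_le_univ.trans_eq (Finset.card_univ)
  have hdegθ : ∀ (T : G.Subgraph) (v : V), v ∈ DT T → G.degree v ≤ θ T := by
    intro T v hv
    rw [hθ T]
    exact le_csSup (hbdd T) ⟨v, ((hmDT T v).mp hv).1, ((hmDT T v).mp hv).2, rfl⟩
  -- part 1
  have part1 : ∀ T : G.Subgraph, Nonempty (T.coe ≃g H) → t - 1 ≤ θ T := by
    intro T hT
    obtain ⟨φ⟩ := hT
    obtain ⟨⟨x₀, hx₀⟩, -⟩ := Nat.card_pos_iff.mp (lt_of_lt_of_le zero_lt_one hdom)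
    have hv : ↑(φ.symm x₀) ∈ DT T := (hmDT T _).mpr (pullback_dom' φ hx₀)
    set v : V := ↑(φ.symm x₀)
    have hdeg : t - 1 ≤ G.degree v := by
      have hsub : (Vf T).erase v ⊆ G.neighborFinset v := by
        intro w hw
        rw [SimpleGraph.mem_neighborFinset]
        exact T.adj_sub (((hmDT T v).mp hv).2 w ((hmVf T w).mp (Finset.mem_of_mem_erase hw))
          (Finset.ne_of_mem_erase hw))
      have hc := Finset.card_le_card hsub
      rwa [Finset.card_erase_of_mem ((hmVf T v).mpr ((hmDT T v).mp hv).1),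
        hVfcard T φ] at hc
    exact hdeg.trans (hdegθ T v hv)
  refine ⟨part1, ?_⟩
  -- set up sum over finset
  set copies : Finset G.Subgraph := Finset.univ.filter (fun T => Nonempty (T.coe ≃g H))
    with hcopies
  have hmcopies : ∀ T, T ∈ copies ↔ Nonempty (T.coe ≃g H) := by intro T; simp [hcopies]
  have hseteq : {T : G.Subgraph | Nonempty (T.coe ≃g H)} = ↑copies := by
    ext T; simp [hcopies]
  rw [hseteq, finsum_mem_coe_finset]
  set s : G.Subgraph → ℝ := fun T => (1 : ℝ) / ((θ T - u + 1).choose (t - u) : ℝ) with hs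
  -- the cliques attached to a copy
  have hcliq : ∀ T ∈ copies, (DT T).powersetCard u ⊆ G.cliqueFinset u := by
    intro T hT K hK
    rw [Finset.mem_powersetCard] at hK
    rw [SimpleGraph.mem_cliqueFinset_iff]
    refine ⟨fun v hv w hw hne => ?_, hK.2⟩
    have hv' := (hmDT T v).mp (hK.1 hv)
    have hw' := (hmDT T w).mp (hK.1 hw)
    exact T.adj_sub (hv'.2 w hw'.1 (Ne.symm hne))
  -- main per-clique bound
  have main : ∀ K ∈ G.cliqueFinset u,
      ∑ T ∈ copies.filter (fun T => K ∈ (DT T).powersetCard u), s T ≤ (NN : ℝ) := by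
    intro K hK
    have hKcl := SimpleGraph.mem_cliqueFinset_iff.mp hK
    have hKcard : K.card = u := hKcl.2
    set A : Finset V := Finset.univ.filter (fun w => w ∉ K ∧ ∀ v ∈ K, G.Adj v w) with hA
    have hmA : ∀ w, w ∈ A ↔ w ∉ K ∧ ∀ v ∈ K, G.Adj v w := by intro w; simp [hA]
    set 𝒯 : Finset G.Subgraph := copies.filter (fun T => K ∈ (DT T).powersetCard u) with h𝒯
    have h𝒯mem : ∀ T ∈ 𝒯, Nonempty (T.coe ≃g H) ∧ K ⊆ DT T := by
      intro T hT
      rw [h𝒯, Finset.mem_filter] at hT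
      exact ⟨(hmcopies T).mp hT.1, (Finset.mem_powersetCard.mp hT.2).1⟩
    set f : G.Subgraph → Finset V := fun T => (Vf T) \ K with hf
    have hKsubVf : ∀ T ∈ 𝒯, K ⊆ Vf T := fun T hT v hv =>
      (hmVf T v).mpr ((hmDT T v).mp ((h𝒯mem T hT).2 hv)).1
    have hfsub : ∀ T ∈ 𝒯, f T ⊆ A := by
      intro T hT w hw
      obtain ⟨hw1, hw2⟩ := Finset.mem_sdiff.mp hw
      refine (hmA w).mpr ⟨hw2, fun v hv => ?_⟩
      have hv' := (hmDT T v).mp ((h𝒯mem T hT).2 hv)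
      exact T.adj_sub (hv'.2 w ((hmVf T w).mp hw1) (fun h => hw2 (h ▸ hv)))
    have hfcard : ∀ T ∈ 𝒯, (f T).card = t - u := by
      intro T hT
      rw [hf]
      rw [Finset.card_sdiff_of_subset (hKsubVf T hT),
        hVfcard T (Classical.choice (h𝒯mem T hT).1), hKcard]
    have hWT : ∀ T ∈ 𝒯, ∀ (W : Finset V), f T = W → (↑W : Set V) = T.verts \ ↑K := by
      intro T hT W hfT
      rw [← hfT, hf]
      rw [Finset.coe_sdiff]
      congr 1
      ext w
      simp [hmVf]
    have hvertsT : ∀ T ∈ 𝒯, ∀ (W : Finset V), f T = W → T.verts = ↑K ∪ ↑W := by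
      intro T hT W hfT
      rw [hWT T hT W hfT]
      have hKsub : (↑K : Set V) ⊆ T.verts := fun v hv =>
        ((hmDT T v).mp ((h𝒯mem T hT).2 hv)).1
      exact (Set.union_diff_cancel hKsub).symm
    by_cases hne : 𝒯.Nonempty
    · obtain ⟨T₀, hT₀⟩ := hne
      have hAcard : t - u ≤ A.card := by
        calc t - u = (f T₀).card := (hfcard T₀ hT₀).symm
          _ ≤ A.card := Finset.card_le_card (hfsub T₀ hT₀)
      set cA : ℕ := A.card.choose (t - u) with hcA
      have hcApos : 0 < cA := Nat.choose_pos hAcard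
      obtain ⟨v₀, hv₀⟩ := Finset.card_pos.mp (show 0 < K.card by omega)
      have hdeg : ∀ T ∈ 𝒯, A.card + (u - 1) ≤ θ T := by
        intro T hT
        have hsub : A ∪ K.erase v₀ ⊆ G.neighborFinset v₀ := by
          intro w hw
          rw [SimpleGraph.mem_neighborFinset]
          rcases Finset.mem_union.mp hw with hw | hw
          · exact ((hmA w).mp hw).2 v₀ hv₀
          · exact hKcl.1 hv₀ (Finset.mem_of_mem_erase hw)
              (Ne.symm (Finset.ne_of_mem_erase hw))
        have hdisj : Disjoint A (K.erase v₀) := by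
          rw [Finset.disjoint_left]
          intro w hw hw2
          exact ((hmA w).mp hw).1 (Finset.mem_of_mem_erase hw2)
        have h1 := Finset.card_le_card hsub
        rw [Finset.card_union_of_disjoint hdisj, Finset.card_erase_of_mem hv₀, hKcard] at h1
        exact h1.trans (hdegθ T v₀ ((h𝒯mem T hT).2 hv₀))
      have hsle : ∀ T ∈ 𝒯, s T ≤ 1 / (cA : ℝ) := by
        intro T hT
        rw [hs]
        have h1 : cA ≤ (θ T - u + 1).choose (t - u) := by
          rw [hcA]
          refine Nat.choose_le_choose _ ?_
          have := hdeg T hT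
          omega
        have h2 : (0:ℝ) < (cA : ℝ) := by exact_mod_cast hcApos
        exact one_div_le_one_div_of_le h2 (by exact_mod_cast h1)
      haveI : Finite (⊤ : SimpleGraph (Fin (t - u))).Subgraph := finite_subgraph' _
      haveI : Fintype (⊤ : SimpleGraph (Fin (t - u))).Subgraph := Fintype.ofFinite _
      set CopFin : Finset (⊤ : SimpleGraph (Fin (t - u))).Subgraph := Finset.univ.filter
        (fun T' => Nonempty (T'.coe ≃g H.induce ((↑U : Set α)ᶜ))) with hCopFin
      have hCopcard : CopFin.card = NN := by
        rw [hNN, copyCount, Nat.card_eq_fintype_card]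
        exact (Fintype.card_of_subtype CopFin (by intro x; rw [hCopFin]; simp)).symm
      have hfibercard : ∀ W ∈ 𝒯.image f, (𝒯.filter (fun T => f T = W)).card ≤ NN := by
        intro W hW
        obtain ⟨T₀', hT₀', hfT₀'⟩ := Finset.mem_image.mp hW
        have hWcard : W.card = t - u := by rw [← hfT₀']; exact hfcard T₀' hT₀'
        set e₀ : ↥W ≃ Fin (t - u) := W.equivFin.trans (finCongr (by rw [hWcard])) with he₀
        set emb : Fin (t - u) → V := fun i => ↑(e₀.symm i) with hemb
        have hembW : ∀ i, emb i ∈ W := fun i => (e₀.symm i).2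
        set g : G.Subgraph → (⊤ : SimpleGraph (Fin (t - u))).Subgraph := fun T =>
          { verts := Set.univ
            Adj := fun i j => T.Adj (emb i) (emb j)
            adj_sub := by
              intro i j h
              have hne2 : emb i ≠ emb j := (T.adj_sub h).ne
              exact (SimpleGraph.top_adj i j).mpr (fun hij => hne2 (by rw [hij]))
            edge_vert := fun _ => Set.mem_univ _
            symm := ⟨fun i j h => T.adj_symm h⟩ } with hg
        refine le_trans (Finset.card_le_card_of_injOn g ?_ ?_) hCopcard.le
        · intro T hT
          obtain ⟨hT𝒯, hfT⟩ := Finset.mem_filter.mp hT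
          obtain ⟨hiso, hKDT⟩ := h𝒯mem T hT𝒯
          have φ := Classical.choice hiso
          rw [hCopFin, Finset.mem_coe, Finset.mem_filter]
          refine ⟨Finset.mem_univ _, ?_⟩
          have hK' : ∀ v ∈ K, v ∈ T.verts ∧ ∀ w ∈ T.verts, w ≠ v → T.Adj v w :=
            fun v hv => (hmDT T v).mp (hKDT hv)
          have hW' : (↑W : Set V) = T.verts \ ↑K := hWT T hT𝒯 W hfT
          have hB : ∀ i j, (g T).coe.Adj i j ↔
              T.Adj ↑(((Equiv.Set.univ _).trans e₀.symm) i)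
                ↑(((Equiv.Set.univ _).trans e₀.symm) j) := fun i j => Iff.rfl
          exact restrict_iso' H G T φ K W hK' hW'
            ((Equiv.Set.univ _).trans e₀.symm) (g T).coe hB U (by rw [hU, hKcard]) hUdom
        · intro T₁ hT₁ T₂ hT₂ hg12
          rw [Finset.mem_coe, Finset.mem_filter] at hT₁ hT₂
          obtain ⟨hT₁𝒯, hfT₁⟩ := hT₁
          obtain ⟨hT₂𝒯, hfT₂⟩ := hT₂
          have hAdjeq : ∀ i j, T₁.Adj (emb i) (emb j) ↔ T₂.Adj (emb i) (emb j) := by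
            intro i j
            have h0 := congrArg SimpleGraph.Subgraph.Adj hg12
            exact iff_of_eq (congrFun (congrFun h0 i) j)
          have hAdjW : ∀ x, x ∈ W → ∀ y, y ∈ W → (T₁.Adj x y ↔ T₂.Adj x y) := by
            intro x hx y hy
            have h1 : emb (e₀ ⟨x, hx⟩) = x := by
              rw [hemb]; simp only [Equiv.symm_apply_apply]
            have h2 : emb (e₀ ⟨y, hy⟩) = y := by
              rw [hemb]; simp only [Equiv.symm_apply_apply]
            rw [← h1, ← h2]
            exact hAdjeq _ _
          have char : ∀ T' : G.Subgraph, K ⊆ DT T' → T'.verts = ↑K ∪ ↑W → ∀ x y : V,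
              (T'.Adj x y ↔ (x ∈ K ∧ y ∈ (↑K ∪ ↑W : Set V) ∧ y ≠ x) ∨
                (y ∈ K ∧ x ∈ (↑K ∪ ↑W : Set V) ∧ x ≠ y) ∨
                ((x ∈ W ∧ y ∈ W) ∧ T'.Adj x y)) := by
            intro T' hKD hveq x y
            constructor
            · intro h
              have hx : x ∈ T'.verts := T'.edge_vert h
              have hy : y ∈ T'.verts := T'.edge_vert (T'.adj_symm h)
              have hne2 : x ≠ y := (T'.adj_sub h).ne
              by_cases hxK : x ∈ K
              · exact Or.inl ⟨hxK, hveq ▸ hy, hne2.symm⟩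
              · by_cases hyK : y ∈ K
                · exact Or.inr (Or.inl ⟨hyK, hveq ▸ hx, hne2⟩)
                · have hx' : x ∈ (↑K ∪ ↑W : Set V) := hveq ▸ hx
                  have hy' : y ∈ (↑K ∪ ↑W : Set V) := hveq ▸ hy
                  have hxW : x ∈ W := by
                    rcases hx' with h' | h'
                    · exact absurd (Finset.mem_coe.mp h') hxK
                    · exact Finset.mem_coe.mp h'
                  have hyW : y ∈ W := by
                    rcases hy' with h' | h'
                    · exact absurd (Finset.mem_coe.mp h') hyK
                    · exact Finset.mem_coe.mp h'
                  exact Or.inr (Or.inr ⟨⟨hxW, hyW⟩, h⟩)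
            · rintro (⟨hxK, hy, hne2⟩ | ⟨hyK, hx, hne2⟩ | ⟨⟨hxW, hyW⟩, h⟩)
              · exact ((hmDT T' x).mp (hKD hxK)).2 y (hveq.symm ▸ hy) hne2
              · exact T'.adj_symm (((hmDT T' y).mp (hKD hyK)).2 x (hveq.symm ▸ hx) hne2)
              · exact h
          have hv1 : T₁.verts = ↑K ∪ ↑W := hvertsT T₁ hT₁𝒯 W hfT₁
          have hv2 : T₂.verts = ↑K ∪ ↑W := hvertsT T₂ hT₂𝒯 W hfT₂
          refine SimpleGraph.Subgraph.ext (hv1.trans hv2.symm) ?_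
          funext x y
          apply propext
          rw [char T₁ (h𝒯mem T₁ hT₁𝒯).2 hv1 x y, char T₂ (h𝒯mem T₂ hT₂𝒯).2 hv2 x y]
          exact or_congr Iff.rfl (or_congr Iff.rfl
            (and_congr_right (fun h12 => hAdjW x h12.1 y h12.2)))
      have hTcard : 𝒯.card ≤ NN * cA := by
        have h1 := Finset.card_le_mul_card_image (f := f) 𝒯 NN hfibercard
        have h2 : (𝒯.image f).card ≤ (A.powersetCard (t - u)).card := by
          refine Finset.card_le_card ?_
          intro W hW
          obtain ⟨T, hT, rfl⟩ := Finset.mem_image.mp hW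
          exact Finset.mem_powersetCard.mpr ⟨hfsub T hT, hfcard T hT⟩
        calc 𝒯.card ≤ NN * (𝒯.image f).card := h1
          _ ≤ NN * (A.powersetCard (t - u)).card := Nat.mul_le_mul_left _ h2
          _ = NN * cA := by rw [Finset.card_powersetCard]
      calc ∑ T ∈ 𝒯, s T ≤ ∑ _T ∈ 𝒯, 1 / (cA : ℝ) := Finset.sum_le_sum hsle
        _ = (𝒯.card : ℝ) * (1 / (cA : ℝ)) := by rw [Finset.sum_const, nsmul_eq_mul]
        _ ≤ ((NN * cA : ℕ) : ℝ) * (1 / (cA : ℝ)) := by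
            have h3 : (0:ℝ) ≤ 1 / (cA : ℝ) := by positivity
            exact mul_le_mul_of_nonneg_right (by exact_mod_cast hTcard) h3
        _ = (NN : ℝ) := by
            push_cast
            rw [mul_one_div, mul_div_assoc]
            rw [div_self (by exact_mod_cast hcApos.ne' : (cA:ℝ) ≠ 0), mul_one]
    · rw [Finset.not_nonempty_iff_eq_empty] at hne
      rw [hne, Finset.sum_empty]
      positivity
  -- double counting
  have hCDu : (0:ℝ) < (D.choose u : ℝ) := by
    exact_mod_cast Nat.choose_pos hu2
  have key : (D.choose u : ℝ) * ∑ T ∈ copies, s T ≤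
      (NN : ℝ) * ((G.cliqueFinset u).card : ℝ) := by
    have step1 : (D.choose u : ℝ) * ∑ T ∈ copies, s T
        = ∑ T ∈ copies, ∑ K ∈ (DT T).powersetCard u, s T := by
      rw [Finset.mul_sum]
      refine Finset.sum_congr rfl (fun T hT => ?_)
      rw [Finset.sum_const, Finset.card_powersetCard,
        hDTcard T (Classical.choice ((hmcopies T).mp hT))]
      simp [nsmul_eq_mul]
    have step2 : ∀ T ∈ copies, ∑ K ∈ (DT T).powersetCard u, s T
        = ∑ K ∈ G.cliqueFinset u, if K ∈ (DT T).powersetCard u then s T else 0 := by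
      intro T hT
      rw [← Finset.sum_filter]
      congr 1
      ext K
      simp only [Finset.mem_filter]
      exact ⟨fun h => ⟨hcliq T hT h, h⟩, fun h => h.2⟩
    calc (D.choose u : ℝ) * ∑ T ∈ copies, s T
        = ∑ T ∈ copies, ∑ K ∈ G.cliqueFinset u,
            if K ∈ (DT T).powersetCard u then s T else 0 := by
          rw [step1]; exact Finset.sum_congr rfl step2
      _ = ∑ K ∈ G.cliqueFinset u, ∑ T ∈ copies,
            if K ∈ (DT T).powersetCard u then s T else 0 := Finset.sum_comm
      _ = ∑ K ∈ G.cliqueFinset u,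
            ∑ T ∈ copies.filter (fun T => K ∈ (DT T).powersetCard u), s T := by
          exact Finset.sum_congr rfl (fun K _ => (Finset.sum_filter _ _).symm)
      _ ≤ ∑ K ∈ G.cliqueFinset u, (NN : ℝ) := Finset.sum_le_sum main
      _ = (NN : ℝ) * ((G.cliqueFinset u).card : ℝ) := by
          rw [Finset.sum_const, nsmul_eq_mul, mul_comm]
  rw [div_mul_eq_mul_div, le_div_iff₀ hCDu]
  calc (∑ T ∈ copies, s T) * (D.choose u : ℝ)
      = (D.choose u : ℝ) * ∑ T ∈ copies, s T := mul_comm _ _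
    _ ≤ (NN : ℝ) * ((G.cliqueFinset u).card : ℝ) := key
end

section
/- Let G be a graph on n vertices. For each edge e = {u, v} of G define s(e) = 1 / max(d_G(u), d_G(v)). Then the sum of s(e) over all edges e of G is at most n/2, and equality holds if and only if G has no isolated vertices and every connected component of G is regular. -/
open Finset

/-- The weight of an edge `{u, v}`: `1 / max(d_G(u), d_G(v))`. -/
noncomputable def edgeWeight {V : Type*} [Fintype V] (G : SimpleGraph V)
    [DecidableRel G.Adj] : Sym2 V → ℝ :=
  Sym2.lift ⟨fun u v => (1 : ℝ) / (max (G.degree u) (G.degree v) : ℕ),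
    fun u v => by show (1:ℝ) / (max (G.degree u) (G.degree v) : ℕ) = _; rw [max_comm]⟩

lemma sum_lift_add {V : Type*} [Fintype V] [DecidableEq V] (G : SimpleGraph V)
    [DecidableRel G.Adj] (f : V → ℝ) :
    ∑ e ∈ G.edgeFinset, Sym2.lift ⟨fun u v => f u + f v, fun u v => by ring⟩ e
      = ∑ v, (G.degree v : ℝ) * f v := by
  have h1 : ∀ e ∈ G.edgeFinset,
      Sym2.lift ⟨fun u v => f u + f v, fun u v => by ring⟩ e
        = ∑ v ∈ Finset.univ.filter (· ∈ e), f v := by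
    intro e
    induction e with
    | _ u v =>
      intro he
      rw [SimpleGraph.mem_edgeFinset, SimpleGraph.mem_edgeSet] at he
      have huv : u ≠ v := he.ne
      have hset : Finset.univ.filter (· ∈ s(u,v)) = {u, v} := by
        ext x; simp [Sym2.mem_iff]
      rw [Sym2.lift_mk, hset, Finset.sum_pair huv]
  rw [Finset.sum_congr rfl h1]
  simp_rw [Finset.sum_filter]
  rw [Finset.sum_comm]
  refine Finset.sum_congr rfl fun v _ => ?_
  rw [← Finset.sum_filter, ← SimpleGraph.incidenceFinset_eq_filter, Finset.sum_const,
    SimpleGraph.card_incidenceFinset_eq_degree]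
  simp [mul_comm]

lemma weight_le_half (a b : ℝ) (ha : 0 < a) (hb : 0 < b) :
    1 / (max a b) ≤ 1/(2*a) + 1/(2*b) := by
  rcases le_total a b with h | h
  · rw [max_eq_right h]
    have h1 : 1/(2*b) ≤ 1/(2*a) := by
      apply one_div_le_one_div_of_le (by positivity); linarith
    have h2 : (1:ℝ)/b = 1/(2*b) + 1/(2*b) := by field_simp; ring
    linarith
  · rw [max_eq_left h]
    have h1 : 1/(2*a) ≤ 1/(2*b) := by
      apply one_div_le_one_div_of_le (by positivity); linarith
    have h2 : (1:ℝ)/a = 1/(2*a) + 1/(2*a) := by field_simp; ring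
    linarith

lemma weight_eq_half (a b : ℝ) (ha : 0 < a) (hb : 0 < b)
    (h : 1 / (max a b) = 1/(2*a) + 1/(2*b)) : a = b := by
  rcases le_total a b with hab | hab
  · rw [max_eq_right hab] at h
    have hb' : b ≠ 0 := hb.ne'
    have ha' : a ≠ 0 := ha.ne'
    field_simp at h
    nlinarith
  · rw [max_eq_left hab] at h
    have hb' : b ≠ 0 := hb.ne'
    have ha' : a ≠ 0 := ha.ne'
    field_simp at h
    nlinarith

theorem stmt_12 {V : Type*} [Fintype V] [DecidableEq V]
    (G : SimpleGraph V) [DecidableRel G.Adj]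
    (n : ℕ) (hn : Fintype.card V = n) :
    ∑ e ∈ G.edgeFinset, edgeWeight G e ≤ (n : ℝ) / 2 ∧
    (∑ e ∈ G.edgeFinset, edgeWeight G e = (n : ℝ) / 2 ↔
      (∀ v : V, 0 < G.degree v) ∧
        ∀ v w : V, G.Reachable v w → G.degree v = G.degree w) := by
  classical
  set f : V → ℝ := fun v => 1/(2 * (G.degree v : ℝ)) with hf
  have key := sum_lift_add G f
  -- termwise inequality on edges
  have hterm : ∀ e ∈ G.edgeFinset,
      edgeWeight G e ≤ Sym2.lift ⟨fun u v => f u + f v, fun u v => by ring⟩ e := by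
    intro e
    induction e with
    | _ u v =>
      intro he
      rw [SimpleGraph.mem_edgeFinset, SimpleGraph.mem_edgeSet] at he
      have hu : (0:ℝ) < G.degree u := by
        exact_mod_cast (G.degree_pos_iff_exists_adj u).2 ⟨v, he⟩
      have hv : (0:ℝ) < G.degree v := by
        exact_mod_cast (G.degree_pos_iff_exists_adj v).2 ⟨u, he.symm⟩
      show (1:ℝ)/((max (G.degree u) (G.degree v) : ℕ) : ℝ) ≤ f u + f v
      rw [Nat.cast_max]
      exact weight_le_half _ _ hu hv
  have hvterm : ∀ v : V, (G.degree v : ℝ) * f v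
      = if G.degree v = 0 then 0 else 1/2 := by
    intro v
    by_cases h : G.degree v = 0
    · simp [hf, h]
    · have h' : (G.degree v : ℝ) ≠ 0 := Nat.cast_ne_zero.2 h
      rw [if_neg h, hf]
      field_simp
  have hsum2 : ∑ v : V, ((1:ℝ)/2) = (n:ℝ)/2 := by
    rw [Finset.sum_const, Finset.card_univ, hn]
    simp [nsmul_eq_mul]
    ring
  have hbound : ∑ v, (G.degree v : ℝ) * f v ≤ (n : ℝ) / 2 := by
    rw [← hsum2]
    refine Finset.sum_le_sum fun v _ => ?_
    rw [hvterm v]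
    split <;> norm_num
  have hST : ∑ e ∈ G.edgeFinset, edgeWeight G e
      ≤ ∑ e ∈ G.edgeFinset, Sym2.lift ⟨fun u v => f u + f v, fun u v => by ring⟩ e :=
    Finset.sum_le_sum hterm
  have hle : ∑ e ∈ G.edgeFinset, edgeWeight G e ≤ (n : ℝ) / 2 :=
    hST.trans (key ▸ hbound)
  refine ⟨hle, ?_, ?_⟩
  · -- forward direction
    intro hS
    have hTle : ∑ e ∈ G.edgeFinset, Sym2.lift ⟨fun u v => f u + f v, fun u v => by ring⟩ e
        ≤ (n:ℝ)/2 := key ▸ hbound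
    have hSeqT : ∑ e ∈ G.edgeFinset, edgeWeight G e
        = ∑ e ∈ G.edgeFinset, Sym2.lift ⟨fun u v => f u + f v, fun u v => by ring⟩ e :=
      le_antisymm hST (by rw [hS]; exact hTle)
    have hTeq : ∑ v, (G.degree v : ℝ) * f v = (n:ℝ)/2 := by
      rw [← key, ← hSeqT, hS]
    -- all degrees positive
    have hpos : ∀ v : V, 0 < G.degree v := by
      by_contra hc
      push_neg at hc
      obtain ⟨v0, hv0⟩ := hc
      have hv0' : G.degree v0 = 0 := Nat.le_zero.mp hv0
      have hlt : ∑ v, (G.degree v : ℝ) * f v < ∑ v : V, ((1:ℝ)/2) := by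
        refine Finset.sum_lt_sum (fun v _ => by rw [hvterm v]; split <;> norm_num)
          ⟨v0, Finset.mem_univ v0, by rw [hvterm v0, if_pos hv0']; norm_num⟩
      rw [hsum2, hTeq] at hlt
      exact lt_irrefl _ hlt
    -- termwise equality on edges
    have htermeq := (Finset.sum_eq_sum_iff_of_le hterm).1 hSeqT
    have hadj_eq : ∀ u v : V, G.Adj u v → G.degree u = G.degree v := by
      intro u v huv
      have hmem : s(u,v) ∈ G.edgeFinset := by
        rw [SimpleGraph.mem_edgeFinset, SimpleGraph.mem_edgeSet]; exact huv
      have heq := htermeq _ hmem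
      have hu : (0:ℝ) < G.degree u := by exact_mod_cast hpos u
      have hv : (0:ℝ) < G.degree v := by exact_mod_cast hpos v
      have heq' : (1:ℝ)/(max (G.degree u : ℝ) (G.degree v : ℝ))
          = 1/(2*(G.degree u : ℝ)) + 1/(2*(G.degree v : ℝ)) := by
        have : (1:ℝ)/((max (G.degree u) (G.degree v) : ℕ) : ℝ) = f u + f v := heq
        rwa [Nat.cast_max] at this
      exact_mod_cast weight_eq_half _ _ hu hv heq'
    refine ⟨hpos, fun v w hr => ?_⟩
    obtain ⟨p⟩ := hr
    induction p with
    | nil => rfl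
    | cons h p ih => exact (hadj_eq _ _ h).trans ih
  · -- backward direction
    rintro ⟨hpos, hreg⟩
    have hadj_eq : ∀ u v : V, G.Adj u v → G.degree u = G.degree v :=
      fun u v h => hreg u v h.reachable
    have hSeqT : ∀ e ∈ G.edgeFinset,
        edgeWeight G e = Sym2.lift ⟨fun u v => f u + f v, fun u v => by ring⟩ e := by
      intro e
      induction e with
      | _ u v =>
        intro he
        rw [SimpleGraph.mem_edgeFinset, SimpleGraph.mem_edgeSet] at he
        have hd : G.degree u = G.degree v := hadj_eq _ _ he
        have hu : (G.degree u : ℝ) ≠ 0 := Nat.cast_ne_zero.2 (hpos u).ne'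
        show (1:ℝ)/((max (G.degree u) (G.degree v) : ℕ) : ℝ) = f u + f v
        have hv : (G.degree v : ℝ) ≠ 0 := Nat.cast_ne_zero.2 (hpos v).ne'
        simp only [hf]
        rw [hd, max_self]
        field_simp
        ring
    rw [Finset.sum_congr rfl hSeqT, key]
    rw [← hsum2]
    refine Finset.sum_congr rfl fun v _ => ?_
    rw [hvterm v, if_neg (hpos v).ne']
end

section
/- Let t ≥ 1 and let G be a graph on n vertices. For each t-clique T of G define θ_G(T) = max{ d_G(v) : v ∈ T } and s^1_G(T) = 1 / C(θ_G(T), t-1). Then the sum of s^1_G(T) over all t-cliques T of G is at most n/t. Moreover, when t ≥ 3 equality holds if and only if G is a disjoint union of complete graphs each of order at least t. -/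
open Finset

namespace Stmt13Aux

variable {V : Type*} [Fintype V] [DecidableEq V]

lemma erase_mem (G : SimpleGraph V) [DecidableRel G.Adj] {t : ℕ} {v : V} {T : Finset V}
    (hT : G.IsNClique t T) (hv : v ∈ T) :
    T.erase v ∈ (G.neighborFinset v).powersetCard (t - 1) := by
  rw [Finset.mem_powersetCard]
  refine ⟨fun u hu => ?_, ?_⟩
  · rw [Finset.mem_erase] at hu
    rw [SimpleGraph.mem_neighborFinset]
    exact hT.1 (Finset.mem_coe.mpr hv) (Finset.mem_coe.mpr hu.2) (Ne.symm hu.1)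
  · rw [Finset.card_erase_of_mem hv, hT.2]

lemma card_filter_le (G : SimpleGraph V) [DecidableRel G.Adj] (t : ℕ) (v : V) :
    ((G.cliqueFinset t).filter (fun T => v ∈ T)).card ≤ (G.degree v).choose (t - 1) := by
  have h := Finset.card_le_card_of_injOn (fun T => T.erase v)
    (s := (G.cliqueFinset t).filter (fun T => v ∈ T))
    (t := (G.neighborFinset v).powersetCard (t - 1))
    (fun T hT => by
      rw [Finset.mem_coe, Finset.mem_filter, SimpleGraph.mem_cliqueFinset_iff] at hT
      exact erase_mem G hT.1 hT.2)
    (fun T1 h1 T2 h2 he => by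
      simp only [Finset.coe_filter, Set.mem_setOf_eq, SimpleGraph.mem_cliqueFinset_iff] at h1 h2
      have he' : T1.erase v = T2.erase v := he
      rw [← Finset.insert_erase h1.2, he', Finset.insert_erase h2.2])
  rwa [Finset.card_powersetCard, G.card_neighborFinset_eq_degree] at h

lemma swap_sum (G : SimpleGraph V) [DecidableRel G.Adj] (t : ℕ) (f : Finset V → ℝ) :
    (t : ℝ) * ∑ T ∈ G.cliqueFinset t, f T
      = ∑ v : V, ∑ T ∈ (G.cliqueFinset t).filter (fun T => v ∈ T), f T := by
  calc (t : ℝ) * ∑ T ∈ G.cliqueFinset t, f T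
      = ∑ T ∈ G.cliqueFinset t, ∑ v : V, (if v ∈ T then f T else 0) := by
        rw [Finset.mul_sum]
        refine Finset.sum_congr rfl fun T hT => ?_
        rw [Finset.sum_ite_mem, Finset.univ_inter, Finset.sum_const,
          (SimpleGraph.mem_cliqueFinset_iff.mp hT).2, nsmul_eq_mul]
    _ = ∑ v : V, ∑ T ∈ (G.cliqueFinset t).filter (fun T => v ∈ T), f T := by
        rw [Finset.sum_comm]
        exact Finset.sum_congr rfl fun v _ => (Finset.sum_filter _ _).symm

lemma inner_le_one (G : SimpleGraph V) [DecidableRel G.Adj] (t : ℕ) (θ : Finset V → ℕ)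
    (hθ : ∀ T : Finset V, θ T = T.sup (fun v => G.degree v)) (v : V) :
    ∑ T ∈ (G.cliqueFinset t).filter (fun T => v ∈ T),
      (1 : ℝ) / ((θ T).choose (t - 1) : ℝ) ≤ 1 := by
  rcases Finset.eq_empty_or_nonempty ((G.cliqueFinset t).filter (fun T => v ∈ T)) with he | hne
  · rw [he, Finset.sum_empty]; norm_num
  obtain ⟨T0, hT0⟩ := hne
  have hT0' := hT0
  rw [Finset.mem_filter, SimpleGraph.mem_cliqueFinset_iff] at hT0'
  have hd : t - 1 ≤ G.degree v := by
    have h := erase_mem G hT0'.1 hT0'.2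
    rw [Finset.mem_powersetCard] at h
    calc t - 1 = (T0.erase v).card := h.2.symm
      _ ≤ (G.neighborFinset v).card := Finset.card_le_card h.1
      _ = G.degree v := G.card_neighborFinset_eq_degree v
  have hC : 0 < (G.degree v).choose (t - 1) := Nat.choose_pos hd
  have hCR : (0 : ℝ) < ((G.degree v).choose (t - 1) : ℝ) := by exact_mod_cast hC
  have hbound : ∀ T ∈ (G.cliqueFinset t).filter (fun T => v ∈ T),
      (1 : ℝ) / ((θ T).choose (t - 1) : ℝ) ≤ 1 / ((G.degree v).choose (t - 1) : ℝ) := by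
    intro T hT
    rw [Finset.mem_filter, SimpleGraph.mem_cliqueFinset_iff] at hT
    have hdθ : G.degree v ≤ θ T := by
      rw [hθ]; exact Finset.le_sup (f := fun v => G.degree v) hT.2
    apply one_div_le_one_div_of_le hCR
    exact_mod_cast Nat.choose_le_choose _ hdθ
  calc ∑ T ∈ (G.cliqueFinset t).filter (fun T => v ∈ T), (1 : ℝ) / ((θ T).choose (t - 1) : ℝ)
      ≤ ((G.cliqueFinset t).filter (fun T => v ∈ T)).card
          • ((1 : ℝ) / ((G.degree v).choose (t - 1) : ℝ)) :=
        Finset.sum_le_card_nsmul _ _ _ hbound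
    _ = (((G.cliqueFinset t).filter (fun T => v ∈ T)).card : ℝ)
          * ((1 : ℝ) / ((G.degree v).choose (t - 1) : ℝ)) := nsmul_eq_mul _ _
    _ ≤ (((G.degree v).choose (t - 1) : ℕ) : ℝ)
          * ((1 : ℝ) / ((G.degree v).choose (t - 1) : ℝ)) := by
        apply mul_le_mul_of_nonneg_right
        · exact_mod_cast card_filter_le G t v
        · positivity
    _ = 1 := by field_simp

lemma forced (G : SimpleGraph V) [DecidableRel G.Adj] {t : ℕ} (ht3 : 3 ≤ t)
    (θ : Finset V → ℕ) (hθ : ∀ T : Finset V, θ T = T.sup (fun v => G.degree v)) (v : V)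
    (hv : ∑ T ∈ (G.cliqueFinset t).filter (fun T => v ∈ T),
      (1 : ℝ) / ((θ T).choose (t - 1) : ℝ) = 1) :
    t - 1 ≤ G.degree v ∧ ∀ u w : V, G.Adj v u → G.Adj v w → u ≠ w → G.Adj u w := by
  have hne : ((G.cliqueFinset t).filter (fun T => v ∈ T)).Nonempty := by
    by_contra h
    rw [Finset.not_nonempty_iff_eq_empty] at h
    rw [h, Finset.sum_empty] at hv
    norm_num at hv
  obtain ⟨T0, hT0⟩ := hne
  have hT0' := hT0
  rw [Finset.mem_filter, SimpleGraph.mem_cliqueFinset_iff] at hT0'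
  have hd : t - 1 ≤ G.degree v := by
    have h := erase_mem G hT0'.1 hT0'.2
    rw [Finset.mem_powersetCard] at h
    calc t - 1 = (T0.erase v).card := h.2.symm
      _ ≤ (G.neighborFinset v).card := Finset.card_le_card h.1
      _ = G.degree v := G.card_neighborFinset_eq_degree v
  have hC : 0 < (G.degree v).choose (t - 1) := Nat.choose_pos hd
  have hCR : (0 : ℝ) < ((G.degree v).choose (t - 1) : ℝ) := by exact_mod_cast hC
  have hbound : ∀ T ∈ (G.cliqueFinset t).filter (fun T => v ∈ T),
      (1 : ℝ) / ((θ T).choose (t - 1) : ℝ) ≤ 1 / ((G.degree v).choose (t - 1) : ℝ) := by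
    intro T hT
    rw [Finset.mem_filter, SimpleGraph.mem_cliqueFinset_iff] at hT
    have hdθ : G.degree v ≤ θ T := by
      rw [hθ]; exact Finset.le_sup (f := fun v => G.degree v) hT.2
    apply one_div_le_one_div_of_le hCR
    exact_mod_cast Nat.choose_le_choose _ hdθ
  -- card = choose
  have hub : (1 : ℝ) ≤ (((G.cliqueFinset t).filter (fun T => v ∈ T)).card : ℝ)
      * ((1 : ℝ) / ((G.degree v).choose (t - 1) : ℝ)) := by
    calc (1 : ℝ) = ∑ T ∈ (G.cliqueFinset t).filter (fun T => v ∈ T),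
        (1 : ℝ) / ((θ T).choose (t - 1) : ℝ) := hv.symm
      _ ≤ _ := by
        rw [← nsmul_eq_mul]
        exact Finset.sum_le_card_nsmul _ _ _ hbound
  have hge : (G.degree v).choose (t - 1) ≤ ((G.cliqueFinset t).filter (fun T => v ∈ T)).card := by
    have h1 : ((G.degree v).choose (t - 1) : ℝ)
        ≤ (((G.cliqueFinset t).filter (fun T => v ∈ T)).card : ℝ) := by
      rw [mul_one_div] at hub
      have := (one_le_div hCR).mp hub
      exact this
    exact_mod_cast h1
  have hcard : ((G.cliqueFinset t).filter (fun T => v ∈ T)).card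
      = (G.degree v).choose (t - 1) := le_antisymm (card_filter_le G t v) hge
  have hsurj := Finset.surj_on_of_inj_on_of_card_le
    (s := (G.cliqueFinset t).filter (fun T => v ∈ T))
    (t := (G.neighborFinset v).powersetCard (t - 1))
    (fun T _ => T.erase v)
    (fun T hT => by
      rw [Finset.mem_filter, SimpleGraph.mem_cliqueFinset_iff] at hT
      exact erase_mem G hT.1 hT.2)
    (fun T1 T2 h1 h2 he => by
      rw [Finset.mem_filter] at h1 h2
      have he' : T1.erase v = T2.erase v := he
      rw [← Finset.insert_erase h1.2, he', Finset.insert_erase h2.2])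
    (by rw [Finset.card_powersetCard, G.card_neighborFinset_eq_degree, hcard])
  have hclique : ∀ S ∈ (G.neighborFinset v).powersetCard (t - 1),
      G.IsNClique t (insert v S) := by
    intro S hS
    obtain ⟨T, hT, hTS⟩ := hsurj S hS
    rw [Finset.mem_filter, SimpleGraph.mem_cliqueFinset_iff] at hT
    have h : insert v S = T := by rw [hTS]; exact Finset.insert_erase hT.2
    rw [h]; exact hT.1
  refine ⟨hd, fun u w hu hw huw => ?_⟩
  have hsub : ({u, w} : Finset V) ⊆ G.neighborFinset v := by
    intro x hx
    rcases Finset.mem_insert.mp hx with h | h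
    · subst h; exact (SimpleGraph.mem_neighborFinset _ _ _).mpr hu
    · rw [Finset.mem_singleton] at h
      subst h; exact (SimpleGraph.mem_neighborFinset _ _ _).mpr hw
  obtain ⟨S, hS1, hS2, hS3⟩ := Finset.exists_subsuperset_card_eq (n := t - 1) hsub
    (by rw [Finset.card_pair huw]; omega)
    (by rw [G.card_neighborFinset_eq_degree]; exact hd)
  have hc := hclique S (Finset.mem_powersetCard.mpr ⟨hS2, hS3⟩)
  exact hc.1
    (Finset.mem_coe.mpr (Finset.mem_insert_of_mem (hS1 (Finset.mem_insert_self u {w}))))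
    (Finset.mem_coe.mpr (Finset.mem_insert_of_mem
      (hS1 (Finset.mem_insert_of_mem (Finset.mem_singleton_self w)))))
    huw

lemma walk_adj (G : SimpleGraph V)
    (hP : ∀ v u w : V, G.Adj v u → G.Adj v w → u ≠ w → G.Adj u w) :
    ∀ {v w : V}, G.Walk v w → v ≠ w → G.Adj v w := by
  intro v w p
  induction p with
  | nil => intro h; exact absurd rfl h
  | @cons a b c h p ih =>
    intro hac
    by_cases hbc : b = c
    · exact hbc ▸ h
    · exact hP b a c h.symm (ih hbc) hac

lemma natcard_reach (G : SimpleGraph V) (v : V)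
    [DecidablePred fun w => G.Reachable v w] :
    Nat.card {w : V | G.Reachable v w}
      = (univ.filter (fun w => G.Reachable v w)).card := by
  rw [Nat.card_coe_set_eq, Set.ncard_eq_toFinset_card', Set.toFinset_setOf]

lemma inner_eq_one (G : SimpleGraph V) [DecidableRel G.Adj] {t : ℕ} (ht : 1 ≤ t)
    (θ : Finset V → ℕ) (hθ : ∀ T : Finset V, θ T = T.sup (fun v => G.degree v))
    (H1 : ∀ v w : V, G.Reachable v w → v ≠ w → G.Adj v w)
    (v : V) (H2 : t ≤ Nat.card {w : V | G.Reachable v w}) :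
    ∑ T ∈ (G.cliqueFinset t).filter (fun T => v ∈ T),
      (1 : ℝ) / ((θ T).choose (t - 1) : ℝ) = 1 := by
  classical
  set R : Finset V := univ.filter (fun w => G.Reachable v w) with hR
  have hRcard : Nat.card {w : V | G.Reachable v w} = R.card := natcard_reach G v
  have hvR : v ∈ R := Finset.mem_filter.mpr ⟨Finset.mem_univ v, SimpleGraph.Reachable.refl v⟩
  have hN : ∀ u : V, G.neighborFinset u
      = (univ.filter (fun w => G.Reachable u w)).erase u := by
    intro u; ext w
    simp only [SimpleGraph.mem_neighborFinset, Finset.mem_erase, Finset.mem_filter,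
      Finset.mem_univ, true_and]
    constructor
    · intro h; exact ⟨h.ne', h.reachable⟩
    · intro h; exact H1 u w h.2 (Ne.symm h.1)
  have hRu : ∀ u : V, G.Reachable v u
      → (univ.filter (fun w => G.Reachable u w)) = R := by
    intro u huv; ext w
    simp only [hR, Finset.mem_filter, Finset.mem_univ, true_and]
    exact ⟨fun h => huv.trans h, fun h => huv.symm.trans h⟩
  have hdeg : ∀ u : V, G.Reachable v u → G.degree u = R.card - 1 := by
    intro u hu
    have huR : u ∈ R := Finset.mem_filter.mpr ⟨Finset.mem_univ u, hu⟩
    rw [← G.card_neighborFinset_eq_degree, hN u, hRu u hu,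
      Finset.card_erase_of_mem huR]
  have hcardR : t ≤ R.card := hRcard ▸ H2
  have hdv : G.degree v = R.card - 1 := hdeg v (SimpleGraph.Reachable.refl v)
  have hd : t - 1 ≤ G.degree v := by omega
  have hins : ∀ S ∈ (G.neighborFinset v).powersetCard (t - 1),
      G.IsNClique t (insert v S) := by
    intro S hS
    rw [Finset.mem_powersetCard] at hS
    have hSR : ∀ x ∈ insert v S, G.Reachable v x := by
      intro x hx
      rcases Finset.mem_insert.mp hx with rfl | h
      · exact SimpleGraph.Reachable.refl x
      · exact ((SimpleGraph.mem_neighborFinset _ _ _).mp (hS.1 h)).reachable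
    constructor
    · rw [SimpleGraph.isClique_iff]
      intro a ha b hb hab
      exact H1 a b ((hSR a (Finset.mem_coe.mp ha)).symm.trans
        (hSR b (Finset.mem_coe.mp hb))) hab
    · have hvS : v ∉ S := fun hvS =>
        G.irrefl ((SimpleGraph.mem_neighborFinset _ _ _).mp (hS.1 hvS))
      rw [Finset.card_insert_of_notMem hvS, hS.2]
      omega
  have himg : (G.cliqueFinset t).filter (fun T => v ∈ T)
      = ((G.neighborFinset v).powersetCard (t - 1)).image (insert v) := by
    ext T
    simp only [Finset.mem_filter, SimpleGraph.mem_cliqueFinset_iff, Finset.mem_image]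
    constructor
    · rintro ⟨h1, h2⟩
      exact ⟨T.erase v, erase_mem G h1 h2, Finset.insert_erase h2⟩
    · rintro ⟨S, hS, rfl⟩
      exact ⟨hins S hS, Finset.mem_insert_self v S⟩
  have hθT : ∀ T ∈ (G.cliqueFinset t).filter (fun T => v ∈ T), θ T = G.degree v := by
    intro T hT
    rw [Finset.mem_filter, SimpleGraph.mem_cliqueFinset_iff] at hT
    rw [hθ]
    apply le_antisymm
    · apply Finset.sup_le
      intro u hu
      have hreach : G.Reachable v u := by
        by_cases h : u = v
        · subst h; exact SimpleGraph.Reachable.refl u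
        · exact (hT.1.1 (Finset.mem_coe.mpr hT.2) (Finset.mem_coe.mpr hu)
            (Ne.symm h)).reachable
      rw [hdeg u hreach, hdv]
    · exact Finset.le_sup (f := fun u => G.degree u) hT.2
  have hvnot : ∀ S : Finset V, S ⊆ G.neighborFinset v → v ∉ S := by
    intro S hSsub hvS
    exact G.irrefl ((SimpleGraph.mem_neighborFinset _ _ _).mp (hSsub hvS))
  have hcardF : ((G.cliqueFinset t).filter (fun T => v ∈ T)).card
      = (G.degree v).choose (t - 1) := by
    rw [himg, Finset.card_image_of_injOn, Finset.card_powersetCard,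
      G.card_neighborFinset_eq_degree]
    intro S1 h1 S2 h2 he
    rw [Finset.mem_coe, Finset.mem_powersetCard] at h1 h2
    rw [← Finset.erase_insert (hvnot S1 h1.1), he, Finset.erase_insert (hvnot S2 h2.1)]
  have hC : 0 < (G.degree v).choose (t - 1) := Nat.choose_pos hd
  calc ∑ T ∈ (G.cliqueFinset t).filter (fun T => v ∈ T),
        (1 : ℝ) / ((θ T).choose (t - 1) : ℝ)
      = ∑ T ∈ (G.cliqueFinset t).filter (fun T => v ∈ T),
        (1 : ℝ) / (((G.degree v).choose (t - 1)) : ℝ) :=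
        Finset.sum_congr rfl fun T hT => by rw [hθT T hT]
    _ = (((G.cliqueFinset t).filter (fun T => v ∈ T)).card : ℝ)
        * ((1 : ℝ) / (((G.degree v).choose (t - 1)) : ℝ)) := by
        rw [Finset.sum_const, nsmul_eq_mul]
    _ = 1 := by
        rw [hcardF]
        have hCR : ((G.degree v).choose (t - 1) : ℝ) ≠ 0 := by
          exact_mod_cast hC.ne'
        field_simp

end Stmt13Aux

theorem stmt_13 {V : Type*} [Fintype V] [DecidableEq V]
    (G : SimpleGraph V) [DecidableRel G.Adj]
    (t n : ℕ) (ht : 1 ≤ t) (hn : Fintype.card V = n)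
    (θ : Finset V → ℕ) (hθ : ∀ T : Finset V, θ T = T.sup (fun v => G.degree v)) :
    ∑ T ∈ G.cliqueFinset t, (1 : ℝ) / ((θ T).choose (t - 1) : ℝ) ≤ (n : ℝ) / t ∧
    (3 ≤ t →
      (∑ T ∈ G.cliqueFinset t, (1 : ℝ) / ((θ T).choose (t - 1) : ℝ) = (n : ℝ) / t ↔
        (∀ v w : V, G.Reachable v w → v ≠ w → G.Adj v w) ∧
          ∀ v : V, t ≤ Nat.card {w : V | G.Reachable v w})) := by
  classical
  subst hn
  have ht0 : (0 : ℝ) < (t : ℝ) := by exact_mod_cast ht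
  have hswap := Stmt13Aux.swap_sum G t (fun T => (1 : ℝ) / ((θ T).choose (t - 1) : ℝ))
  have hinner := fun v : V => Stmt13Aux.inner_le_one G t θ hθ v
  have hmain : (t : ℝ) * ∑ T ∈ G.cliqueFinset t, (1 : ℝ) / ((θ T).choose (t - 1) : ℝ)
      ≤ (Fintype.card V : ℝ) := by
    rw [hswap]
    calc ∑ v : V, ∑ T ∈ (G.cliqueFinset t).filter (fun T => v ∈ T),
          (1 : ℝ) / ((θ T).choose (t - 1) : ℝ)
        ≤ ∑ _v : V, (1 : ℝ) := Finset.sum_le_sum fun v _ => hinner v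
      _ = (Fintype.card V : ℝ) := by
          rw [Finset.sum_const, Finset.card_univ, nsmul_eq_mul, mul_one]
  refine ⟨?_, ?_⟩
  · rw [le_div_iff₀ ht0]
    calc (∑ T ∈ G.cliqueFinset t, (1 : ℝ) / ((θ T).choose (t - 1) : ℝ)) * t
        = (t : ℝ) * ∑ T ∈ G.cliqueFinset t, (1 : ℝ) / ((θ T).choose (t - 1) : ℝ) :=
          mul_comm _ _
      _ ≤ _ := hmain
  · intro ht3
    constructor
    · intro heq
      have htS : (t : ℝ) * ∑ T ∈ G.cliqueFinset t, (1 : ℝ) / ((θ T).choose (t - 1) : ℝ)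
          = (Fintype.card V : ℝ) := by
        rw [heq]
        field_simp
      have heach : ∀ v : V, ∑ T ∈ (G.cliqueFinset t).filter (fun T => v ∈ T),
          (1 : ℝ) / ((θ T).choose (t - 1) : ℝ) = 1 := by
        have hsum : ∑ v : V, ∑ T ∈ (G.cliqueFinset t).filter (fun T => v ∈ T),
            (1 : ℝ) / ((θ T).choose (t - 1) : ℝ) = ∑ _v : V, (1 : ℝ) := by
          rw [← hswap, htS, Finset.sum_const, Finset.card_univ, nsmul_eq_mul, mul_one]
        intro v
        by_contra hcon
        have hlt := Finset.sum_lt_sum (fun i (_ : i ∈ univ) => hinner i)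
          ⟨v, Finset.mem_univ v, lt_of_le_of_ne (hinner v) hcon⟩
        rw [hsum] at hlt
        exact lt_irrefl _ hlt
      have hforce := fun v : V => Stmt13Aux.forced G ht3 θ hθ v (heach v)
      have H1 : ∀ v w : V, G.Reachable v w → v ≠ w → G.Adj v w := by
        intro v w hr hvw
        obtain ⟨p⟩ := hr
        exact Stmt13Aux.walk_adj G (fun a b c h1 h2 => (hforce a).2 b c h1 h2) p hvw
      refine ⟨H1, fun v => ?_⟩
      rw [Stmt13Aux.natcard_reach G v]
      have hsub : insert v (G.neighborFinset v)
          ⊆ univ.filter (fun w => G.Reachable v w) := by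
        intro x hx
        rcases Finset.mem_insert.mp hx with h | h
        · subst h
          exact Finset.mem_filter.mpr ⟨Finset.mem_univ _, SimpleGraph.Reachable.refl _⟩
        · exact Finset.mem_filter.mpr ⟨Finset.mem_univ _,
            ((SimpleGraph.mem_neighborFinset _ _ _).mp h).reachable⟩
      have h1 : t ≤ (insert v (G.neighborFinset v)).card := by
        rw [Finset.card_insert_of_notMem (by simp [SimpleGraph.mem_neighborFinset]),
          G.card_neighborFinset_eq_degree]
        have := (hforce v).1
        omega
      exact le_trans h1 (Finset.card_le_card hsub)
    · rintro ⟨H1, H2⟩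
      have heach := fun v : V => Stmt13Aux.inner_eq_one G ht θ hθ H1 v (H2 v)
      have htS : (t : ℝ) * ∑ T ∈ G.cliqueFinset t, (1 : ℝ) / ((θ T).choose (t - 1) : ℝ)
          = (Fintype.card V : ℝ) := by
        rw [hswap]
        calc ∑ v : V, ∑ T ∈ (G.cliqueFinset t).filter (fun T => v ∈ T),
              (1 : ℝ) / ((θ T).choose (t - 1) : ℝ)
            = ∑ _v : V, (1 : ℝ) := Finset.sum_congr rfl fun v _ => heach v
          _ = (Fintype.card V : ℝ) := by
              rw [Finset.sum_const, Finset.card_univ, nsmul_eq_mul, mul_one]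
      rw [eq_div_iff (ne_of_gt ht0)]
      calc (∑ T ∈ G.cliqueFinset t, (1 : ℝ) / ((θ T).choose (t - 1) : ℝ)) * t
          = (t : ℝ) * ∑ T ∈ G.cliqueFinset t, (1 : ℝ) / ((θ T).choose (t - 1) : ℝ) :=
            mul_comm _ _
        _ = _ := htS
end

section
/- Let t ≥ 2 and let G be a graph with m edges. For each t-clique T of G define θ_G(T) = max{ d_G(v) : v ∈ T } and s^2_G(T) = 1 / C(θ_G(T) - 1, t-2). Then the sum of s^2_G(T) over all t-cliques T of G is at most m / C(t, 2). Moreover, when t ≥ 3 equality holds if and only if G is a disjoint union of complete graphs of order at least t together with any number of isolated vertices. -/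
open Finset

set_option linter.unusedSectionVars false
namespace Stmt14

variable {V : Type*} [Fintype V] [DecidableEq V] (G : SimpleGraph V) [DecidableRel G.Adj]

noncomputable def wt (k : ℕ) (T : Finset V) : ℝ :=
  1 / (((T.sup fun v => G.degree v) - 1).choose k : ℝ)

def A (k : ℕ) (u v : V) : Finset (Finset V) :=
  (G.cliqueFinset (k + 2)).filter fun T => u ∈ T ∧ v ∈ T

lemma wt_nonneg (k : ℕ) (T : Finset V) : 0 ≤ wt G k T := by
  rw [wt]; positivity

lemma deg_ge {k : ℕ} {T : Finset V} (hT : T ∈ G.cliqueFinset (k + 2)) {u : V} (hu : u ∈ T) :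
    k + 1 ≤ G.degree u := by
  rw [SimpleGraph.mem_cliqueFinset_iff] at hT
  have hsub : T.erase u ⊆ G.neighborFinset u := by
    intro x hx
    rw [Finset.mem_erase] at hx
    rw [SimpleGraph.mem_neighborFinset]
    exact hT.1 (Finset.mem_coe.2 hu) (Finset.mem_coe.2 hx.2) (Ne.symm hx.1)
  have := Finset.card_le_card hsub
  rw [Finset.card_erase_of_mem hu, hT.2, SimpleGraph.card_neighborFinset_eq_degree] at this
  omega

lemma pair_subset {k : ℕ} {u v : V} {T : Finset V} (hT : T ∈ A G k u v) :
    ({u, v} : Finset V) ⊆ T := by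
  have h := Finset.mem_filter.1 hT
  exact Finset.insert_subset h.2.1 (Finset.singleton_subset_iff.2 h.2.2)

lemma sdiff_mem_pc {k : ℕ} {u v : V} (huv : G.Adj u v) {T : Finset V} (hT : T ∈ A G k u v) :
    T \ {u, v} ∈ ((G.neighborFinset u).erase v).powersetCard k := by
  have h := Finset.mem_filter.1 hT
  obtain ⟨hTc, hu, hv⟩ := h
  rw [SimpleGraph.mem_cliqueFinset_iff] at hTc
  rw [Finset.mem_powersetCard]
  constructor
  · intro x hx
    rw [Finset.mem_sdiff, Finset.mem_insert, Finset.mem_singleton] at hx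
    push_neg at hx
    obtain ⟨hxT, hxu, hxv⟩ := hx
    refine Finset.mem_erase.2 ⟨hxv, ?_⟩
    rw [SimpleGraph.mem_neighborFinset]
    exact hTc.1 (Finset.mem_coe.2 hu) (Finset.mem_coe.2 hxT) (Ne.symm hxu)
  · have h2 : ({u, v} : Finset V).card = 2 := by
      rw [Finset.card_insert_of_notMem (by simp [G.ne_of_adj huv]), Finset.card_singleton]
    rw [Finset.card_sdiff_of_subset (pair_subset G hT), h2, hTc.2]; omega

lemma injA {k : ℕ} {u v : V} : Set.InjOn (fun T => T \ ({u, v} : Finset V)) (A G k u v) := by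
  intro T1 h1 T2 h2 h
  have s1 := pair_subset G (Finset.mem_coe.1 h1)
  have s2 := pair_subset G (Finset.mem_coe.1 h2)
  rw [← Finset.sdiff_union_of_subset s1, ← Finset.sdiff_union_of_subset s2]
  simp only at h
  rw [h]

lemma card_A_le {k : ℕ} {u v : V} (huv : G.Adj u v) :
    (A G k u v).card ≤ (G.degree u - 1).choose k := by
  have h := Finset.card_le_card_of_injOn (s := A G k u v)
    (t := ((G.neighborFinset u).erase v).powersetCard k) (fun T => T \ ({u, v} : Finset V))
    (fun T hT => sdiff_mem_pc G huv hT) (injA G)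
  rwa [Finset.card_powersetCard, Finset.card_erase_of_mem
    ((SimpleGraph.mem_neighborFinset G u v).2 huv),
    SimpleGraph.card_neighborFinset_eq_degree] at h

lemma wt_le {k : ℕ} {u : V} {T : Finset V} (hT : T ∈ G.cliqueFinset (k + 2)) (hu : u ∈ T) :
    wt G k T ≤ 1 / ((G.degree u - 1).choose k : ℝ) := by
  have h1 : k + 1 ≤ G.degree u := deg_ge G hT hu
  have h2 : k ≤ G.degree u - 1 := by omega
  have h3 : G.degree u - 1 ≤ (T.sup fun v => G.degree v) - 1 :=
    Nat.sub_le_sub_right (Finset.le_sup (f := fun v => G.degree v) hu) 1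
  have hp1 : 0 < (G.degree u - 1).choose k := Nat.choose_pos h2
  rw [wt]
  apply one_div_le_one_div_of_le (by exact_mod_cast hp1)
  exact_mod_cast Nat.choose_le_choose k h3


lemma pair_sum_le {k : ℕ} {u v : V} (huv : G.Adj u v) :
    ∑ T ∈ A G k u v, wt G k T ≤ 1 := by
  rcases (A G k u v).eq_empty_or_nonempty with hA | hA
  · simp [hA]
  obtain ⟨T0, hT0⟩ := hA
  have hT0' := Finset.mem_filter.1 hT0
  have hdeg : k + 1 ≤ G.degree u := deg_ge G hT0'.1 hT0'.2.1
  have hCpos : 0 < (G.degree u - 1).choose k := Nat.choose_pos (by omega)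
  have hCpos' : (0 : ℝ) < ((G.degree u - 1).choose k : ℝ) := by exact_mod_cast hCpos
  have hcard : (A G k u v).card ≤ (G.degree u - 1).choose k := card_A_le G huv
  calc ∑ T ∈ A G k u v, wt G k T
      ≤ ∑ T ∈ A G k u v, 1 / (((G.degree u - 1).choose k : ℕ) : ℝ) := by
        refine Finset.sum_le_sum fun T hT => ?_
        have h := Finset.mem_filter.1 hT
        exact wt_le G h.1 h.2.1
    _ = ((A G k u v).card : ℝ) * (1 / (((G.degree u - 1).choose k : ℕ) : ℝ)) := by
        rw [Finset.sum_const, nsmul_eq_mul]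
    _ ≤ (((G.degree u - 1).choose k : ℕ) : ℝ) * (1 / (((G.degree u - 1).choose k : ℕ) : ℝ)) := by
        apply mul_le_mul_of_nonneg_right (by exact_mod_cast hcard) (by positivity)
    _ = 1 := by field_simp

lemma A_nonempty_of_sum {k : ℕ} {u v : V} (h : ∑ T ∈ A G k u v, wt G k T = 1) :
    (A G k u v).Nonempty := by
  by_contra hA
  rw [Finset.not_nonempty_iff_eq_empty] at hA
  rw [hA] at h
  simp at h

lemma image_eq_of_sum_eq {k : ℕ} {u v : V} (huv : G.Adj u v)
    (h : ∑ T ∈ A G k u v, wt G k T = 1) :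
    (A G k u v).image (fun T => T \ ({u, v} : Finset V))
      = ((G.neighborFinset u).erase v).powersetCard k := by
  obtain ⟨T0, hT0⟩ := A_nonempty_of_sum G h
  have hT0' := Finset.mem_filter.1 hT0
  have hdeg : k + 1 ≤ G.degree u := deg_ge G hT0'.1 hT0'.2.1
  have hCpos : 0 < (G.degree u - 1).choose k := Nat.choose_pos (by omega)
  have hCpos' : (0 : ℝ) < ((G.degree u - 1).choose k : ℝ) := by exact_mod_cast hCpos
  apply Finset.eq_of_subset_of_card_le
  · intro S hS
    obtain ⟨T, hT, rfl⟩ := Finset.mem_image.1 hS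
    exact sdiff_mem_pc G huv hT
  · rw [Finset.card_image_of_injOn (injA G), Finset.card_powersetCard,
      Finset.card_erase_of_mem ((SimpleGraph.mem_neighborFinset G u v).2 huv),
      SimpleGraph.card_neighborFinset_eq_degree]
    by_contra hlt
    push_neg at hlt
    have hsum : ∑ T ∈ A G k u v, wt G k T
        ≤ ((A G k u v).card : ℝ) * (1 / (((G.degree u - 1).choose k : ℕ) : ℝ)) := by
      calc ∑ T ∈ A G k u v, wt G k T
          ≤ ∑ T ∈ A G k u v, 1 / (((G.degree u - 1).choose k : ℕ) : ℝ) := by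
            refine Finset.sum_le_sum fun T hT => ?_
            have h' := Finset.mem_filter.1 hT
            exact wt_le G h'.1 h'.2.1
        _ = _ := by rw [Finset.sum_const, nsmul_eq_mul]
    have hlt' : ((A G k u v).card : ℝ) * (1 / (((G.degree u - 1).choose k : ℕ) : ℝ))
        < (((G.degree u - 1).choose k : ℕ) : ℝ) * (1 / (((G.degree u - 1).choose k : ℕ) : ℝ)) := by
      apply mul_lt_mul_of_pos_right (by exact_mod_cast hlt) (by positivity)
    rw [h] at hsum
    have : (((G.degree u - 1).choose k : ℕ) : ℝ) * (1 / (((G.degree u - 1).choose k : ℕ) : ℝ)) = 1 := by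
      field_simp
    linarith

lemma local_adj {k : ℕ} (hk : 1 ≤ k) {u v w : V} (huv : G.Adj u v) (huw : G.Adj u w)
    (hwv : w ≠ v) (h : ∑ T ∈ A G k u v, wt G k T = 1) : G.Adj v w := by
  obtain ⟨T0, hT0⟩ := A_nonempty_of_sum G h
  have hT0' := Finset.mem_filter.1 hT0
  have hdeg : k + 1 ≤ G.degree u := deg_ge G hT0'.1 hT0'.2.1
  have hwmem : w ∈ (G.neighborFinset u).erase v :=
    Finset.mem_erase.2 ⟨hwv, (SimpleGraph.mem_neighborFinset G u w).2 huw⟩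
  have hcard : k ≤ ((G.neighborFinset u).erase v).card := by
    rw [Finset.card_erase_of_mem ((SimpleGraph.mem_neighborFinset G u v).2 huv),
      SimpleGraph.card_neighborFinset_eq_degree]
    omega
  obtain ⟨S, hwS, hSsub, hScard⟩ := Finset.exists_subsuperset_card_eq
    (Finset.singleton_subset_iff.2 hwmem) (by simpa using hk) hcard
  have hS : S ∈ ((G.neighborFinset u).erase v).powersetCard k :=
    Finset.mem_powersetCard.2 ⟨hSsub, hScard⟩
  rw [← image_eq_of_sum_eq G huv h] at hS
  obtain ⟨T, hT, hTS⟩ := Finset.mem_image.1 hS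
  have hmem := Finset.mem_filter.1 hT
  have hclique := (SimpleGraph.mem_cliqueFinset_iff.1 hmem.1).1
  have hwT : w ∈ T := by
    have : w ∈ T \ ({u, v} : Finset V) := hTS ▸ Finset.singleton_subset_iff.1 hwS
    exact (Finset.mem_sdiff.1 this).1
  exact hclique (Finset.mem_coe.2 hmem.2.2) (Finset.mem_coe.2 hwT) (Ne.symm hwv)

lemma reach_adj (hloc : ∀ a b c : V, G.Adj a b → G.Adj a c → b ≠ c → G.Adj b c) :
    ∀ v w : V, G.Reachable v w → v ≠ w → G.Adj v w := by
  intro v w hr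
  obtain ⟨p⟩ := hr
  induction p with
  | nil => intro h; exact absurd rfl h
  | @cons a x w h q ih =>
    intro hne
    rcases eq_or_ne x w with rfl | hxw
    · exact h
    · exact hloc x a w h.symm (ih hxw) hne

lemma two_choose (k : ℕ) : 2 * (k + 2).choose 2 = (k + 2) * (k + 1) := by
  rw [Nat.choose_two_right]
  have h1 : k + 2 - 1 = k + 1 := by omega
  rw [h1]
  have h2 : 2 ∣ (k + 2) * (k + 1) := by
    have := Nat.even_mul_succ_self (k + 1)
    rw [mul_comm] at this
    exact this.two_dvd
  exact Nat.mul_div_cancel' h2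

lemma cardP : (Finset.univ.filter fun p : V × V => G.Adj p.1 p.2).card
    = 2 * G.edgeFinset.card := by
  rw [← SimpleGraph.dart_card_eq_twice_card_edges, ← Fintype.card_subtype]
  apply Fintype.card_congr
  exact ⟨fun p => ⟨(p.1.1, p.1.2), p.2⟩, fun d => ⟨d.toProd, d.adj⟩,
    fun p => by rfl, fun d => by rfl⟩

lemma sum_id (k : ℕ) :
    ∑ p ∈ (Finset.univ.filter fun p : V × V => G.Adj p.1 p.2), ∑ T ∈ A G k p.1 p.2, wt G k T
      = (((k + 2) * (k + 1) : ℕ) : ℝ) * ∑ T ∈ G.cliqueFinset (k + 2), wt G k T := by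
  have h1 : ∀ p : V × V, ∑ T ∈ A G k p.1 p.2, wt G k T
      = ∑ T ∈ G.cliqueFinset (k + 2), if p.1 ∈ T ∧ p.2 ∈ T then wt G k T else 0 := by
    intro p; rw [A, Finset.sum_filter]
  simp only [h1]
  rw [Finset.sum_comm]
  have h2 : ∀ T ∈ G.cliqueFinset (k + 2),
      (∑ p ∈ (Finset.univ.filter fun p : V × V => G.Adj p.1 p.2),
        if p.1 ∈ T ∧ p.2 ∈ T then wt G k T else 0)
        = (((k + 2) * (k + 1) : ℕ) : ℝ) * wt G k T := by
    intro T hT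
    rw [← Finset.sum_filter, Finset.filter_filter]
    have h3 : (Finset.univ.filter fun p : V × V => G.Adj p.1 p.2 ∧ p.1 ∈ T ∧ p.2 ∈ T)
        = T.offDiag := by
      ext p
      simp only [Finset.mem_filter, Finset.mem_univ, true_and, Finset.mem_offDiag]
      rw [SimpleGraph.mem_cliqueFinset_iff] at hT
      constructor
      · rintro ⟨hadj, ha, hb⟩; exact ⟨ha, hb, G.ne_of_adj hadj⟩
      · rintro ⟨ha, hb, hne⟩
        exact ⟨hT.1 (Finset.mem_coe.2 ha) (Finset.mem_coe.2 hb) hne, ha, hb⟩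
    rw [h3, Finset.sum_const, Finset.offDiag_card, (SimpleGraph.mem_cliqueFinset_iff.1 hT).2]
    have h4 : (k + 2) * (k + 2) - (k + 2) = (k + 2) * (k + 1) :=
      Nat.sub_eq_of_eq_add (by ring)
    rw [h4, nsmul_eq_mul]
  rw [Finset.sum_congr rfl h2, ← Finset.mul_sum]

lemma pair_sum_eq_one_of_nice {k : ℕ}
    (hcomp : ∀ v w : V, G.Reachable v w → v ≠ w → G.Adj v w)
    (hsize : ∀ v : V, 0 < G.degree v → k + 2 ≤ Nat.card {w : V | G.Reachable v w})
    {u v : V} (huv : G.Adj u v) :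
    ∑ T ∈ A G k u v, wt G k T = 1 := by
  classical
  set R := Finset.univ.filter (fun x => G.Reachable u x) with hR
  set n := R.card with hn
  have hmemR : ∀ x, x ∈ R ↔ G.Reachable u x := by
    intro x; simp [hR]
  have huR : u ∈ R := (hmemR u).2 (SimpleGraph.Reachable.refl u)
  have hvR : v ∈ R := (hmemR v).2 huv.reachable
  have hRadj : ∀ x ∈ R, ∀ y ∈ R, x ≠ y → G.Adj x y := by
    intro x hx y hy hxy
    exact hcomp x y (((hmemR x).1 hx).symm.trans ((hmemR y).1 hy)) hxy
  have hNbhd : ∀ x ∈ R, G.neighborFinset x = R.erase x := by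
    intro x hx
    ext y
    rw [SimpleGraph.mem_neighborFinset, Finset.mem_erase]
    constructor
    · intro hxy
      refine ⟨(G.ne_of_adj hxy).symm, (hmemR y).2 (((hmemR x).1 hx).trans hxy.reachable)⟩
    · rintro ⟨hyx, hyR⟩
      exact hRadj x hx y hyR (Ne.symm hyx)
  have hdegR : ∀ x ∈ R, G.degree x = n - 1 := by
    intro x hx
    rw [← SimpleGraph.card_neighborFinset_eq_degree, hNbhd x hx, Finset.card_erase_of_mem hx]
  have hcardn : k + 2 ≤ n := by
    have hdu : 0 < G.degree u := by
      rw [← SimpleGraph.card_neighborFinset_eq_degree]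
      exact Finset.card_pos.2 ⟨v, (SimpleGraph.mem_neighborFinset G u v).2 huv⟩
    have h1 := hsize u hdu
    have h2 : {w : V | G.Reachable u w} = ↑R := by
      ext x; simp [hR]
    rwa [Nat.card_coe_set_eq, h2, Set.ncard_coe_finset] at h1
  have hTsubR : ∀ T ∈ A G k u v, T ⊆ R := by
    intro T hT x hx
    have h := Finset.mem_filter.1 hT
    have hclique := (SimpleGraph.mem_cliqueFinset_iff.1 h.1).1
    rcases eq_or_ne x u with rfl | hxu
    · exact huR
    · exact (hmemR x).2
        (hclique (Finset.mem_coe.2 h.2.1) (Finset.mem_coe.2 hx) (Ne.symm hxu)).reachable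
  have hsup : ∀ T ∈ A G k u v, (T.sup fun x => G.degree x) = n - 1 := by
    intro T hT
    have h := Finset.mem_filter.1 hT
    apply le_antisymm
    · apply Finset.sup_le
      intro x hx
      rw [hdegR x (hTsubR T hT hx)]
    · have h5 := Finset.le_sup (f := fun x => G.degree x) h.2.1
      rw [← hdegR u huR]
      exact h5
  have hcardA : (A G k u v).card = (n - 2).choose k := by
    have hbij : (A G k u v).card = (((R.erase u).erase v).powersetCard k).card := by
      refine Finset.card_bij' (fun T _ => T \ ({u, v} : Finset V))
        (fun S _ => S ∪ ({u, v} : Finset V)) ?_ ?_ ?_ ?_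
      · intro T hT
        rw [Finset.mem_powersetCard]
        have h := Finset.mem_filter.1 hT
        have hTc := SimpleGraph.mem_cliqueFinset_iff.1 h.1
        constructor
        · intro x hx
          rw [Finset.mem_sdiff, Finset.mem_insert, Finset.mem_singleton] at hx
          push_neg at hx
          exact Finset.mem_erase.2 ⟨hx.2.2, Finset.mem_erase.2 ⟨hx.2.1, hTsubR T hT hx.1⟩⟩
        · have h2 : ({u, v} : Finset V).card = 2 := by
            rw [Finset.card_insert_of_notMem (by simp [G.ne_of_adj huv]),
              Finset.card_singleton]
          rw [Finset.card_sdiff_of_subset (pair_subset G hT), h2, hTc.2]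
          omega
      · intro S hS
        rw [Finset.mem_powersetCard] at hS
        have hSsub : S ⊆ (R.erase u).erase v := hS.1
        have hSdisj : Disjoint S ({u, v} : Finset V) := by
          rw [Finset.disjoint_insert_right, Finset.disjoint_singleton_right]
          constructor
          · intro hu'
            exact (Finset.mem_erase.1 (Finset.mem_erase.1 (hSsub hu')).2).1 rfl
          · intro hv'
            exact (Finset.mem_erase.1 (hSsub hv')).1 rfl
        have hsubR : S ∪ ({u, v} : Finset V) ⊆ R := by
          intro x hx
          rcases Finset.mem_union.1 hx with hx | hx
          · exact (Finset.mem_erase.1 (Finset.mem_erase.1 (hSsub hx)).2).2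
          · rcases Finset.mem_insert.1 hx with rfl | hx
            · exact huR
            · rw [Finset.mem_singleton] at hx; subst hx; exact hvR
        refine Finset.mem_filter.2 ⟨SimpleGraph.mem_cliqueFinset_iff.2 ⟨?_, ?_⟩, ?_, ?_⟩
        · intro x hx y hy hxy
          exact hRadj x (hsubR hx) y (hsubR hy) hxy
        · rw [Finset.card_union_of_disjoint hSdisj, hS.2,
            Finset.card_insert_of_notMem (by simp [G.ne_of_adj huv]), Finset.card_singleton]
        · exact Finset.mem_union_right _ (Finset.mem_insert_self u {v})
        · exact Finset.mem_union_right _ (Finset.mem_insert_of_mem (Finset.mem_singleton_self v))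
      · intro T hT
        exact Finset.sdiff_union_of_subset (pair_subset G hT)
      · intro S hS
        rw [Finset.mem_powersetCard] at hS
        apply Finset.union_sdiff_cancel_right
        rw [Finset.disjoint_insert_right, Finset.disjoint_singleton_right]
        constructor
        · intro hu'
          exact (Finset.mem_erase.1 (Finset.mem_erase.1 (hS.1 hu')).2).1 rfl
        · intro hv'
          exact (Finset.mem_erase.1 (hS.1 hv')).1 rfl
    rw [hbij, Finset.card_powersetCard, Finset.card_erase_of_mem
      (Finset.mem_erase.2 ⟨(G.ne_of_adj huv).symm, hvR⟩), Finset.card_erase_of_mem huR]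
    congr 1
  have hCpos : 0 < (n - 2).choose k := Nat.choose_pos (by omega)
  have hwt : ∀ T ∈ A G k u v, wt G k T = 1 / (((n - 2).choose k : ℕ) : ℝ) := by
    intro T hT
    rw [wt, hsup T hT]
    congr 3
  rw [Finset.sum_congr rfl hwt, Finset.sum_const, hcardA, nsmul_eq_mul]
  have : (0:ℝ) < (((n - 2).choose k : ℕ) : ℝ) := by exact_mod_cast hCpos
  field_simp

end Stmt14

theorem stmt_14 {V : Type*} [Fintype V] [DecidableEq V]
    (G : SimpleGraph V) [DecidableRel G.Adj]
    (t m : ℕ) (ht : 2 ≤ t) (hm : G.edgeFinset.card = m)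
    (θ : Finset V → ℕ) (hθ : ∀ T : Finset V, θ T = T.sup (fun v => G.degree v)) :
    ∑ T ∈ G.cliqueFinset t, (1 : ℝ) / ((θ T - 1).choose (t - 2) : ℝ) ≤
      (m : ℝ) / (t.choose 2 : ℝ) ∧
    (3 ≤ t →
      (∑ T ∈ G.cliqueFinset t, (1 : ℝ) / ((θ T - 1).choose (t - 2) : ℝ) =
          (m : ℝ) / (t.choose 2 : ℝ) ↔
        (∀ v w : V, G.Reachable v w → v ≠ w → G.Adj v w) ∧
          ∀ v : V, 0 < G.degree v → t ≤ Nat.card {w : V | G.Reachable v w})) := by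
  subst hm
  obtain ⟨k, rfl⟩ : ∃ k, t = k + 2 := ⟨t - 2, by omega⟩
  have hsub2 : k + 2 - 2 = k := by omega
  have hwt : ∀ T, (1 : ℝ) / ((θ T - 1).choose (k + 2 - 2) : ℝ) = Stmt14.wt G k T := by
    intro T
    rw [hθ, hsub2, Stmt14.wt]
  simp only [hwt]
  set m := G.edgeFinset.card with hm
  set W := ∑ T ∈ G.cliqueFinset (k + 2), Stmt14.wt G k T with hW
  set P := (Finset.univ.filter fun p : V × V => G.Adj p.1 p.2) with hP
  have hPadj : ∀ p ∈ P, G.Adj p.1 p.2 := by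
    intro p hp
    exact (Finset.mem_filter.1 hp).2
  have hID : ∑ p ∈ P, ∑ T ∈ Stmt14.A G k p.1 p.2, Stmt14.wt G k T
      = (((k + 2) * (k + 1) : ℕ) : ℝ) * W := Stmt14.sum_id G k
  have hcardP : P.card = 2 * m := Stmt14.cardP G
  have hC2 : 2 * (k + 2).choose 2 = (k + 2) * (k + 1) := Stmt14.two_choose k
  have hCpos : 0 < (k + 2).choose 2 := Nat.choose_pos (by omega)
  have hCpos' : (0 : ℝ) < ((k + 2).choose 2 : ℝ) := by exact_mod_cast hCpos
  have hble : ∀ p ∈ P, ∑ T ∈ Stmt14.A G k p.1 p.2, Stmt14.wt G k T ≤ 1 :=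
    fun p hp => Stmt14.pair_sum_le G (hPadj p hp)
  have hsumle : ∑ p ∈ P, ∑ T ∈ Stmt14.A G k p.1 p.2, Stmt14.wt G k T ≤ (P.card : ℝ) := by
    calc ∑ p ∈ P, ∑ T ∈ Stmt14.A G k p.1 p.2, Stmt14.wt G k T ≤ ∑ _p ∈ P, (1 : ℝ) :=
          Finset.sum_le_sum hble
      _ = (P.card : ℝ) := by rw [Finset.sum_const, nsmul_eq_mul, mul_one]
  have hcast : (((k + 2) * (k + 1) : ℕ) : ℝ) = 2 * ((k + 2).choose 2 : ℝ) := by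
    rw [← hC2]; push_cast; ring
  constructor
  · -- inequality
    rw [le_div_iff₀ hCpos']
    rw [hID, hcast, hcardP] at hsumle
    push_cast at hsumle ⊢
    linarith
  · intro hk3
    have hk1 : 1 ≤ k := by omega
    constructor
    · -- equality ⇒ structure
      intro heq
      have hsum_eq : ∑ p ∈ P, ∑ T ∈ Stmt14.A G k p.1 p.2, Stmt14.wt G k T = (P.card : ℝ) := by
        rw [hID, hcast, heq, hcardP]
        push_cast
        field_simp
      have hall1 : ∀ p ∈ P, ∑ T ∈ Stmt14.A G k p.1 p.2, Stmt14.wt G k T = 1 := by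
        by_contra hne
        push_neg at hne
        obtain ⟨p, hp, hpne⟩ := hne
        have hlt : ∑ p ∈ P, ∑ T ∈ Stmt14.A G k p.1 p.2, Stmt14.wt G k T
            < ∑ _p ∈ P, (1 : ℝ) :=
          Finset.sum_lt_sum hble ⟨p, hp, lt_of_le_of_ne (hble p hp) hpne⟩
        rw [Finset.sum_const, nsmul_eq_mul, mul_one] at hlt
        linarith [hsum_eq]
      have hloc : ∀ a b c : V, G.Adj a b → G.Adj a c → b ≠ c → G.Adj b c := by
        intro a b c hab hac hbc
        have hmem : (a, b) ∈ P := by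
          rw [hP, Finset.mem_filter]
          exact ⟨Finset.mem_univ _, hab⟩
        exact Stmt14.local_adj G hk1 hab hac (Ne.symm hbc) (hall1 (a, b) hmem)
      refine ⟨Stmt14.reach_adj G hloc, ?_⟩
      intro v hv
      rw [← SimpleGraph.card_neighborFinset_eq_degree] at hv
      obtain ⟨u, hu⟩ := Finset.card_pos.1 hv
      rw [SimpleGraph.mem_neighborFinset] at hu
      have hmem : (v, u) ∈ P := by
        rw [hP, Finset.mem_filter]
        exact ⟨Finset.mem_univ _, hu⟩
      obtain ⟨T, hT⟩ := Stmt14.A_nonempty_of_sum G (hall1 (v, u) hmem)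
      have h := Finset.mem_filter.1 hT
      have hTc := SimpleGraph.mem_cliqueFinset_iff.1 h.1
      have hsubset : ↑T ⊆ {w : V | G.Reachable v w} := by
        intro x hx
        rcases eq_or_ne v x with rfl | hne
        · exact SimpleGraph.Reachable.refl _
        · exact (hTc.1 (Finset.mem_coe.2 h.2.1) hx hne).reachable
      calc k + 2 = T.card := hTc.2.symm
        _ = (↑T : Set V).ncard := (Set.ncard_coe_finset T).symm
        _ ≤ ({w : V | G.Reachable v w} : Set V).ncard :=
            Set.ncard_le_ncard hsubset (Set.toFinite _)
        _ = Nat.card {w : V | G.Reachable v w} := (Nat.card_coe_set_eq _).symm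
    · -- structure ⇒ equality
      rintro ⟨hcomp, hsize⟩
      have hall1 : ∀ p ∈ P, ∑ T ∈ Stmt14.A G k p.1 p.2, Stmt14.wt G k T = 1 :=
        fun p hp => Stmt14.pair_sum_eq_one_of_nice G hcomp hsize (hPadj p hp)
      have hsum_eq : ∑ p ∈ P, ∑ T ∈ Stmt14.A G k p.1 p.2, Stmt14.wt G k T = (P.card : ℝ) := by
        rw [Finset.sum_congr rfl hall1, Finset.sum_const, nsmul_eq_mul, mul_one]
      rw [hID, hcast, hcardP] at hsum_eq
      rw [eq_div_iff hCpos'.ne']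
      push_cast at hsum_eq ⊢
      linarith
end
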